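/- arXiv:1405.3500 — 6 statements merged into one kernel-verified Lean document; each statement's English description precedes it below -/
import Mathlib

section
/- Let G(x,t) and F(x,t) be m×m complex matrix functions defined on the semi-strip 𝒟 = {(x,t) : 0 ≤ x < ∞, 0 ≤ t < a} such that the partial derivatives G_t and F_x exist on 𝒟, such that G, G_t and F are continuous in (x,t) on 𝒟, and such that the zero curvature equation G_t − F_x + [G, F] = 0 holds on 𝒟 (where [G,F] := GF − FG). Let u(x,t) be the solution of u_x = G u with u(0,t) = I_m, and let R(x,t) be the solution of R_t = F R with R(x,0) = I_m. Then the equality u(x,t) R(0,t) = R(x,t) u(x,0) holds on 𝒟; moreover R(0,t) is invertible and u admits the factorization u(x,t) = R(x,t) u(x,0) R(0,t)^{-1}. -/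
open Matrix Set

set_option maxHeartbeats 1000000

section Helpers
variable {m : ℕ}

attribute [local instance] Matrix.linftyOpNormedRing Matrix.linftyOpNormedAlgebra

/-- entrywise derivatives give matrix-valued derivative -/
theorem ZCF.hasDerivWithinAt_matrix {f : ℝ → Matrix (Fin m) (Fin m) ℂ}
    {f' : Matrix (Fin m) (Fin m) ℂ} {s : Set ℝ} {x : ℝ}
    (h : ∀ i j, HasDerivWithinAt (fun t => f t i j) (f' i j) s x) :
    HasDerivWithinAt f f' s x := by
  have hrw : ∀ g : Matrix (Fin m) (Fin m) ℂ,
      g = ∑ i, ∑ j, g i j • Matrix.single i j (1 : ℂ) := by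
    intro g
    conv_lhs => rw [Matrix.matrix_eq_sum_single g]
    simp [Matrix.smul_single]
  have H : HasDerivWithinAt (fun t => ∑ i, ∑ j, f t i j • Matrix.single i j (1 : ℂ))
      (∑ i, ∑ j, f' i j • Matrix.single i j (1 : ℂ)) s x := by
    refine HasDerivWithinAt.fun_sum fun i _ => HasDerivWithinAt.fun_sum fun j _ => ?_
    exact (h i j).smul_const _
  convert H using 1
  · funext t; exact hrw (f t)
  · exact hrw f'

/-- entrywise continuity gives matrix-valued continuity -/
theorem ZCF.continuousOn_matrix {α : Type*} [TopologicalSpace α]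
    {f : α → Matrix (Fin m) (Fin m) ℂ} {s : Set α}
    (h : ∀ i j, ContinuousOn (fun p => f p i j) s) :
    ContinuousOn f s := by
  have hrw : ∀ g : Matrix (Fin m) (Fin m) ℂ,
      g = ∑ i, ∑ j, g i j • Matrix.single i j (1 : ℂ) := by
    intro g
    conv_lhs => rw [Matrix.matrix_eq_sum_single g]
    simp [Matrix.smul_single]
  have H : ContinuousOn (fun p => ∑ i, ∑ j, f p i j • Matrix.single i j (1 : ℂ)) s := by
    refine continuousOn_finset_sum _ fun i _ => continuousOn_finset_sum _ fun j _ => ?_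
    exact (h i j).smul continuousOn_const
  convert H using 1
  funext p; exact hrw (f p)

/-- Grönwall inequality wrapper on `[0, b]`. -/
theorem ZCF.gronwall_mat {f f' : ℝ → Matrix (Fin m) (Fin m) ℂ} {δ K ε b : ℝ}
    (hd : ∀ y ∈ Icc (0:ℝ) b, HasDerivWithinAt f (f' y) (Icc (0:ℝ) b) y)
    (hbound : ∀ y ∈ Icc (0:ℝ) b, ‖f' y‖ ≤ K * ‖f y‖ + ε)
    (h0 : ‖f 0‖ ≤ δ) : ∀ y ∈ Icc (0:ℝ) b, ‖f y‖ ≤ gronwallBound δ K ε y := by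
  intro y hy
  have := norm_le_gronwallBound_of_norm_deriv_right_le (a := 0) (b := b)
    (f := f) (f' := f') (δ := δ) (K := K) (ε := ε)
    (fun z hz => (hd z hz).continuousWithinAt)
    (fun z hz => (hd z (Ico_subset_Icc_self hz)).mono_of_mem_nhdsWithin
      (Icc_mem_nhdsGE_of_mem hz))
    h0 (fun z hz => hbound z (Ico_subset_Icc_self hz)) y hy
  simpa using this

theorem ZCF.gronwall_zero {f f' : ℝ → Matrix (Fin m) (Fin m) ℂ} {K b : ℝ}
    (hd : ∀ y ∈ Icc (0:ℝ) b, HasDerivWithinAt f (f' y) (Icc (0:ℝ) b) y)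
    (hbound : ∀ y ∈ Icc (0:ℝ) b, ‖f' y‖ ≤ K * ‖f y‖)
    (h0 : f 0 = 0) : ∀ y ∈ Icc (0:ℝ) b, f y = 0 := by
  intro y hy
  have := ZCF.gronwall_mat (δ := 0) (ε := 0) hd
    (fun z hz => by simpa using hbound z hz) (by simp [h0]) y hy
  rw [gronwallBound_ε0_δ0] at this
  exact norm_le_zero_iff.mp this


/-- Zero curvature on the semi-strip `𝒟 = [0,∞) × [0,a)` implies
`u(x,t) R(0,t) = R(x,t) u(x,0)`, invertibility of `R(0,t)` and the factorization
`u(x,t) = R(x,t) u(x,0) R(0,t)⁻¹`.  All partial derivatives on the boundary are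
one-sided (expressed via `HasDerivWithinAt`). -/
theorem zero_curvature_factorization
    {m : ℕ} (a : ℝ) (ha : 0 < a)
    (G F Gt Fx u R : ℝ → ℝ → Matrix (Fin m) (Fin m) ℂ)
    -- G_t exists on 𝒟
    (hGt : ∀ x ∈ Ici (0:ℝ), ∀ t ∈ Ico (0:ℝ) a, ∀ i j,
      HasDerivWithinAt (fun s => G x s i j) (Gt x t i j) (Ico (0:ℝ) a) t)
    -- F_x exists on 𝒟
    (hFx : ∀ x ∈ Ici (0:ℝ), ∀ t ∈ Ico (0:ℝ) a, ∀ i j,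
      HasDerivWithinAt (fun y => F y t i j) (Fx x t i j) (Ici (0:ℝ)) x)
    -- G, G_t and F are continuous in (x,t) on 𝒟
    (hGcont : ∀ i j, ContinuousOn (fun p : ℝ × ℝ => G p.1 p.2 i j) (Ici 0 ×ˢ Ico 0 a))
    (hGtcont : ∀ i j, ContinuousOn (fun p : ℝ × ℝ => Gt p.1 p.2 i j) (Ici 0 ×ˢ Ico 0 a))
    (hFcont : ∀ i j, ContinuousOn (fun p : ℝ × ℝ => F p.1 p.2 i j) (Ici 0 ×ˢ Ico 0 a))
    -- the zero curvature equation G_t − F_x + [G,F] = 0 on 𝒟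
    (hzc : ∀ x ∈ Ici (0:ℝ), ∀ t ∈ Ico (0:ℝ) a,
      Gt x t - Fx x t + (G x t * F x t - F x t * G x t) = 0)
    -- u solves u_x = G u with u(0,t) = I
    (hu0 : ∀ t ∈ Ico (0:ℝ) a, u 0 t = 1)
    (hux : ∀ x ∈ Ici (0:ℝ), ∀ t ∈ Ico (0:ℝ) a, ∀ i j,
      HasDerivWithinAt (fun y => u y t i j) ((G x t * u x t) i j) (Ici (0:ℝ)) x)
    -- R solves R_t = F R with R(x,0) = I
    (hR0 : ∀ x ∈ Ici (0:ℝ), R x 0 = 1)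
    (hRt : ∀ x ∈ Ici (0:ℝ), ∀ t ∈ Ico (0:ℝ) a, ∀ i j,
      HasDerivWithinAt (fun s => R x s i j) ((F x t * R x t) i j) (Ico (0:ℝ) a) t) :
    ∀ x ∈ Ici (0:ℝ), ∀ t ∈ Ico (0:ℝ) a,
      u x t * R 0 t = R x t * u x 0 ∧ IsUnit (R 0 t) ∧
      u x t = R x t * u x 0 * (R 0 t)⁻¹ := by
  classical
  -- matrix-valued versions of the hypotheses
  have hGtM : ∀ x ∈ Ici (0:ℝ), ∀ t ∈ Ico (0:ℝ) a,
      HasDerivWithinAt (fun s => G x s) (Gt x t) (Ico (0:ℝ) a) t :=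
    fun x hx t ht => ZCF.hasDerivWithinAt_matrix (hGt x hx t ht)
  have hFxM : ∀ x ∈ Ici (0:ℝ), ∀ t ∈ Ico (0:ℝ) a,
      HasDerivWithinAt (fun y => F y t) (Fx x t) (Ici (0:ℝ)) x :=
    fun x hx t ht => ZCF.hasDerivWithinAt_matrix (hFx x hx t ht)
  have huxM : ∀ x ∈ Ici (0:ℝ), ∀ t ∈ Ico (0:ℝ) a,
      HasDerivWithinAt (fun y => u y t) (G x t * u x t) (Ici (0:ℝ)) x :=
    fun x hx t ht => ZCF.hasDerivWithinAt_matrix (hux x hx t ht)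
  have hRtM : ∀ x ∈ Ici (0:ℝ), ∀ t ∈ Ico (0:ℝ) a,
      HasDerivWithinAt (fun s => R x s) (F x t * R x t) (Ico (0:ℝ) a) t :=
    fun x hx t ht => ZCF.hasDerivWithinAt_matrix (hRt x hx t ht)
  have hGcM : ContinuousOn (fun p : ℝ × ℝ => G p.1 p.2) (Ici 0 ×ˢ Ico 0 a) :=
    ZCF.continuousOn_matrix hGcont
  have hGtcM : ContinuousOn (fun p : ℝ × ℝ => Gt p.1 p.2) (Ici 0 ×ˢ Ico 0 a) :=
    ZCF.continuousOn_matrix hGtcont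
  have hFcM : ContinuousOn (fun p : ℝ × ℝ => F p.1 p.2) (Ici 0 ×ˢ Ico 0 a) :=
    ZCF.continuousOn_matrix hFcont
  -- Step I : t-derivative of u
  have hut : ∀ x ∈ Ici (0:ℝ), ∀ t ∈ Ico (0:ℝ) a,
      HasDerivWithinAt (fun s => u x s) (F x t * u x t - u x t * F 0 t) (Ico (0:ℝ) a) t := by
    intro X hX t ht
    have hX0 : (0:ℝ) ≤ X := hX
    set T : ℝ := (t + a) / 2 with hTdef
    have htT : t < T := by rw [hTdef]; linarith [ht.2]
    have hTa : T < a := by rw [hTdef]; linarith [ht.2]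
    have hT0 : (0:ℝ) ≤ T := le_trans ht.1 htT.le
    have hIccT : Icc (0:ℝ) T ⊆ Ico (0:ℝ) a := fun z hz => ⟨hz.1, lt_of_le_of_lt hz.2 hTa⟩
    have hIccX : Icc (0:ℝ) X ⊆ Ici (0:ℝ) := fun z hz => hz.1
    set Q : Set (ℝ × ℝ) := Icc (0:ℝ) X ×ˢ Icc (0:ℝ) T with hQ
    have hQc : IsCompact Q := isCompact_Icc.prod isCompact_Icc
    have hQsub : Q ⊆ Ici 0 ×ˢ Ico 0 a := prod_mono hIccX hIccT
    have htmem : t ∈ Icc (0:ℝ) T := ⟨ht.1, htT.le⟩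
    obtain ⟨kG, hkG0, hkG⟩ : ∃ kG : ℝ, 0 ≤ kG ∧ ∀ p ∈ Q, ‖G p.1 p.2‖ ≤ kG := by
      obtain ⟨C, hC⟩ := hQc.exists_bound_of_continuousOn (hGcM.mono hQsub)
      exact ⟨max C 0, le_max_right _ _, fun p hp => le_trans (hC p hp) (le_max_left _ _)⟩
    obtain ⟨kF, hkF0, hkF⟩ : ∃ kF : ℝ, 0 ≤ kF ∧ ∀ p ∈ Q, ‖F p.1 p.2‖ ≤ kF := by
      obtain ⟨C, hC⟩ := hQc.exists_bound_of_continuousOn (hFcM.mono hQsub)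
      exact ⟨max C 0, le_max_right _ _, fun p hp => le_trans (hC p hp) (le_max_left _ _)⟩
    set cu : ℝ := ‖(1 : Matrix (Fin m) (Fin m) ℂ)‖ * Real.exp (kG * X) with hcudef
    have hcu0 : 0 ≤ cu := mul_nonneg (norm_nonneg _) (Real.exp_pos _).le
    have hubd : ∀ s ∈ Icc (0:ℝ) T, ∀ y ∈ Icc (0:ℝ) X, ‖u y s‖ ≤ cu := by
      intro s hs y hy
      have hsIco := hIccT hs
      have hd : ∀ z ∈ Icc (0:ℝ) X,
          HasDerivWithinAt (fun y => u y s) (G z s * u z s) (Icc (0:ℝ) X) z :=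
        fun z hz => (huxM z (hIccX hz) s hsIco).mono hIccX
      have hb : ∀ z ∈ Icc (0:ℝ) X, ‖G z s * u z s‖ ≤ kG * ‖u z s‖ + 0 := by
        intro z hz
        rw [add_zero]
        refine le_trans (norm_mul_le _ _) ?_
        have := hkG (z, s) ⟨hz, hs⟩
        nlinarith [norm_nonneg (u z s)]
      have h0 : ‖u 0 s‖ ≤ ‖(1 : Matrix (Fin m) (Fin m) ℂ)‖ := by rw [hu0 s hsIco]
      have hgb := ZCF.gronwall_mat hd hb h0 y hy
      rw [gronwallBound_ε0] at hgb
      refine le_trans hgb ?_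
      rw [hcudef]
      have hexp : Real.exp (kG * y) ≤ Real.exp (kG * X) :=
        Real.exp_le_exp.mpr (by nlinarith [hy.1, hy.2])
      nlinarith [norm_nonneg (1 : Matrix (Fin m) (Fin m) ℂ), (Real.exp_pos (kG * y)).le]
    set P : ℝ → Matrix (Fin m) (Fin m) ℂ := fun y => F y t * u y t - u y t * F 0 t with hPdef
    set cP : ℝ := kF * cu + cu * kF with hcPdef
    have hcP0 : 0 ≤ cP := add_nonneg (mul_nonneg hkF0 hcu0) (mul_nonneg hcu0 hkF0)
    have hPbd : ∀ y ∈ Icc (0:ℝ) X, ‖P y‖ ≤ cP := by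
      intro y hy
      have h1 : ‖F y t * u y t‖ ≤ kF * cu := by
        refine le_trans (norm_mul_le _ _) ?_
        have hb1 := hkF (y, t) ⟨hy, htmem⟩
        have hb2 := hubd t htmem y hy
        nlinarith [norm_nonneg (F y t), norm_nonneg (u y t)]
      have h2 : ‖u y t * F 0 t‖ ≤ cu * kF := by
        refine le_trans (norm_mul_le _ _) ?_
        have hb1 := hkF (0, t) ⟨⟨le_refl _, hX0⟩, htmem⟩
        have hb2 := hubd t htmem y hy
        nlinarith [norm_nonneg (F 0 t), norm_nonneg (u y t)]
      simp only [hPdef]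
      refine le_trans (norm_sub_le _ _) ?_
      rw [hcPdef]; linarith
    have hP' : ∀ y ∈ Ici (0:ℝ),
        HasDerivWithinAt P (G y t * P y + Gt y t * u y t) (Ici (0:ℝ)) y := by
      intro y hy
      have h1 := (hFxM y hy t ht).mul (huxM y hy t ht)
      have h2 := (huxM y hy t ht).mul_const (F 0 t)
      have h3 := h1.sub h2
      have hz1 : Gt y t = Fx y t - (G y t * F y t - F y t * G y t) := by
        have h := hzc y hy t ht
        rw [← sub_eq_zero, ← h]; abel
      have e : Fx y t * u y t + F y t * (G y t * u y t) - G y t * u y t * F 0 t =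
          G y t * (F y t * u y t - u y t * F 0 t) + Gt y t * u y t := by
        rw [hz1]; noncomm_ring
      simp only [hPdef]
      exact e ▸ h3
    have hGcont1 : ∀ y ∈ Icc (0:ℝ) X, ContinuousOn (fun σ => G y σ) (Icc 0 T) := by
      intro y hy
      exact (hGcM.mono hQsub).comp ((continuous_const.prodMk continuous_id).continuousOn)
        fun σ hσ => ⟨hy, hσ⟩
    have hGtcont1 : ∀ y ∈ Icc (0:ℝ) X, ContinuousOn (fun σ => Gt y σ) (Icc 0 T) := by
      intro y hy
      exact (hGtcM.mono hQsub).comp ((continuous_const.prodMk continuous_id).continuousOn)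
        fun σ hσ => ⟨hy, hσ⟩
    have hFTC : ∀ y ∈ Icc (0:ℝ) X, ∀ c ∈ Icc (0:ℝ) T, ∀ d ∈ Icc (0:ℝ) T, c ≤ d →
        (∫ σ in c..d, Gt y σ) = G y d - G y c := by
      intro y hy c hc d hd hcd
      refine intervalIntegral.integral_eq_sub_of_hasDeriv_right_of_le hcd
        ((hGcont1 y hy).mono (Icc_subset_Icc hc.1 hd.2)) ?_ ?_
      · intro σ hσ
        have hσm : σ ∈ Ico (0:ℝ) a :=
          ⟨le_trans hc.1 hσ.1.le, lt_of_lt_of_le hσ.2 (le_trans hd.2 hTa.le)⟩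
        have hnhds : Ico (0:ℝ) a ∈ nhds σ :=
          mem_nhds_iff.mpr ⟨Ioo 0 a, Ioo_subset_Ico_self, isOpen_Ioo,
            ⟨lt_of_le_of_lt hc.1 hσ.1, hσm.2⟩⟩
        exact ((hGtM y (hIccX hy) σ hσm).hasDerivAt hnhds).hasDerivWithinAt
      · exact ((hGtcont1 y hy).mono (Icc_subset_Icc hc.1 hd.2)).intervalIntegrable_of_Icc hcd
    have hkey : ∀ y ∈ Icc (0:ℝ) X, ∀ s ∈ Icc (0:ℝ) T,
        (∫ σ in t..s, Gt y σ) = G y s - G y t := by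
      intro y hy s hs
      rcases le_total t s with hts | hst
      · exact hFTC y hy t htmem s hs hts
      · rw [intervalIntegral.integral_symm, hFTC y hy s hs t htmem hst]; abel
    have hmod : ∀ ε' > (0:ℝ), ∃ δ' > (0:ℝ), ∀ s ∈ Icc (0:ℝ) T, |s - t| < δ' →
        ∀ y ∈ Icc (0:ℝ) X,
        ‖G y s - G y t - (s - t) • Gt y t‖ ≤ ε' * |s - t| ∧ ‖G y s - G y t‖ ≤ ε' := by
      intro ε' hε'
      obtain ⟨δ1, hδ1, hG1⟩ := Metric.uniformContinuousOn_iff.mp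
        (hQc.uniformContinuousOn_of_continuous (hGcM.mono hQsub)) ε' hε'
      obtain ⟨δ2, hδ2, hG2⟩ := Metric.uniformContinuousOn_iff.mp
        (hQc.uniformContinuousOn_of_continuous (hGtcM.mono hQsub)) ε' hε'
      refine ⟨min δ1 δ2, lt_min hδ1 hδ2, ?_⟩
      intro s hs hsd y hy
      have hyQ : ∀ σ, σ ∈ Icc (0:ℝ) T → ((y, σ) : ℝ × ℝ) ∈ Q := fun σ hσ => ⟨hy, hσ⟩
      have hdist : ∀ σ : ℝ, dist ((y, σ) : ℝ × ℝ) (y, t) = |σ - t| := by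
        intro σ
        rw [Prod.dist_eq, dist_self, Real.dist_eq, max_eq_right (abs_nonneg _)]
      have hii : ‖G y s - G y t‖ ≤ ε' := by
        have := hG1 (y, s) (hyQ s hs) (y, t) (hyQ t htmem)
          (by rw [hdist]; exact lt_of_lt_of_le hsd (min_le_left _ _))
        rw [dist_eq_norm] at this; exact this.le
      have hGtint : @IntervalIntegrable _ PseudoMetricSpace.toUniformSpace.toTopologicalSpace _ (fun σ => Gt y σ) MeasureTheory.volume t s := by
        apply ContinuousOn.intervalIntegrable
        apply (hGtcont1 y hy).mono
        rcases le_total t s with hts | hst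
        · rw [uIcc_of_le hts]; exact Icc_subset_Icc htmem.1 hs.2
        · rw [uIcc_of_ge hst]; exact Icc_subset_Icc hs.1 htmem.2
      have hint2 : (∫ σ in t..s, (Gt y σ - Gt y t)) =
          G y s - G y t - (s - t) • Gt y t := by
        rw [intervalIntegral.integral_sub hGtint intervalIntegrable_const,
          hkey y hy s hs, intervalIntegral.integral_const]
      have hi : ‖G y s - G y t - (s - t) • Gt y t‖ ≤ ε' * |s - t| := by
        rw [← hint2]
        refine intervalIntegral.norm_integral_le_of_norm_le_const ?_
        intro σ hσ
        have hσ' : σ ∈ Icc (0:ℝ) T ∧ |σ - t| ≤ |s - t| := by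
          rcases le_total t s with hts | hst
          · rw [uIoc_of_le hts] at hσ
            have h1 : |s - t| = s - t := abs_of_nonneg (by linarith)
            refine ⟨⟨le_trans htmem.1 hσ.1.le, le_trans hσ.2 hs.2⟩, ?_⟩
            rw [abs_sub_le_iff]
            exact ⟨by linarith [hσ.2], by linarith [hσ.1.le]⟩
          · rw [uIoc_of_ge hst] at hσ
            have h1 : |s - t| = t - s := by
              rw [abs_of_nonpos (by linarith : s - t ≤ 0)]; ring
            refine ⟨⟨le_trans hs.1 hσ.1.le, le_trans hσ.2 htmem.2⟩, ?_⟩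
            rw [abs_sub_le_iff]
            exact ⟨by linarith [hσ.2], by linarith [hσ.1.le]⟩
        have := hG2 (y, σ) (hyQ σ hσ'.1) (y, t) (hyQ t htmem)
          (by rw [hdist]; exact lt_of_le_of_lt hσ'.2 (lt_of_lt_of_le hsd (min_le_right _ _)))
        rw [dist_eq_norm] at this; exact this.le
      exact ⟨hi, hii⟩
    -- the main estimate via Grönwall
    refine hasDerivWithinAt_iff_tendsto_slope.mpr ?_
    rw [Metric.tendsto_nhdsWithin_nhds]
    intro ε hε
    set K : ℝ := kG + 1 with hKdef
    have hK0 : (0:ℝ) < K := by rw [hKdef]; linarith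
    set B : ℝ := (Real.exp (K * X) - 1) / K with hBdef
    have hB0 : 0 ≤ B := by
      rw [hBdef]
      apply div_nonneg _ hK0.le
      have : (1:ℝ) ≤ Real.exp (K * X) := by
        rw [← Real.exp_zero]
        exact Real.exp_le_exp.mpr (by nlinarith)
      linarith
    set ε' : ℝ := ε / (2 * ((cu + cP) * B + 1)) with hε'def
    have hden : (0:ℝ) < 2 * ((cu + cP) * B + 1) := by nlinarith [mul_nonneg (add_nonneg hcu0 hcP0) hB0]
    have hε'0 : 0 < ε' := div_pos hε hden
    obtain ⟨δ', hδ'0, hδ'⟩ := hmod ε' hε'0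
    refine ⟨min δ' (T - t), lt_min hδ'0 (by linarith), ?_⟩
    intro s hsmem hsd
    have hsIco : s ∈ Ico (0:ℝ) a := hsmem.1
    have hst : s ≠ t := fun h => hsmem.2 (mem_singleton_iff.mpr h)
    rw [Real.dist_eq] at hsd
    have habs1 : |s - t| < δ' := lt_of_lt_of_le hsd (min_le_left _ _)
    have hsIcc : s ∈ Icc (0:ℝ) T := by
      refine ⟨hsIco.1, ?_⟩
      have h2 : |s - t| < T - t := lt_of_lt_of_le hsd (min_le_right _ _)
      have := le_abs_self (s - t)
      linarith
    set Δ : ℝ → Matrix (Fin m) (Fin m) ℂ :=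
      fun y => u y s - u y t - (s - t) • P y with hΔdef
    have hd : ∀ y ∈ Icc (0:ℝ) X, HasDerivWithinAt Δ
        (G y s * u y s - G y t * u y t - (s - t) • (G y t * P y + Gt y t * u y t))
        (Icc (0:ℝ) X) y := by
      intro y hy
      exact (((huxM y (hIccX hy) s hsIco).sub (huxM y (hIccX hy) t ht)).sub
        ((hP' y (hIccX hy)).const_smul (s - t))).mono hIccX
    have hbd : ∀ y ∈ Icc (0:ℝ) X,
        ‖G y s * u y s - G y t * u y t - (s - t) • (G y t * P y + Gt y t * u y t)‖ ≤
          K * ‖Δ y‖ + (cu + cP) * ε' * |s - t| := by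
      intro y hy
      obtain ⟨hi, hii⟩ := hδ' s hsIcc habs1 y hy
      have hrw2 : G y s * u y s - G y t * u y t - (s - t) • (G y t * P y + Gt y t * u y t) =
          G y s * Δ y + (G y s - G y t - (s - t) • Gt y t) * u y t +
            (s - t) • ((G y s - G y t) * P y) := by
        simp only [hΔdef]
        simp only [smul_sub, smul_add, sub_mul, mul_sub, mul_add, smul_mul_assoc,
          mul_smul_comm]
        abel
      rw [hrw2]
      have n1 : ‖G y s * Δ y‖ ≤ kG * ‖Δ y‖ := by
        refine le_trans (norm_mul_le _ _) ?_
        have := hkG (y, s) ⟨hy, hsIcc⟩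
        nlinarith [norm_nonneg (Δ y)]
      have n2 : ‖(G y s - G y t - (s - t) • Gt y t) * u y t‖ ≤ ε' * |s - t| * cu := by
        refine le_trans (norm_mul_le _ _) ?_
        have hb2 := hubd t htmem y hy
        nlinarith [norm_nonneg (G y s - G y t - (s - t) • Gt y t), norm_nonneg (u y t),
          abs_nonneg (s - t), hε'0.le]
      have n3 : ‖(s - t) • ((G y s - G y t) * P y)‖ ≤ |s - t| * (ε' * cP) := by
        rw [norm_smul, Real.norm_eq_abs]
        refine mul_le_mul_of_nonneg_left ?_ (abs_nonneg _)
        refine le_trans (norm_mul_le _ _) ?_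
        have := hPbd y hy
        nlinarith [norm_nonneg (G y s - G y t), norm_nonneg (P y)]
      have hsum : ε' * |s - t| * cu + |s - t| * (ε' * cP) = (cu + cP) * ε' * |s - t| := by
        ring
      calc ‖G y s * Δ y + (G y s - G y t - (s - t) • Gt y t) * u y t +
            (s - t) • ((G y s - G y t) * P y)‖
          ≤ ‖G y s * Δ y + (G y s - G y t - (s - t) • Gt y t) * u y t‖ +
            ‖(s - t) • ((G y s - G y t) * P y)‖ := norm_add_le _ _
        _ ≤ ‖G y s * Δ y‖ + ‖(G y s - G y t - (s - t) • Gt y t) * u y t‖ +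
            ‖(s - t) • ((G y s - G y t) * P y)‖ := by
            have := norm_add_le (G y s * Δ y) ((G y s - G y t - (s - t) • Gt y t) * u y t)
            linarith
        _ ≤ K * ‖Δ y‖ + (cu + cP) * ε' * |s - t| := by
            rw [hKdef]
            nlinarith [norm_nonneg (Δ y)]
    have hΔ0 : Δ 0 = 0 := by
      simp only [hΔdef, hPdef]
      rw [hu0 s hsIco, hu0 t ht]
      simp
    have hgr := ZCF.gronwall_mat (δ := 0) hd hbd (le_of_eq (by rw [hΔ0, norm_zero])) X ⟨hX0, le_refl X⟩
    have hKne : K ≠ 0 := ne_of_gt hK0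
    have heval : gronwallBound 0 K ((cu + cP) * ε' * |s - t|) X =
        (cu + cP) * ε' * |s - t| * B := by
      rw [gronwallBound_of_K_ne_0 hKne, hBdef]
      field_simp
      ring
    rw [heval] at hgr
    have hchoice : (cu + cP) * ε' * B ≤ ε / 2 := by
      have hrw3 : (cu + cP) * ε' * B = ε * ((cu + cP) * B / (2 * ((cu + cP) * B + 1))) := by
        rw [hε'def]; ring
      rw [hrw3]
      have h1 : (cu + cP) * B / (2 * ((cu + cP) * B + 1)) ≤ 1 / 2 := by
        rw [div_le_div_iff₀ hden (by norm_num)]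
        nlinarith [mul_nonneg (add_nonneg hcu0 hcP0) hB0]
      calc ε * ((cu + cP) * B / (2 * ((cu + cP) * B + 1))) ≤ ε * (1 / 2) :=
            mul_le_mul_of_nonneg_left h1 hε.le
        _ = ε / 2 := by ring
    have hfin : ‖Δ X‖ ≤ ε / 2 * |s - t| := by
      refine le_trans hgr ?_
      have : (cu + cP) * ε' * |s - t| * B = ((cu + cP) * ε' * B) * |s - t| := by ring
      rw [this]
      exact mul_le_mul_of_nonneg_right hchoice (abs_nonneg _)
    have hslope : slope (fun s => u X s) t s = (s - t)⁻¹ • (u X s - u X t) := by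
      rw [slope_def_module]
    rw [hslope, dist_eq_norm]
    have hfact : (s - t)⁻¹ • (u X s - u X t) - P X =
        (s - t)⁻¹ • (u X s - u X t - (s - t) • P X) := by
      simp only [smul_sub, smul_smul, inv_mul_cancel₀ (sub_ne_zero.mpr hst), one_smul]
    have hPX : P X = F X t * u X t - u X t * F 0 t := by rw [hPdef]
    rw [← hPX, hfact, norm_smul, Real.norm_eq_abs, abs_inv]
    have habs0 : (0:ℝ) < |s - t| := abs_pos.mpr (sub_ne_zero.mpr hst)
    have hΔX : ‖u X s - u X t - (s - t) • P X‖ ≤ ε / 2 * |s - t| := hfin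
    calc |s - t|⁻¹ * ‖u X s - u X t - (s - t) • P X‖
        ≤ |s - t|⁻¹ * (ε / 2 * |s - t|) := by
          exact mul_le_mul_of_nonneg_left hΔX (inv_nonneg.mpr habs0.le)
      _ = ε / 2 := by field_simp
      _ < ε := by linarith
  -- Step II : the identity
  have hId : ∀ x ∈ Ici (0:ℝ), ∀ t ∈ Ico (0:ℝ) a, u x t * R 0 t = R x t * u x 0 := by
    intro x hx t ht
    have h0a : (0:ℝ) ∈ Ici (0:ℝ) := self_mem_Ici
    have hsub : Icc (0:ℝ) t ⊆ Ico (0:ℝ) a := fun s hs => ⟨hs.1, lt_of_le_of_lt hs.2 ht.2⟩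
    -- bound for F x and F 0 on the segment
    obtain ⟨kF, hkF⟩ : ∃ kF : ℝ, ∀ s ∈ Icc (0:ℝ) t, ‖F x s‖ ≤ kF := by
      have hcont : ContinuousOn (fun s : ℝ => F x s) (Icc 0 t) := by
        refine hFcM.comp ((continuous_const.prodMk continuous_id).continuousOn) fun s hs => ?_
        exact ⟨hx, hsub hs⟩
      obtain ⟨C, hC⟩ := isCompact_Icc.exists_bound_of_continuousOn hcont
      exact ⟨C, hC⟩
    set Z : ℝ → Matrix (Fin m) (Fin m) ℂ := fun s => u x s * R 0 s - R x s * u x 0 with hZ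
    have hd : ∀ s ∈ Icc (0:ℝ) t, HasDerivWithinAt Z (F x s * Z s) (Icc (0:ℝ) t) s := by
      intro s hs
      have hsIco := hsub hs
      have h1 := (hut x hx s hsIco).mul (hRtM 0 h0a s hsIco)
      have h2 := (hRtM x hx s hsIco).mul_const (u x 0)
      have h3 := (h1.sub h2).mono hsub
      have e : (F x s * u x s - u x s * F 0 s) * R 0 s + u x s * (F 0 s * R 0 s) -
          F x s * R x s * u x 0 = F x s * Z s := by
        simp only [hZ]; noncomm_ring
      exact e ▸ h3
    have hbound : ∀ s ∈ Icc (0:ℝ) t, ‖F x s * Z s‖ ≤ kF * ‖Z s‖ := fun s hs =>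
      le_trans (norm_mul_le _ _) (by
        have h1 := hkF s hs
        have h2 : (0:ℝ) ≤ ‖Z s‖ := norm_nonneg _
        nlinarith)
    have h0 : Z 0 = 0 := by
      have e1 : R 0 0 = 1 := hR0 0 h0a
      have e2 : R x 0 = 1 := hR0 x hx
      simp [hZ, e1, e2]
    have := ZCF.gronwall_zero hd hbound h0 t ⟨ht.1, le_refl t⟩
    rw [hZ] at this
    exact sub_eq_zero.mp this
  -- Step III : invertibility of R 0 t
  have hUnit : ∀ t ∈ Ico (0:ℝ) a, IsUnit (R 0 t) := by
    intro t0 ht0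
    have h0a : (0:ℝ) ∈ Ici (0:ℝ) := self_mem_Ici
    have hsub : Icc (0:ℝ) t0 ⊆ Ico (0:ℝ) a := fun s hs => ⟨hs.1, lt_of_le_of_lt hs.2 ht0.2⟩
    obtain ⟨kF, hkF⟩ : ∃ kF : ℝ, ∀ s ∈ Icc (0:ℝ) t0, ‖F 0 s‖ ≤ kF := by
      have hcont : ContinuousOn (fun s : ℝ => F 0 s) (Icc 0 t0) := by
        refine hFcM.comp ((continuous_const.prodMk continuous_id).continuousOn) fun s hs => ?_
        exact ⟨h0a, hsub hs⟩
      exact isCompact_Icc.exists_bound_of_continuousOn hcont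
    suffices hker : ∀ c : Fin m → ℂ, R 0 t0 *ᵥ c = 0 → c = 0 by
      rw [Matrix.isUnit_iff_isUnit_det, isUnit_iff_ne_zero]
      intro hdet0
      obtain ⟨v, hv0, hv⟩ := (Matrix.exists_mulVec_eq_zero_iff).mpr hdet0
      exact hv0 (hker v hv)
    intro c hc
    set N : Matrix (Fin m) (Fin m) ℂ := Matrix.of (fun i _ => c i) with hN
    have hRN : R 0 t0 * N = 0 := by
      ext i j
      have := congrFun hc i
      simpa [Matrix.mul_apply, Matrix.mulVec, dotProduct, hN] using this
    set W : ℝ → Matrix (Fin m) (Fin m) ℂ := fun s => R 0 (t0 - s) * N with hW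
    have hWd : ∀ s ∈ Icc (0:ℝ) t0, HasDerivWithinAt W
        (-(F 0 (t0 - s) * R 0 (t0 - s) * N)) (Icc (0:ℝ) t0) s := by
      intro s hs
      have hms : t0 - s ∈ Ico (0:ℝ) a := ⟨by linarith [hs.2], by linarith [hs.1, ht0.2]⟩
      have hY := (hRtM 0 h0a (t0 - s) hms).mul_const N
      have hg : HasDerivWithinAt (fun s : ℝ => t0 - s) (-1) (Icc (0:ℝ) t0) s :=
        ((hasDerivAt_id s).const_sub t0).hasDerivWithinAt
      have hmap : MapsTo (fun s : ℝ => t0 - s) (Icc (0:ℝ) t0) (Ico (0:ℝ) a) := by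
        intro z hz
        rw [mem_Icc] at hz
        simp only [mem_Ico]
        exact ⟨by linarith [hz.2], by linarith [hz.1, ht0.2]⟩
      have hcomp := HasDerivWithinAt.scomp s hY hg hmap
      simp [Function.comp_def, neg_one_smul] at hcomp; exact hcomp
    have hbound : ∀ s ∈ Icc (0:ℝ) t0,
        ‖-(F 0 (t0 - s) * R 0 (t0 - s) * N)‖ ≤ kF * ‖W s‖ := by
      intro s hs
      have hms : t0 - s ∈ Icc (0:ℝ) t0 := ⟨by linarith [hs.2], by linarith [hs.1]⟩
      rw [norm_neg, mul_assoc]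
      refine le_trans (norm_mul_le _ _) ?_
      have h1 := hkF _ hms
      have h2 : (0:ℝ) ≤ ‖R 0 (t0 - s) * N‖ := norm_nonneg _
      have : ‖R 0 (t0 - s) * N‖ = ‖W s‖ := by rw [hW]
      nlinarith [this]
    have h0 : W 0 = 0 := by simpa [hW] using hRN
    have hWt0 := ZCF.gronwall_zero hWd hbound h0 t0 ⟨ht0.1, le_refl t0⟩
    have hNz : N = 0 := by
      have : W t0 = R 0 0 * N := by simp [hW]
      rw [hWt0, hR0 0 h0a, one_mul] at this
      exact this.symm
    funext i
    have := congrFun (congrFun hNz i) i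
    simpa [hN] using this
  -- assembly
  intro x hx t ht
  refine ⟨hId x hx t ht, hUnit t ht, ?_⟩
  have hdet : IsUnit (R 0 t).det := (Matrix.isUnit_iff_isUnit_det _).mp (hUnit t ht)
  calc u x t = u x t * (R 0 t * (R 0 t)⁻¹) := by
        rw [Matrix.mul_nonsing_inv _ hdet, mul_one]
    _ = u x t * R 0 t * (R 0 t)⁻¹ := by rw [mul_assoc]
    _ = R x t * u x 0 * (R 0 t)⁻¹ := by rw [hId x hx t ht]
end Helpers
end

section
/- Let a Dirac system y_x = i(z j + j V(x)) y on [0, ∞) with locally integrable V be given, with normalized fundamental solution u(x,z). Let 𝒫 be an m×m₁ matrix satisfying 𝒫*𝒫 > 0 and 𝒫* j 𝒫 ≥ 0. Then for every x ≥ 0 and every z ∈ ℂ₊ one has det([I_{m₁} 0] u(x,z)^{-1} 𝒫) ≠ 0. -/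
open Matrix MeasureTheory Set
open scoped ComplexOrder

/-- `j = diag(I_{m₁}, −I_{m₂})`. -/
noncomputable def jMat (m₁ m₂ : ℕ) : Matrix (Fin m₁ ⊕ Fin m₂) (Fin m₁ ⊕ Fin m₂) ℂ :=
  Matrix.fromBlocks 1 0 0 (-1)

/-- `V = [[0, v],[v*, 0]]` built out of the potential `v`. -/
noncomputable def VMat {m₁ m₂ : ℕ} (v : ℝ → Matrix (Fin m₁) (Fin m₂) ℂ) (x : ℝ) :
    Matrix (Fin m₁ ⊕ Fin m₂) (Fin m₁ ⊕ Fin m₂) ℂ :=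
  Matrix.fromBlocks 0 (v x) (v x)ᴴ 0

/-- determinant as a continuous multilinear map in the rows -/
noncomputable def detCML (n : Type*) [Fintype n] [DecidableEq n] :
    ContinuousMultilinearMap ℂ (fun _ : n => (n → ℂ)) ℂ :=
  MultilinearMap.mkContinuous
    (Matrix.detRowAlternating : (n → ℂ) [⋀^n]→ₗ[ℂ] ℂ).toMultilinearMap
    (Fintype.card (Equiv.Perm n)) (by
      intro m
      show ‖(Matrix.of m).det‖ ≤ _
      rw [Matrix.det_apply]
      refine (norm_sum_le _ _).trans ?_
      have h1 : ∀ σ : Equiv.Perm n, ‖Equiv.Perm.sign σ • ∏ i, Matrix.of m (σ i) i‖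
          ≤ ∏ i : n, ‖m i‖ := by
        intro σ
        rw [Units.smul_def, zsmul_eq_mul, norm_mul]
        have : ‖((Equiv.Perm.sign σ : ℤ) : ℂ)‖ = 1 := by
          rcases Int.units_eq_one_or (Equiv.Perm.sign σ) with h | h <;> simp [h]
        rw [this, one_mul, norm_prod]
        calc ∏ i : n, ‖Matrix.of m (σ i) i‖ ≤ ∏ i : n, ‖m (σ i)‖ := by
              refine Finset.prod_le_prod (fun _ _ => norm_nonneg _) fun i _ => ?_
              exact norm_le_pi_norm (m (σ i)) i
          _ = ∏ i : n, ‖m i‖ := Equiv.prod_comp σ fun i => ‖m i‖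
      calc ∑ σ : Equiv.Perm n, ‖Equiv.Perm.sign σ • ∏ i, Matrix.of m (σ i) i‖
          ≤ ∑ _σ : Equiv.Perm n, ∏ i : n, ‖m i‖ := Finset.sum_le_sum fun σ _ => h1 σ
        _ = (Fintype.card (Equiv.Perm n) : ℝ) * ∏ i : n, ‖m i‖ := by
            rw [Finset.sum_const, Finset.card_univ, nsmul_eq_mul])

/-- Liouville-type lemma: derivative of `det` along a matrix ODE. -/
theorem hasDerivWithinAt_det {n : Type*} [Fintype n] [DecidableEq n]
    {U : ℝ → Matrix n n ℂ} {B : Matrix n n ℂ} {s : Set ℝ} {x : ℝ}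
    (h : ∀ i k, HasDerivWithinAt (fun y => U y i k) ((B * U x) i k) s x) :
    HasDerivWithinAt (fun y => (U y).det) (B.trace * (U x).det) s x := by
  have hr : HasDerivWithinAt (fun y => (fun i k => U y i k : n → n → ℂ))
      (fun i k => (B * U x) i k) s x := by
    rw [hasDerivWithinAt_pi]
    intro i
    rw [hasDerivWithinAt_pi]
    exact h i
  have hF := ((detCML n).hasFDerivAt (x := (U x : n → n → ℂ))).restrictScalars ℝ
  have hcomp := hF.comp_hasDerivWithinAt x hr
  have happ : ((detCML n).linearDeriv (U x)) (B * U x)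
      = ∑ i, detCML n (Function.update (U x : n → n → ℂ) i ((B * U x) i)) :=
    ContinuousMultilinearMap.linearDeriv_apply _ _ _
  have halg : ∑ i, detCML n (Function.update (U x : n → n → ℂ) i ((B * U x) i))
      = B.trace * (U x).det := by
    have hrow : ∀ i, Function.update (U x : n → n → ℂ) i ((B * U x) i)
        = (U x).updateRow i (∑ k, B i k • U x k) := by
      intro i
      have hrr : (B * U x) i = ∑ k, B i k • U x k := by
        funext l
        rw [Finset.sum_apply]
        simp [Matrix.mul_apply]
      rw [Matrix.updateRow, hrr]
      rfl
    calc ∑ i, detCML n (Function.update (U x : n → n → ℂ) i ((B * U x) i))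
        = ∑ i, ((U x).updateRow i (∑ k, B i k • U x k)).det := by
          refine Finset.sum_congr rfl fun i _ => ?_
          rw [hrow i]; rfl
      _ = ∑ i, B i i * (U x).det := by
          refine Finset.sum_congr rfl fun i _ => ?_
          rw [Matrix.det_updateRow_sum]; rfl
      _ = B.trace * (U x).det := by rw [Matrix.trace, Finset.sum_mul]; rfl
  have h3 : HasDerivWithinAt (⇑(detCML n) ∘ U) (B.trace * (U x).det) s x := by
    simpa [happ, halg] using hcomp
  exact h3

section jFacts

variable {m₁ m₂ : ℕ}

theorem jMat_sq : jMat m₁ m₂ * jMat m₁ m₂ = 1 := by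
  simp [jMat, Matrix.fromBlocks_multiply, Matrix.fromBlocks_one]

theorem jMat_herm : (jMat m₁ m₂)ᴴ = jMat m₁ m₂ := by
  simp [jMat, Matrix.fromBlocks_conjTranspose]

theorem VMat_herm (v : ℝ → Matrix (Fin m₁) (Fin m₂) ℂ) (x : ℝ) :
    (VMat v x)ᴴ = VMat v x := by
  simp [VMat, Matrix.fromBlocks_conjTranspose]

theorem trace_jV (v : ℝ → Matrix (Fin m₁) (Fin m₂) ℂ) (x : ℝ) :
    (jMat m₁ m₂ * VMat v x).trace = 0 := by
  simp [jMat, VMat, Matrix.fromBlocks_multiply, Matrix.trace, Fintype.sum_sum_type]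

theorem trace_j : (jMat m₁ m₂).trace = (m₁ : ℂ) - m₂ := by
  simp [jMat, Matrix.trace, Fintype.sum_sum_type]
  ring

/-- the dissipativity identity `Aᴴ j + j A = (-2 Im z) • 1`. -/
theorem key_identity (v : ℝ → Matrix (Fin m₁) (Fin m₂) ℂ) (x : ℝ) (z : ℂ) :
    (Complex.I • (z • jMat m₁ m₂ + jMat m₁ m₂ * VMat v x))ᴴ * jMat m₁ m₂
      + jMat m₁ m₂ * (Complex.I • (z • jMat m₁ m₂ + jMat m₁ m₂ * VMat v x))
      = ((-2 * z.im : ℝ) : ℂ) • (1 : Matrix (Fin m₁ ⊕ Fin m₂) (Fin m₁ ⊕ Fin m₂) ℂ) := by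
  have hsq : jMat m₁ m₂ * jMat m₁ m₂ = 1 := jMat_sq
  have h2 : (jMat m₁ m₂ * VMat v x)ᴴ = VMat v x * jMat m₁ m₂ := by
    rw [Matrix.conjTranspose_mul, VMat_herm, jMat_herm]
  have hWJJ : VMat v x * jMat m₁ m₂ * jMat m₁ m₂ = VMat v x := by
    rw [Matrix.mul_assoc, hsq, Matrix.mul_one]
  have hJJW : jMat m₁ m₂ * (jMat m₁ m₂ * VMat v x) = VMat v x := by
    rw [← Matrix.mul_assoc, hsq, Matrix.one_mul]
  rw [Matrix.conjTranspose_smul, Matrix.conjTranspose_add, Matrix.conjTranspose_smul,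
    jMat_herm, h2]
  simp only [Matrix.smul_mul, Matrix.mul_smul, Matrix.add_mul, Matrix.mul_add, hsq, hWJJ, hJJW,
    smul_add, smul_smul]
  match_scalars
  · simp [Complex.ext_iff]; ring
  · simp [Complex.ext_iff]

end jFacts

/-- derivative of the sesquilinear form `y ↦ ⟨G y, J (G y)⟩`. -/
theorem hasDerivWithinAt_sesq {n : Type*} [Fintype n]
    (J : Matrix n n ℂ) {G : ℝ → n → ℂ} {G' : n → ℂ} {s : Set ℝ} {x : ℝ}
    (h : ∀ i, HasDerivWithinAt (fun y => G y i) (G' i) s x) :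
    HasDerivWithinAt (fun y => star (G y) ⬝ᵥ (J *ᵥ G y))
      (star G' ⬝ᵥ (J *ᵥ G x) + star (G x) ⬝ᵥ (J *ᵥ G')) s x := by
  have hfun : ∀ (w w' : n → ℂ), star w ⬝ᵥ (J *ᵥ w')
      = ∑ i, ∑ k, star (w i) * (J i k * w' k) := by
    intro w w'
    simp [dotProduct, Matrix.mulVec, Finset.mul_sum]
  have key : HasDerivWithinAt (fun y => ∑ i, ∑ k, star (G y i) * (J i k * G y k))
      (∑ i, ∑ k, (star (G' i) * (J i k * G x k) + star (G x i) * (J i k * G' k))) s x := by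
    apply HasDerivWithinAt.fun_sum
    intro i _
    apply HasDerivWithinAt.fun_sum
    intro k _
    exact (h i).star.mul ((h k).const_mul (J i k))
  have hval : (∑ i, ∑ k, (star (G' i) * (J i k * G x k) + star (G x i) * (J i k * G' k)))
      = star G' ⬝ᵥ (J *ᵥ G x) + star (G x) ⬝ᵥ (J *ᵥ G') := by
    rw [hfun, hfun, ← Finset.sum_add_distrib]
    refine Finset.sum_congr rfl fun i _ => ?_
    rw [← Finset.sum_add_distrib]
  rw [← hval]
  refine key.congr (fun y _ => ?_) (hfun _ _)
  exact hfun _ _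


/-- For a Dirac system with locally integrable potential and any
nonsingular `𝒫` (`𝒫*𝒫 > 0`) with property-`j` (`𝒫* j 𝒫 ≥ 0`) one has
`det([I 0] u(x,z)⁻¹ 𝒫) ≠ 0` for all `x ≥ 0`, `z ∈ ℂ₊`. -/
theorem det_nonzero_of_property_j {m₁ m₂ : ℕ}
    (v : ℝ → Matrix (Fin m₁) (Fin m₂) ℂ)
    (hv : ∀ i j, LocallyIntegrableOn (fun x => v x i j) (Ici 0))
    (u : ℝ → ℂ → Matrix (Fin m₁ ⊕ Fin m₂) (Fin m₁ ⊕ Fin m₂) ℂ)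
    (hu0 : ∀ z : ℂ, u 0 z = 1)
    (hux : ∀ z : ℂ, ∀ x ∈ Ici (0:ℝ), ∀ i k,
      HasDerivWithinAt (fun y => u y z i k)
        (((Complex.I • (z • jMat m₁ m₂ + jMat m₁ m₂ * VMat v x)) * u x z) i k) (Ici (0:ℝ)) x)
    (P : Matrix (Fin m₁ ⊕ Fin m₂) (Fin m₁) ℂ)
    (hP1 : (Pᴴ * P).PosDef) (hP2 : (Pᴴ * jMat m₁ m₂ * P).PosSemidef) :
    ∀ x ∈ Ici (0:ℝ), ∀ z : ℂ, 0 < z.im →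
      ((Matrix.fromCols (1 : Matrix (Fin m₁) (Fin m₁) ℂ) (0 : Matrix (Fin m₁) (Fin m₂) ℂ) :
        Matrix (Fin m₁) (Fin m₁ ⊕ Fin m₂) ℂ) * (u x z)⁻¹ * P).det ≠ 0 := by
  intro x₀ hx₀ z hz
  have hx₀' : (0:ℝ) ≤ x₀ := hx₀
  -- Step A : det (u x₀ z) ≠ 0, via Liouville's formula
  set c : ℂ := Complex.I * (z * ((m₁ : ℂ) - m₂)) with hc
  have htr : ∀ x : ℝ, (Complex.I • (z • jMat m₁ m₂ + jMat m₁ m₂ * VMat v x)).trace = c := by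
    intro x
    rw [Matrix.trace_smul, Matrix.trace_add, Matrix.trace_smul, trace_j, trace_jV]
    simp [hc, smul_eq_mul]
  have hd : ∀ x ∈ Ici (0:ℝ),
      HasDerivWithinAt (fun y => (u y z).det) (c * (u x z).det) (Ici 0) x := by
    intro x hx
    have h := hasDerivWithinAt_det (fun i k => hux z x hx i k)
    rwa [htr x] at h
  have hexp : ∀ x : ℝ, HasDerivWithinAt (fun y : ℝ => Complex.exp (-(c * y)))
      (Complex.exp (-(c * x)) * (-c)) (Ici 0) x := by
    intro x
    have h0 : HasDerivWithinAt (fun y : ℝ => (y : ℂ)) 1 (Ici 0) x := by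
      have h3 : HasDerivWithinAt (⇑Complex.ofRealCLM) 1 (Ici 0) x := by
        simpa using (Complex.ofRealCLM.hasDerivAt (x := x)).hasDerivWithinAt
      exact h3
    have h1 : HasDerivWithinAt (fun y : ℝ => -(c * (y:ℂ))) (-c) (Ici 0) x := by
      have h3 : HasDerivWithinAt (-fun y : ℝ => c * (y:ℂ)) (-c) (Ici 0) x := by
        simpa using (h0.const_mul c).neg
      exact h3
    simpa using h1.cexp
  set E : ℝ → ℂ := fun y => (u y z).det * Complex.exp (-(c * y)) with hEdef
  have hE' : ∀ x ∈ Ici (0:ℝ), HasDerivWithinAt E 0 (Ici 0) x := by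
    intro x hx
    have h := (hd x hx).mul (hexp x)
    have hzero : c * (u x z).det * Complex.exp (-(c * x))
        + (u x z).det * (Complex.exp (-(c * x)) * -c) = 0 := by ring
    rwa [hzero] at h
  have hEconst : E x₀ = E 0 := by
    have hcont : ContinuousOn E (Icc 0 x₀) := fun y hy =>
      ((hE' y hy.1).continuousWithinAt).mono (fun t ht => ht.1)
    exact constant_of_has_deriv_right_zero hcont
      (fun y hy => (hE' y hy.1).mono (Ici_subset_Ici.2 hy.1)) x₀ ⟨hx₀', le_rfl⟩
  have hdet0 : (u x₀ z).det ≠ 0 := by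
    intro h0
    have hE0 : E 0 = 1 := by simp [hEdef, hu0 z]
    have hEx : E x₀ = 0 := by simp [hEdef, h0]
    rw [hEconst, hE0] at hEx
    exact one_ne_zero hEx
  -- Step B : the main dissipativity argument
  by_contra hdetP
  obtain ⟨f, hf0, hf⟩ := (Matrix.exists_mulVec_eq_zero_iff).2 hdetP
  set η : (Fin m₁ ⊕ Fin m₂) → ℂ := (u x₀ z)⁻¹ *ᵥ (P *ᵥ f) with hηdef
  have hinv : u x₀ z * (u x₀ z)⁻¹ = 1 :=
    Matrix.mul_nonsing_inv _ (isUnit_iff_ne_zero.2 hdet0)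
  have hPf : u x₀ z *ᵥ η = P *ᵥ f := by
    rw [hηdef, Matrix.mulVec_mulVec, hinv, Matrix.one_mulVec]
  have hη1 : ∀ i, η (Sum.inl i) = 0 := by
    intro i
    have h1 : (Matrix.fromCols (1 : Matrix (Fin m₁) (Fin m₁) ℂ) 0 *ᵥ η) = 0 := by
      rw [hηdef, Matrix.mulVec_mulVec, Matrix.mulVec_mulVec]
      exact hf
    have h2 := congrFun h1 i
    simpa [Matrix.mulVec, dotProduct, Fintype.sum_sum_type, Matrix.fromCols,
      Matrix.one_apply] using h2
  set g : ℝ → (Fin m₁ ⊕ Fin m₂) → ℂ := fun y => u y z *ᵥ η with hgdef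
  have hg' : ∀ x ∈ Ici (0:ℝ), ∀ i, HasDerivWithinAt (fun y => g y i)
      (((Complex.I • (z • jMat m₁ m₂ + jMat m₁ m₂ * VMat v x)) *ᵥ g x) i) (Ici 0) x := by
    intro x hx i
    have hsum : HasDerivWithinAt (fun y => ∑ k, u y z i k * η k)
        (∑ k, ((Complex.I • (z • jMat m₁ m₂ + jMat m₁ m₂ * VMat v x)) * u x z) i k * η k)
        (Ici 0) x :=
      HasDerivWithinAt.fun_sum fun k _ => (hux z x hx i k).mul_const (η k)
    have h1 : ∀ y, g y i = ∑ k, u y z i k * η k := fun y => rfl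
    have h2 : ((Complex.I • (z • jMat m₁ m₂ + jMat m₁ m₂ * VMat v x)) *ᵥ g x) i
        = ∑ k, ((Complex.I • (z • jMat m₁ m₂ + jMat m₁ m₂ * VMat v x)) * u x z) i k * η k := by
      show ((Complex.I • (z • jMat m₁ m₂ + jMat m₁ m₂ * VMat v x)) *ᵥ (u x z *ᵥ η)) i = _
      rw [Matrix.mulVec_mulVec]
      rfl
    rw [h2]
    exact hsum.congr (fun y _ => h1 y) (h1 x)
  have hval : ∀ x : ℝ, ∀ w : (Fin m₁ ⊕ Fin m₂) → ℂ,
      star ((Complex.I • (z • jMat m₁ m₂ + jMat m₁ m₂ * VMat v x)) *ᵥ w)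
          ⬝ᵥ (jMat m₁ m₂ *ᵥ w)
        + star w ⬝ᵥ (jMat m₁ m₂ *ᵥ ((Complex.I • (z • jMat m₁ m₂ + jMat m₁ m₂ * VMat v x)) *ᵥ w))
      = ((-2 * z.im : ℝ) : ℂ) * (star w ⬝ᵥ w) := by
    intro x w
    rw [Matrix.star_mulVec, ← Matrix.dotProduct_mulVec]
    simp only [Matrix.mulVec_mulVec]
    rw [← dotProduct_add, ← Matrix.add_mulVec, key_identity v x z,
      Matrix.smul_mulVec, Matrix.one_mulVec, dotProduct_smul, smul_eq_mul]
  have hform : ∀ x ∈ Ici (0:ℝ),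
      HasDerivWithinAt (fun y => star (g y) ⬝ᵥ (jMat m₁ m₂ *ᵥ g y))
        (((-2 * z.im : ℝ) : ℂ) * (star (g x) ⬝ᵥ g x)) (Ici 0) x := by
    intro x hx
    have h := hasDerivWithinAt_sesq (jMat m₁ m₂) (fun i => hg' x hx i)
    rwa [hval x (g x)] at h
  set θ : ℝ → ℝ := fun y => (star (g y) ⬝ᵥ (jMat m₁ m₂ *ᵥ g y)).re with hθdef
  have hθ : ∀ x ∈ Ici (0:ℝ), HasDerivWithinAt θ
      ((((-2 * z.im : ℝ):ℂ) * (star (g x) ⬝ᵥ g x)).re) (Ici 0) x := by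
    intro x hx
    exact (Complex.reCLM.hasFDerivAt).comp_hasDerivWithinAt x (hform x hx)
  have hgg : ∀ w : (Fin m₁ ⊕ Fin m₂) → ℂ,
      star w ⬝ᵥ w = ((∑ i, Complex.normSq (w i) : ℝ) : ℂ) := by
    intro w
    rw [dotProduct]
    push_cast
    refine Finset.sum_congr rfl fun i _ => ?_
    rw [Pi.star_apply, Complex.star_def, ← Complex.normSq_eq_conj_mul_self]
  have hθ'le : ∀ x, ((((-2 * z.im : ℝ):ℂ) * (star (g x) ⬝ᵥ g x)).re) ≤ 0 := by
    intro x
    rw [hgg, ← Complex.ofReal_mul, Complex.ofReal_re]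
    apply mul_nonpos_of_nonpos_of_nonneg
    · nlinarith
    · exact Finset.sum_nonneg fun i _ => Complex.normSq_nonneg _
  have hanti : AntitoneOn θ (Icc 0 x₀) := by
    apply antitoneOn_of_deriv_nonpos (convex_Icc 0 x₀)
    · exact fun y hy => ((hθ y hy.1).continuousWithinAt).mono (fun t ht => ht.1)
    · intro y hy
      rw [interior_Icc] at hy
      exact (((hθ y (le_of_lt hy.1)).hasDerivAt
        (Ici_mem_nhds hy.1)).differentiableAt).differentiableWithinAt
    · intro y hy
      rw [interior_Icc] at hy
      rw [((hθ y (le_of_lt hy.1)).hasDerivAt (Ici_mem_nhds hy.1)).deriv]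
      exact hθ'le y
  have hmono : θ x₀ ≤ θ 0 := hanti ⟨le_rfl, hx₀'⟩ ⟨hx₀', le_rfl⟩ hx₀'
  -- endpoint at x₀
  have hθx₀ : 0 ≤ θ x₀ := by
    have hC : star (g x₀) ⬝ᵥ (jMat m₁ m₂ *ᵥ g x₀)
        = star f ⬝ᵥ ((Pᴴ * jMat m₁ m₂ * P) *ᵥ f) := by
      have hgx₀ : g x₀ = P *ᵥ f := hPf
      rw [hgx₀]
      rw [Matrix.star_mulVec, ← Matrix.dotProduct_mulVec]
      simp only [Matrix.mulVec_mulVec]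
      rw [Matrix.mul_assoc]
    have hpos := hP2.dotProduct_mulVec_nonneg f
    show 0 ≤ (star (g x₀) ⬝ᵥ (jMat m₁ m₂ *ᵥ g x₀)).re
    rw [hC]
    have h := (Complex.le_def.mp hpos).1
    simpa using h
  -- endpoint at 0
  have hθ0 : θ 0 = -∑ i : Fin m₂, Complex.normSq (η (Sum.inr i)) := by
    have hg0 : g 0 = η := by
      show u 0 z *ᵥ η = η
      rw [hu0 z, Matrix.one_mulVec]
    show (star (g 0) ⬝ᵥ (jMat m₁ m₂ *ᵥ g 0)).re = _
    rw [hg0]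
    have hJη : ∀ i, (jMat m₁ m₂ *ᵥ η) i = Sum.elim (fun a => η (Sum.inl a))
        (fun a => -η (Sum.inr a)) i := by
      intro i
      cases i with
      | inl a =>
        simp [jMat, Matrix.mulVec, dotProduct, Fintype.sum_sum_type,
          Matrix.fromBlocks, Matrix.one_apply]
      | inr a =>
        simp [jMat, Matrix.mulVec, dotProduct, Fintype.sum_sum_type,
          Matrix.fromBlocks, Matrix.one_apply]
    have hsplit : star η ⬝ᵥ (jMat m₁ m₂ *ᵥ η)
        = ∑ i : Fin m₂, star (η (Sum.inr i)) * (-η (Sum.inr i)) := by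
      rw [dotProduct, Fintype.sum_sum_type]
      have h1 : ∀ a : Fin m₁, star η (Sum.inl a) * (jMat m₁ m₂ *ᵥ η) (Sum.inl a) = 0 := by
        intro a; simp [hη1 a]
      rw [Finset.sum_congr rfl (fun a _ => h1 a), Finset.sum_const_zero, zero_add]
      refine Finset.sum_congr rfl fun a _ => ?_
      rw [hJη]
      simp
    rw [hsplit, Complex.re_sum, ← Finset.sum_neg_distrib]
    refine Finset.sum_congr rfl fun a _ => ?_
    rw [Complex.star_def, mul_neg, ← Complex.normSq_eq_conj_mul_self]
    simp
  have hsum0 : ∑ i : Fin m₂, Complex.normSq (η (Sum.inr i)) = 0 := by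
    have h1 : (0:ℝ) ≤ -∑ i : Fin m₂, Complex.normSq (η (Sum.inr i)) := by
      rw [← hθ0]; exact le_trans hθx₀ hmono
    have h2 : (0:ℝ) ≤ ∑ i : Fin m₂, Complex.normSq (η (Sum.inr i)) :=
      Finset.sum_nonneg fun i _ => Complex.normSq_nonneg _
    linarith
  have hη2 : ∀ i, η (Sum.inr i) = 0 := by
    intro i
    have := (Finset.sum_eq_zero_iff_of_nonneg
      (fun i _ => Complex.normSq_nonneg (η (Sum.inr i)))).1 hsum0 i (Finset.mem_univ i)
    exact Complex.normSq_eq_zero.1 this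
  have hη0 : η = 0 := by
    funext i
    cases i with
    | inl a => exact hη1 a
    | inr a => exact hη2 a
  have hPf0 : P *ᵥ f = 0 := by
    rw [← hPf, hη0, Matrix.mulVec_zero]
  have hlt := hP1.dotProduct_mulVec_pos hf0
  rw [← Matrix.mulVec_mulVec, hPf0, Matrix.mulVec_zero, dotProduct_zero] at hlt
  exact lt_irrefl 0 hlt
end

section
/- Let ε > 0 and let f be a complex-valued function on the closed square 𝒟(ε) = [0,ε] × [0,ε] (with coordinates (x,t)). If f, f_t and f_{tx} exist and are continuous on 𝒟(ε), and the derivative f_x(x,0) exists for 0 ≤ x ≤ ε, then f_x and f_{xt} exist everywhere on 𝒟(ε) and f_{xt} = f_{tx} on 𝒟(ε). -/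
open Set MeasureTheory intervalIntegral

/-- mixed derivatives on a closed square, Proposition 3.2 of the paper.
If `f`, `f_t` and `f_{tx}` exist and are continuous on `𝒟(ε) = [0,ε] × [0,ε]` (one-sided
derivatives at the boundary) and `f_x(x,0)` exists for `0 ≤ x ≤ ε`, then `f_x` and `f_{xt}`
exist on `𝒟(ε)` and `f_{xt} = f_{tx}`. -/
theorem mixed_partials_on_square (ε : ℝ) (hε : 0 < ε)
    (f ft ftx : ℝ → ℝ → ℂ)
    -- f_t exists on 𝒟(ε)
    (hft : ∀ x ∈ Icc (0:ℝ) ε, ∀ t ∈ Icc (0:ℝ) ε,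
      HasDerivWithinAt (fun s => f x s) (ft x t) (Icc (0:ℝ) ε) t)
    -- f_{tx} exists on 𝒟(ε)
    (hftx : ∀ x ∈ Icc (0:ℝ) ε, ∀ t ∈ Icc (0:ℝ) ε,
      HasDerivWithinAt (fun y => ft y t) (ftx x t) (Icc (0:ℝ) ε) x)
    -- f, f_t and f_{tx} are continuous on 𝒟(ε)
    (hfc : ContinuousOn (fun p : ℝ × ℝ => f p.1 p.2) (Icc 0 ε ×ˢ Icc 0 ε))
    (hftc : ContinuousOn (fun p : ℝ × ℝ => ft p.1 p.2) (Icc 0 ε ×ˢ Icc 0 ε))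
    (hftxc : ContinuousOn (fun p : ℝ × ℝ => ftx p.1 p.2) (Icc 0 ε ×ˢ Icc 0 ε))
    -- f_x(x,0) exists for 0 ≤ x ≤ ε
    (hfx0 : ∀ x ∈ Icc (0:ℝ) ε, ∃ c : ℂ, HasDerivWithinAt (fun y => f y 0) c (Icc (0:ℝ) ε) x) :
    -- conclusion: f_x exists on 𝒟(ε), f_{xt} exists on 𝒟(ε) and f_{xt} = f_{tx}
    ∃ fx : ℝ → ℝ → ℂ,
      (∀ x ∈ Icc (0:ℝ) ε, ∀ t ∈ Icc (0:ℝ) ε,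
        HasDerivWithinAt (fun y => f y t) (fx x t) (Icc (0:ℝ) ε) x) ∧
      (∀ x ∈ Icc (0:ℝ) ε, ∀ t ∈ Icc (0:ℝ) ε,
        HasDerivWithinAt (fun s => fx x s) (ftx x t) (Icc (0:ℝ) ε) t) := by
  choose! fx0 hfx0' using hfx0
  set I : Set ℝ := Icc (0:ℝ) ε with hIdef
  -- slice continuity
  have cont_slice : ∀ (g : ℝ → ℝ → ℂ), ContinuousOn (fun p : ℝ × ℝ => g p.1 p.2) (I ×ˢ I) →
      (∀ x ∈ I, ContinuousOn (g x) I) ∧ (∀ t ∈ I, ContinuousOn (fun y => g y t) I) := by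
    intro g hg
    constructor
    · intro x hx
      have : ContinuousOn ((fun p : ℝ × ℝ => g p.1 p.2) ∘ (fun s => (x, s))) I :=
        hg.comp (continuous_const.prodMk continuous_id).continuousOn (fun s hs => ⟨hx, hs⟩)
      exact this
    · intro t ht
      have : ContinuousOn ((fun p : ℝ × ℝ => g p.1 p.2) ∘ (fun y => (y, t))) I :=
        hg.comp (continuous_id.prodMk continuous_const).continuousOn (fun y hy => ⟨hy, ht⟩)
      exact this
  obtain ⟨cft_t, cft_y⟩ := cont_slice ft hftc
  obtain ⟨cftx_t, cftx_y⟩ := cont_slice ftx hftxc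
  -- generic FTC on [0,b] ⊆ I
  have ftc : ∀ (g g' : ℝ → ℂ), ContinuousOn g I →
      ContinuousOn g' I → (∀ u ∈ I, HasDerivWithinAt g (g' u) I u) →
      ∀ b ∈ I, (∫ u in (0:ℝ)..b, g' u) = g b - g 0 := by
    intro g g' hg hg' hder b hb
    have hsub : Icc (0:ℝ) b ⊆ I := Icc_subset_Icc le_rfl hb.2
    apply intervalIntegral.integral_eq_sub_of_hasDeriv_right_of_le hb.1
      (hg.mono hsub)
    · intro u hu
      have hder' := hder u ⟨le_of_lt hu.1, le_trans (le_of_lt hu.2) hb.2⟩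
      apply hder'.mono_of_mem_nhdsWithin
      apply Filter.mem_of_superset (Ioc_mem_nhdsGT_of_mem
        ⟨le_refl u, lt_of_lt_of_le hu.2 hb.2⟩)
      exact fun z hz => ⟨le_trans (le_of_lt hu.1) (le_of_lt hz.1), hz.2⟩
    · apply ContinuousOn.intervalIntegrable
      rw [uIcc_of_le hb.1]
      exact hg'.mono hsub
  -- FTC in t
  have hB : ∀ x ∈ I, ∀ t ∈ I, (∫ s in (0:ℝ)..t, ft x s) = f x t - f x 0 := by
    intro x hx
    exact ftc (f x) (ft x) ((cont_slice f hfc).1 x hx) (cft_t x hx) (hft x hx)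
  -- FTC in y
  have hC : ∀ s ∈ I, ∀ x ∈ I, (∫ y in (0:ℝ)..x, ftx y s) = ft x s - ft 0 s := by
    intro s hs
    exact ftc (fun y => ft y s) (fun y => ftx y s) (cft_y s hs) (cftx_y s hs)
      (fun y hy => hftx y hy s hs)
  -- bound for ftx
  obtain ⟨C, hCb⟩ := (isCompact_Icc.prod isCompact_Icc).exists_bound_of_continuousOn hftxc
  -- the function h
  set h : ℝ → ℝ → ℂ := fun t y => ∫ s in (0:ℝ)..t, ftx y s with hhdef
  have hIsub : ∀ {t : ℝ}, t ∈ I → uIoc (0:ℝ) t ⊆ I := by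
    intro t ht
    rw [uIoc_of_le ht.1]
    exact fun z hz => ⟨le_of_lt hz.1, le_trans hz.2 ht.2⟩
  have h_cont : ∀ t ∈ I, ContinuousOn (h t) I := by
    intro t ht x hx
    apply intervalIntegral.continuousWithinAt_of_dominated_interval
      (bound := fun _ => C)
    · filter_upwards [eventually_mem_nhdsWithin] with y hy
      exact ((cftx_t y hy).mono (hIsub ht)).aestronglyMeasurable measurableSet_uIoc
    · filter_upwards [eventually_mem_nhdsWithin] with y hy
      exact Filter.Eventually.of_forall fun s hs => hCb (y, s) ⟨hy, hIsub ht hs⟩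
    · exact intervalIntegrable_const
    · exact Filter.Eventually.of_forall fun s hs => (cftx_y s (hIsub ht hs)) x hx
  -- integrability of slices
  have int_ftx : ∀ x ∈ I, ∀ t ∈ I, IntervalIntegrable (ftx x) volume 0 t := by
    intro x hx t ht
    apply ContinuousOn.intervalIntegrable
    rw [uIcc_of_le ht.1]
    exact (cftx_t x hx).mono (Icc_subset_Icc le_rfl ht.2)
  have int_ft : ∀ x ∈ I, ∀ t ∈ I, IntervalIntegrable (ft x) volume 0 t := by
    intro x hx t ht
    apply ContinuousOn.intervalIntegrable
    rw [uIcc_of_le ht.1]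
    exact (cft_t x hx).mono (Icc_subset_Icc le_rfl ht.2)
  -- Fubini
  have hF : ∀ x ∈ I, ∀ t ∈ I,
      (∫ y in (0:ℝ)..x, h t y) = ∫ s in (0:ℝ)..t, ∫ y in (0:ℝ)..x, ftx y s := by
    intro x hx t ht
    have hint0 : IntegrableOn (fun p : ℝ × ℝ => ftx p.1 p.2)
        (Icc (0:ℝ) x ×ˢ Icc (0:ℝ) t) (volume.prod volume) :=
      (hftxc.mono (prod_mono (Icc_subset_Icc le_rfl hx.2)
        (Icc_subset_Icc le_rfl ht.2))).integrableOn_compact (isCompact_Icc.prod isCompact_Icc)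
    have hint1 : IntegrableOn (fun p : ℝ × ℝ => ftx p.1 p.2)
        (Ioc (0:ℝ) x ×ˢ Ioc (0:ℝ) t) (volume.prod volume) :=
      hint0.mono_set (prod_mono Ioc_subset_Icc_self Ioc_subset_Icc_self)
    have hint : Integrable (Function.uncurry fun y s => ftx y s)
        ((volume.restrict (Ioc 0 x)).prod (volume.restrict (Ioc 0 t))) := by
      rw [Measure.prod_restrict]
      exact hint1
    rw [intervalIntegral.integral_of_le hx.1, intervalIntegral.integral_of_le ht.1]
    have e1 : ∀ y, h t y = ∫ s in Ioc (0:ℝ) t, ftx y s :=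
      fun y => intervalIntegral.integral_of_le ht.1
    have e2 : ∀ s, (∫ y in (0:ℝ)..x, ftx y s) = ∫ y in Ioc (0:ℝ) x, ftx y s :=
      fun s => intervalIntegral.integral_of_le hx.1
    simp_rw [e1, e2]
    exact MeasureTheory.integral_integral_swap hint
  -- define fx
  refine ⟨fun y t => fx0 y + h t y, ?_, ?_⟩
  · -- derivative in x
    intro x hx t ht
    -- key identity: f y t = (∫ s in 0..t, ft 0 s) + (f y 0 + ∫ z in 0..y, h t z)
    have key : ∀ y ∈ I, f y t = (∫ s in (0:ℝ)..t, ft 0 s) + (f y 0 + ∫ z in (0:ℝ)..y, h t z) := by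
      intro y hy
      have e1 : (∫ z in (0:ℝ)..y, h t z) = ∫ s in (0:ℝ)..t, (ft y s - ft 0 s) := by
        rw [hF y hy t ht]
        apply intervalIntegral.integral_congr
        intro s hs
        rw [uIcc_of_le ht.1] at hs
        exact hC s ⟨hs.1, le_trans hs.2 ht.2⟩ y hy
      have e2 : (∫ s in (0:ℝ)..t, (ft y s - ft 0 s))
          = (∫ s in (0:ℝ)..t, ft y s) - ∫ s in (0:ℝ)..t, ft 0 s :=
        intervalIntegral.integral_sub (int_ft y hy t ht) (int_ft 0 ⟨le_refl 0, le_of_lt hε⟩ t ht)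
      have e3 := hB y hy t ht
      rw [e1, e2]
      rw [e3]
      ring
    -- derivative of the RHS
    have hcw : ContinuousOn (h t) I := h_cont t ht
    have hd2 : HasDerivWithinAt (fun y => ∫ z in (0:ℝ)..y, h t z) (h t x) I x := by
      haveI : Fact (x ∈ Icc (0:ℝ) ε) := ⟨hx⟩
      apply intervalIntegral.integral_hasDerivWithinAt_right (t := I)
      · apply ContinuousOn.intervalIntegrable
        rw [uIcc_of_le hx.1]
        exact hcw.mono (Icc_subset_Icc le_rfl hx.2)
      · exact ⟨I, self_mem_nhdsWithin, hcw.aestronglyMeasurable measurableSet_Icc⟩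
      · exact hcw x hx
    have hd : HasDerivWithinAt
        (fun y => (∫ s in (0:ℝ)..t, ft 0 s) + (f y 0 + ∫ z in (0:ℝ)..y, h t z))
        (fx0 x + h t x) I x :=
      ((hfx0' x hx).add hd2).const_add _
    exact hd.congr key (key x hx)
  · -- derivative in t
    intro x hx t ht
    haveI : Fact (t ∈ Icc (0:ℝ) ε) := ⟨ht⟩
    apply HasDerivWithinAt.const_add
    apply intervalIntegral.integral_hasDerivWithinAt_right (t := I) (int_ftx x hx t ht)
    · exact ⟨I, self_mem_nhdsWithin, (cftx_t x hx).aestronglyMeasurable measurableSet_Icc⟩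
    · exact cftx_t x hx t ht
end

section
/- Let v be an m₁×m₂ matrix function in the class C_ε(𝒟) which satisfies the defocusing NLS equation 2v_t = i(v_xx − 2 v v* v) on the semi-strip 𝒟. Then for each integer r ≥ 0 and each k with 0 ≤ k ≤ r: on the square 𝒟(ε_{4(r+1)}) the derivatives ∂^{k+1}v/∂t^{k+1}, (∂^{k+1}v/∂t^{k+1})_x and (∂^{k+1}v/∂t^{k+1})_{xx} exist and are continuous; the equalities (∂^k v/∂t^k)_{xt} = (∂^k v/∂t^k)_{tx} and (∂^k v/∂t^k)_{xxt} = (∂^k v/∂t^k)_{txx} hold on 𝒟(ε_{4(r+1)}), both sides being continuous there; and for every integer s ≥ 0 and all 0 ≤ ℓ ≤ s, 0 ≤ k ≤ r, the derivative ∂^ℓ/∂x^ℓ (∂^{k+1}v/∂t^{k+1}) exists and is continuous on 𝒟(ε_{s+4(r+1)}). -/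
open Matrix Set

/-- Entrywise partial derivative in `x` on the closed square `[0,e] × [0,e]`
(one-sided at the boundary): `g = f_x`. -/
def PX {m₁ m₂ : ℕ} (e : ℝ) (f g : ℝ → ℝ → Matrix (Fin m₁) (Fin m₂) ℂ) : Prop :=
  ∀ x ∈ Icc (0:ℝ) e, ∀ t ∈ Icc (0:ℝ) e, ∀ i j,
    HasDerivWithinAt (fun y => f y t i j) (g x t i j) (Icc (0:ℝ) e) x

/-- Entrywise partial derivative in `t` on the closed square `[0,e] × [0,e]`: `g = f_t`. -/
def PT {m₁ m₂ : ℕ} (e : ℝ) (f g : ℝ → ℝ → Matrix (Fin m₁) (Fin m₂) ℂ) : Prop :=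
  ∀ x ∈ Icc (0:ℝ) e, ∀ t ∈ Icc (0:ℝ) e, ∀ i j,
    HasDerivWithinAt (fun s => f x s i j) (g x t i j) (Icc (0:ℝ) e) t

/-- Continuity on the closed square `[0,e] × [0,e]`. -/
def ContSq {m₁ m₂ : ℕ} (e : ℝ) (f : ℝ → ℝ → Matrix (Fin m₁) (Fin m₂) ℂ) : Prop :=
  ∀ i j, ContinuousOn (fun p : ℝ × ℝ => f p.1 p.2 i j) (Icc (0:ℝ) e ×ˢ Icc (0:ℝ) e)

/-- Membership of `v` in the class `C_ε(𝒟)` (Notation 3.1 of the paper), with derivative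
witnesses `vx = v_x`, `vt = v_t`, `vxx = v_xx` on the semi-strip `𝒟 = [0,∞) × [0,a)` and
squares `𝒟(ε_k)`: `v` is continuously differentiable on `𝒟`, `v_xx` exists on `𝒟`, and for
each `k` the function `v` is `k` times continuously differentiable in `x` on `𝒟(ε_k)`. -/
structure MemCEps {m₁ m₂ : ℕ} (a : ℝ)
    (v vx vt vxx : ℝ → ℝ → Matrix (Fin m₁) (Fin m₂) ℂ) (ε : ℕ → ℝ) : Prop where
  deriv_x : ∀ x ∈ Ici (0:ℝ), ∀ t ∈ Ico (0:ℝ) a, ∀ i j,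
    HasDerivWithinAt (fun y => v y t i j) (vx x t i j) (Ici (0:ℝ)) x
  deriv_t : ∀ x ∈ Ici (0:ℝ), ∀ t ∈ Ico (0:ℝ) a, ∀ i j,
    HasDerivWithinAt (fun s => v x s i j) (vt x t i j) (Ico (0:ℝ) a) t
  cont : ∀ i j, ContinuousOn (fun p : ℝ × ℝ => v p.1 p.2 i j) (Ici 0 ×ˢ Ico 0 a)
  cont_x : ∀ i j, ContinuousOn (fun p : ℝ × ℝ => vx p.1 p.2 i j) (Ici 0 ×ˢ Ico 0 a)
  cont_t : ∀ i j, ContinuousOn (fun p : ℝ × ℝ => vt p.1 p.2 i j) (Ici 0 ×ˢ Ico 0 a)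
  deriv_xx : ∀ x ∈ Ici (0:ℝ), ∀ t ∈ Ico (0:ℝ) a, ∀ i j,
    HasDerivWithinAt (fun y => vx y t i j) (vxx x t i j) (Ici (0:ℝ)) x
  eps_pos : ∀ k, 0 < ε k
  eps_anti : Antitone ε
  eps_lt : ∀ k, ε k < a
  smooth_x : ∀ k : ℕ, ∃ w : ℕ → ℝ → ℝ → Matrix (Fin m₁) (Fin m₂) ℂ,
    w 0 = v ∧ (∀ j < k, PX (ε k) (w j) (w (j+1))) ∧ (∀ j ≤ k, ContSq (ε k) (w j))

/-- `v` satisfies the defocusing NLS equation `2v_t = i(v_xx − 2vv*v)` on `𝒟`. -/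
def SatisfiesDNLS {m₁ m₂ : ℕ} (a : ℝ)
    (v vt vxx : ℝ → ℝ → Matrix (Fin m₁) (Fin m₂) ℂ) : Prop :=
  ∀ x ∈ Ici (0:ℝ), ∀ t ∈ Ico (0:ℝ) a,
    (2 : ℂ) • vt x t = Complex.I • (vxx x t - (2 : ℂ) • (v x t * (v x t)ᴴ * v x t))

section DNLSAuxSec
open MeasureTheory intervalIntegral
namespace DNLSAux


abbrev Fn (p r : ℕ) := ℝ → ℝ → Matrix (Fin p) (Fin r) ℂ

/-- `n` continuous `x`-derivatives on the square `[0,e]²`. -/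
def Pn {p r : ℕ} (n : ℕ) (e : ℝ) (f : Fn p r) : Prop :=
  ∃ w : ℕ → Fn p r, w 0 = f ∧ (∀ j < n, PX e (w j) (w (j+1))) ∧ (∀ j ≤ n, ContSq e (w j))

section basic
variable {p r : ℕ} {e e' : ℝ} {f g f₁ g₁ : Fn p r}

lemma PX_mono (h : PX e f g) (hle : e' ≤ e) : PX e' f g := fun x hx t ht i j =>
  ((h x ⟨hx.1, hx.2.trans hle⟩ t ⟨ht.1, ht.2.trans hle⟩ i j).mono (Icc_subset_Icc le_rfl hle))

lemma PT_mono (h : PT e f g) (hle : e' ≤ e) : PT e' f g := fun x hx t ht i j =>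
  ((h x ⟨hx.1, hx.2.trans hle⟩ t ⟨ht.1, ht.2.trans hle⟩ i j).mono (Icc_subset_Icc le_rfl hle))

lemma ContSq_mono (h : ContSq e f) (hle : e' ≤ e) : ContSq e' f := fun i j =>
  (h i j).mono (prod_mono (Icc_subset_Icc le_rfl hle) (Icc_subset_Icc le_rfl hle))

/-- equality on the square transfers PX (in the function position). -/
lemma PX_congr (h : PX e f g) (hfg : ∀ x ∈ Icc (0:ℝ) e, ∀ t ∈ Icc (0:ℝ) e, f x t = f₁ x t) :
    PX e f₁ g := by
  intro x hx t ht i j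
  exact (h x hx t ht i j).congr (fun y hy => by rw [hfg y hy t ht]) (by rw [hfg x hx t ht])

lemma PT_congr (h : PT e f g) (hf : ∀ x ∈ Icc (0:ℝ) e, ∀ t ∈ Icc (0:ℝ) e, f x t = f₁ x t)
    (hg : ∀ x ∈ Icc (0:ℝ) e, ∀ t ∈ Icc (0:ℝ) e, g x t = g₁ x t) : PT e f₁ g₁ := by
  intro x hx t ht i j
  exact ((h x hx t ht i j).congr (fun s hs => by rw [hf x hx s hs]) (by rw [hf x hx t ht])).congr_deriv
    (by rw [← hg x hx t ht])

lemma ContSq_congr (h : ContSq e f) (hfg : ∀ x ∈ Icc (0:ℝ) e, ∀ t ∈ Icc (0:ℝ) e, f x t = f₁ x t) :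
    ContSq e f₁ := fun i j =>
  (h i j).congr (fun q hq => by rw [mem_prod] at hq; exact (congrFun (congrFun (hfg q.1 hq.1 q.2 hq.2) i) j).symm)

/-- uniqueness of the `x`-derivative on a nondegenerate square. -/
lemma PX_unique (he : 0 < e) (h1 : PX e f g) (h2 : PX e f g₁) :
    ∀ x ∈ Icc (0:ℝ) e, ∀ t ∈ Icc (0:ℝ) e, g x t = g₁ x t := by
  intro x hx t ht
  ext i j
  have hu := (uniqueDiffOn_Icc he) x hx
  rw [← (h1 x hx t ht i j).derivWithin hu, (h2 x hx t ht i j).derivWithin hu]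

lemma Pn_mono {n : ℕ} (h : Pn n e f) (hle : e' ≤ e) : Pn n e' f := by
  obtain ⟨w, hw0, hwx, hwc⟩ := h
  exact ⟨w, hw0, fun j hj => PX_mono (hwx j hj) hle, fun j hj => ContSq_mono (hwc j hj) hle⟩

lemma Pn_congr {n : ℕ} (h : Pn n e f)
    (hfg : ∀ x ∈ Icc (0:ℝ) e, ∀ t ∈ Icc (0:ℝ) e, f x t = f₁ x t) : Pn n e f₁ := by
  obtain ⟨w, hw0, hwx, hwc⟩ := h
  refine ⟨fun j => if j = 0 then f₁ else w j, by simp, fun j hj => ?_, fun j _hj => ?_⟩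
  · rcases Nat.eq_zero_or_pos j with hj0 | hj0
    · subst hj0; simp only [if_pos rfl, if_neg (Nat.one_ne_zero)]
      exact PX_congr (hw0 ▸ hwx 0 hj) hfg
    · simp only [if_neg (Nat.pos_iff_ne_zero.mp hj0), if_neg (Nat.succ_ne_zero j)]
      exact hwx j hj
  · rcases Nat.eq_zero_or_pos j with hj0 | hj0
    · subst hj0; simp only [if_pos rfl]
      exact ContSq_congr (hw0 ▸ hwc 0 (Nat.zero_le _)) hfg
    · simp only [if_neg (Nat.pos_iff_ne_zero.mp hj0)]; exact hwc j _hj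

lemma Pn_of_succ {n : ℕ} (h : Pn (n+1) e f) : Pn n e f := by
  obtain ⟨w, hw0, hwx, hwc⟩ := h
  exact ⟨w, hw0, fun j hj => hwx j (hj.trans (Nat.lt_succ_self n)),
    fun j hj => hwc j (hj.trans (Nat.le_succ n))⟩

lemma Pn_zero (h : ContSq e f) : Pn 0 e f :=
  ⟨fun _ => f, rfl, fun j hj => absurd hj (Nat.not_lt_zero j), fun j _ => h⟩

lemma Pn_contSq {n : ℕ} (h : Pn n e f) : ContSq e f := by
  obtain ⟨w, hw0, _, hwc⟩ := h
  exact hw0 ▸ hwc 0 (Nat.zero_le _)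

lemma Pn_tail {n : ℕ} (h : Pn (n+1) e f) : ∃ d, PX e f d ∧ ContSq e f ∧ Pn n e d := by
  obtain ⟨w, hw0, hwx, hwc⟩ := h
  refine ⟨w 1, hw0 ▸ hwx 0 (Nat.succ_pos n), hw0 ▸ hwc 0 (Nat.zero_le _),
    ⟨fun j => w (j+1), rfl, fun j hj => hwx (j+1) (Nat.succ_lt_succ hj),
      fun j hj => hwc (j+1) (Nat.succ_le_succ hj)⟩⟩

lemma Pn_cons {n : ℕ} {d : Fn p r} (hx : PX e f d) (hc : ContSq e f) (h : Pn n e d) :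
    Pn (n+1) e f := by
  obtain ⟨w, hw0, hwx, hwc⟩ := h
  refine ⟨fun j => Nat.rec f (fun i _ => w i) j, rfl, fun j hj => ?_, fun j hj => ?_⟩
  · cases j with
    | zero => simpa [hw0] using hx
    | succ i => exact hwx i (Nat.lt_of_succ_lt_succ hj)
  · cases j with
    | zero => exact hc
    | succ i => exact hwc i (Nat.le_of_succ_le_succ hj)

end basic


section alg
variable {p q' r : ℕ} {e : ℝ} {f df : Fn p q'} {g dg : Fn q' r} {u du : Fn p q'} {c : ℂ}

lemma PX_conj (h : PX e f df) :
    PX e (fun x t => (f x t)ᴴ) (fun x t => (df x t)ᴴ) := by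
  intro x hx t ht i j
  simpa only [conjTranspose_apply] using (h x hx t ht j i).star

lemma ContSq_conj (h : ContSq e f) : ContSq e (fun x t => (f x t)ᴴ) := by
  intro i j
  simpa only [conjTranspose_apply] using (h j i).star

lemma PX_smul (h : PX e f df) :
    PX e (fun x t => c • f x t) (fun x t => c • df x t) := by
  intro x hx t ht i j
  simpa only [Matrix.smul_apply, smul_eq_mul] using (h x hx t ht i j).const_mul c

lemma ContSq_smul (h : ContSq e f) : ContSq e (fun x t => c • f x t) := by
  intro i j
  exact (h i j).const_smul c

lemma PX_add (h : PX e f df) (h' : PX e u du) :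
    PX e (fun x t => f x t + u x t) (fun x t => df x t + du x t) := by
  intro x hx t ht i j
  exact (h x hx t ht i j).add (h' x hx t ht i j)

lemma ContSq_add (h : ContSq e f) (h' : ContSq e u) :
    ContSq e (fun x t => f x t + u x t) := by
  intro i j
  exact (h i j).add (h' i j)

lemma PX_sub (h : PX e f df) (h' : PX e u du) :
    PX e (fun x t => f x t - u x t) (fun x t => df x t - du x t) := by
  intro x hx t ht i j
  exact (h x hx t ht i j).sub (h' x hx t ht i j)

lemma ContSq_sub (h : ContSq e f) (h' : ContSq e u) :
    ContSq e (fun x t => f x t - u x t) := by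
  intro i j
  exact (h i j).sub (h' i j)

lemma PX_mul (h : PX e f df) (h' : PX e g dg) :
    PX e (fun x t => f x t * g x t) (fun x t => df x t * g x t + f x t * dg x t) := by
  intro x hx t ht i j
  simp only [Matrix.add_apply, Matrix.mul_apply, ← Finset.sum_add_distrib]
  exact HasDerivWithinAt.fun_sum fun k _ =>
    ((h x hx t ht i k).mul (h' x hx t ht k j))
lemma ContSq_mul (h : ContSq e f) (h' : ContSq e g) :
    ContSq e (fun x t => f x t * g x t) := by
  intro i j
  simp only [Matrix.mul_apply]
  exact continuousOn_finset_sum _ fun k _ => (h i k).mul (h' k j)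
end alg
section pnclosure
variable {p q' r : ℕ} {e : ℝ}

lemma Pn_conjT {n : ℕ} {f : Fn p r} (h : Pn n e f) : Pn n e (fun x t => (f x t)ᴴ) := by
  obtain ⟨w, hw0, hwx, hwc⟩ := h
  exact ⟨fun j => fun x t => (w j x t)ᴴ, by simp only [hw0], fun j hj => PX_conj (hwx j hj),
    fun j hj => ContSq_conj (hwc j hj)⟩

lemma Pn_smul {n : ℕ} {c : ℂ} {f : Fn p r} (h : Pn n e f) : Pn n e (fun x t => c • f x t) := by
  obtain ⟨w, hw0, hwx, hwc⟩ := h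
  exact ⟨fun j => fun x t => c • w j x t, by simp only [hw0], fun j hj => PX_smul (hwx j hj),
    fun j hj => ContSq_smul (hwc j hj)⟩

lemma Pn_add {n : ℕ} {f u : Fn p r} (h : Pn n e f) (h' : Pn n e u) :
    Pn n e (fun x t => f x t + u x t) := by
  obtain ⟨w, hw0, hwx, hwc⟩ := h
  obtain ⟨z, hz0, hzx, hzc⟩ := h'
  exact ⟨fun j => fun x t => w j x t + z j x t, by simp only [hw0, hz0],
    fun j hj => PX_add (hwx j hj) (hzx j hj), fun j hj => ContSq_add (hwc j hj) (hzc j hj)⟩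

lemma Pn_sub {n : ℕ} {f u : Fn p r} (h : Pn n e f) (h' : Pn n e u) :
    Pn n e (fun x t => f x t - u x t) := by
  obtain ⟨w, hw0, hwx, hwc⟩ := h
  obtain ⟨z, hz0, hzx, hzc⟩ := h'
  exact ⟨fun j => fun x t => w j x t - z j x t, by simp only [hw0, hz0],
    fun j hj => PX_sub (hwx j hj) (hzx j hj), fun j hj => ContSq_sub (hwc j hj) (hzc j hj)⟩

lemma Pn_mul {f : Fn p q'} {g : Fn q' r} : ∀ {n : ℕ}, Pn n e f → Pn n e g →
    Pn n e (fun x t => f x t * g x t) := by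
  intro n
  induction n generalizing f g with
  | zero => intro h h'; exact Pn_zero (ContSq_mul (Pn_contSq h) (Pn_contSq h'))
  | succ n ih =>
    intro h h'
    obtain ⟨df, hdfx, hfc, hdf⟩ := Pn_tail h
    obtain ⟨dg, hdgx, hgc, hdg⟩ := Pn_tail h'
    refine Pn_cons (PX_mul hdfx hdgx) (ContSq_mul hfc hgc) ?_
    exact Pn_add (ih hdf (Pn_of_succ h')) (ih (Pn_of_succ h) hdg)

end pnclosure

section reg
variable {ε : ℕ → ℝ} (hpos : ∀ k, 0 < ε k) (hanti : Antitone ε)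
variable {p q' r : ℕ}

/-- `x`-regularity with offset `q`: for every `s`, `s` continuous `x`-derivatives on `𝒟(ε (s+q))`. -/
def Reg (ε : ℕ → ℝ) {p r : ℕ} (q : ℕ) (f : Fn p r) : Prop := ∀ s, Pn s (ε (s+q)) f

lemma Reg_mono (hanti : Antitone ε) {q : ℕ} {f : Fn p r} (h : Reg ε q f) : Reg ε (q+1) f := fun s =>
  Pn_mono (h s) (by exact_mod_cast hanti (by omega : s + q ≤ s + (q+1)))

lemma Reg_mono_le (hanti : Antitone ε) {q q₂ : ℕ} (hq : q ≤ q₂) {f : Fn p r} (h : Reg ε q f) : Reg ε q₂ f := by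
  induction q₂ with
  | zero => exact (Nat.le_zero.mp hq) ▸ h
  | succ n ih =>
    rcases Nat.lt_or_ge q (n+1) with h' | h'
    · exact Reg_mono hanti (ih (by omega))
    · exact (Nat.le_antisymm hq h') ▸ h

lemma Reg_congr (hanti : Antitone ε) {q : ℕ} {f f₁ : Fn p r} (h : Reg ε q f)
    (hfg : ∀ x ∈ Icc (0:ℝ) (ε q), ∀ t ∈ Icc (0:ℝ) (ε q), f x t = f₁ x t) : Reg ε q f₁ := by
  intro s
  refine Pn_congr (h s) fun x hx t ht => hfg x ⟨hx.1, hx.2.trans ?_⟩ t ⟨ht.1, ht.2.trans ?_⟩ <;>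
    exact hanti (by omega)

lemma Reg_conjT {q : ℕ} {f : Fn p r} (h : Reg ε q f) : Reg ε q (fun x t => (f x t)ᴴ) :=
  fun s => Pn_conjT (h s)
lemma Reg_smul {q : ℕ} {c : ℂ} {f : Fn p r} (h : Reg ε q f) : Reg ε q (fun x t => c • f x t) :=
  fun s => Pn_smul (h s)
lemma Reg_add {q : ℕ} {f u : Fn p r} (h : Reg ε q f) (h' : Reg ε q u) :
    Reg ε q (fun x t => f x t + u x t) := fun s => Pn_add (h s) (h' s)
lemma Reg_sub {q : ℕ} {f u : Fn p r} (h : Reg ε q f) (h' : Reg ε q u) :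
    Reg ε q (fun x t => f x t - u x t) := fun s => Pn_sub (h s) (h' s)
lemma Reg_mul {q : ℕ} {f : Fn p q'} {g : Fn q' r} (h : Reg ε q f) (h' : Reg ε q g) :
    Reg ε q (fun x t => f x t * g x t) := fun s => Pn_mul (h s) (h' s)
lemma Reg_contSq {q : ℕ} {f : Fn p r} (h : Reg ε q f) : ContSq (ε q) f := by
  have := Pn_contSq (h 0); rwa [Nat.zero_add] at this

/-- existence of a canonical `x`-derivative of a regular function. -/
lemma Reg_dx (hpos : ∀ k, 0 < ε k) (hanti : Antitone ε) {q : ℕ} {f : Fn p r} (h : Reg ε q f) :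
    ∃ g : Fn p r, Reg ε (q+1) g ∧ ∀ e', e' ≤ ε (q+1) → PX e' f g := by
  obtain ⟨d, hdx, _hfc, _hd⟩ := Pn_tail (h 1)
  refine ⟨d, fun s => ?_, fun e' he' => PX_mono hdx (by rw [Nat.add_comm 1 q]; exact he')⟩
  obtain ⟨d', hdx', _, hd'⟩ := Pn_tail (h (s+1))
  have heq := PX_unique (hpos (s+1+q)) (PX_mono hdx (hanti (by omega : 1 + q ≤ s+1+q)))
    hdx'
  have : Pn s (ε (s+(q+1))) d' := by
    have : s + (q+1) = s+1+q := by omega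
    rw [this]; exact hd'
  exact Pn_congr this fun x hx t ht => by
    have h' : s + (q+1) = s+1+q := by omega
    rw [h'] at hx ht
    exact (heq x hx t ht).symm

end reg


lemma sliceT {e : ℝ} {H : ℝ → ℝ → ℂ} (h : ContinuousOn (fun p : ℝ × ℝ => H p.1 p.2)
    (Icc (0:ℝ) e ×ˢ Icc (0:ℝ) e)) {x : ℝ} (hx : x ∈ Icc (0:ℝ) e) :
    ContinuousOn (fun s => H x s) (Icc (0:ℝ) e) :=
  h.comp (continuous_const.prodMk continuous_id).continuousOn (fun s hs => ⟨hx, hs⟩)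

lemma sliceX {e : ℝ} {H : ℝ → ℝ → ℂ} (h : ContinuousOn (fun p : ℝ × ℝ => H p.1 p.2)
    (Icc (0:ℝ) e ×ˢ Icc (0:ℝ) e)) {t : ℝ} (ht : t ∈ Icc (0:ℝ) e) :
    ContinuousOn (fun y => H y t) (Icc (0:ℝ) e) :=
  h.comp (continuous_id.prodMk continuous_const).continuousOn (fun y hy => ⟨hy, ht⟩)

/-- one-sided FTC-1 on `[0,e]`. -/
lemma primitive_hasDerivWithinAt {e : ℝ} (he : 0 < e) {g : ℝ → ℂ}
    (hg : ContinuousOn g (Icc (0:ℝ) e)) {t : ℝ} (ht : t ∈ Icc (0:ℝ) e) :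
    HasDerivWithinAt (fun u => ∫ s in (0:ℝ)..u, g s) (g t) (Icc (0:ℝ) e) t := by
  have hInt : IntervalIntegrable g volume 0 t :=
    (hg.mono (Icc_subset_Icc le_rfl ht.2)).intervalIntegrable_of_Icc ht.1
  have hmeasA : AEStronglyMeasurable g (volume.restrict (Icc (0:ℝ) e)) :=
    hg.aestronglyMeasurable measurableSet_Icc
  have hright : t < e → HasDerivWithinAt (fun u => ∫ s in (0:ℝ)..u, g s) (g t) (Ici t) t := by
    intro hte
    have hmem : Icc (0:ℝ) e ∈ nhdsWithin t (Ioi t) :=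
      mem_nhdsWithin.mpr ⟨Iio e, isOpen_Iio, hte,
        fun u hu => ⟨le_of_lt (lt_of_le_of_lt ht.1 hu.2), le_of_lt hu.1⟩⟩
    exact integral_hasDerivWithinAt_right hInt
      ⟨Icc (0:ℝ) e, hmem, hmeasA⟩ ((hg t ht).mono_of_mem_nhdsWithin hmem)
  have hleft : 0 < t → HasDerivWithinAt (fun u => ∫ s in (0:ℝ)..u, g s) (g t) (Iic t) t := by
    intro hte
    have hmem : Icc (0:ℝ) e ∈ nhdsWithin t (Iic t) :=
      mem_nhdsWithin.mpr ⟨Ioi 0, isOpen_Ioi, hte,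
        fun u hu => ⟨le_of_lt hu.1, le_trans hu.2 ht.2⟩⟩
    exact integral_hasDerivWithinAt_right hInt
      ⟨Icc (0:ℝ) e, hmem, hmeasA⟩ ((hg t ht).mono_of_mem_nhdsWithin hmem)
  rcases eq_or_lt_of_le ht.1 with h0 | h0
  · have hte : t < e := by rw [← h0]; exact he
    exact (hright hte).mono (fun u hu => by rw [← h0]; exact hu.1)
  · rcases eq_or_lt_of_le ht.2 with h1 | h1
    · exact (hleft h0).mono (fun u hu => by rw [h1]; exact hu.2)
    · exact ((hleft h0).union (hright h1)).mono (by rw [Iic_union_Ici]; exact subset_univ _)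


/-- FTC-2 on `[0,b] ⊆ [0,e]` from one-sided derivatives on `[0,e]`. -/
lemma ftc2 {e : ℝ} {F G : ℝ → ℂ}
    (hF : ∀ x ∈ Icc (0:ℝ) e, HasDerivWithinAt F (G x) (Icc (0:ℝ) e) x)
    (hGc : ContinuousOn G (Icc (0:ℝ) e)) {b : ℝ} (hb : b ∈ Icc (0:ℝ) e) :
    ∫ y in (0:ℝ)..b, G y = F b - F 0 := by
  refine integral_eq_sub_of_hasDeriv_right_of_le hb.1 ?_ ?_
    ((hGc.mono (Icc_subset_Icc le_rfl hb.2)).intervalIntegrable_of_Icc hb.1)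
  · exact fun x hx => ((hF x ⟨hx.1, hx.2.trans hb.2⟩).continuousWithinAt).mono
      (Icc_subset_Icc le_rfl hb.2)
  · intro x hx
    have hx' : x ∈ Icc (0:ℝ) e := ⟨le_of_lt hx.1, (le_of_lt hx.2).trans hb.2⟩
    have hnb : Icc (0:ℝ) e ∈ nhds x :=
      Icc_mem_nhds hx.1 (lt_of_lt_of_le hx.2 hb.2)
    exact (((hF x hx').hasDerivAt hnb).hasDerivWithinAt)

/-- Continuity of a parametric interval integral. -/
lemma cont_param_integral {e : ℝ} {G : ℝ → ℝ → ℂ}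
    (hG : ContinuousOn (fun p : ℝ × ℝ => G p.1 p.2) (Icc (0:ℝ) e ×ˢ Icc (0:ℝ) e))
    {T : ℝ} (hT : T ∈ Icc (0:ℝ) e) :
    ContinuousOn (fun y => ∫ s in (0:ℝ)..T, G y s) (Icc (0:ℝ) e) := by
  have hK : IsCompact (Icc (0:ℝ) e ×ˢ Icc (0:ℝ) e) := isCompact_Icc.prod isCompact_Icc
  have hUC := hK.uniformContinuousOn_of_continuous hG
  rw [Metric.uniformContinuousOn_iff] at hUC
  intro y₀ hy₀
  rw [Metric.continuousWithinAt_iff]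
  intro εp hεp
  have hεp' : 0 < εp / (e + 1) := by
    apply div_pos hεp; have := hT.1.trans hT.2; linarith
  obtain ⟨δ, hδ, hδ'⟩ := hUC _ hεp'
  refine ⟨δ, hδ, fun y hy hyd => ?_⟩
  have hIy : IntervalIntegrable (fun s => G y s) volume 0 T :=
    ((sliceT hG hy).mono (Icc_subset_Icc le_rfl hT.2)).intervalIntegrable_of_Icc hT.1
  have hIy₀ : IntervalIntegrable (fun s => G y₀ s) volume 0 T :=
    ((sliceT hG hy₀).mono (Icc_subset_Icc le_rfl hT.2)).intervalIntegrable_of_Icc hT.1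
  rw [dist_eq_norm, ← integral_sub hIy hIy₀]
  have hbound : ∀ s ∈ Set.uIoc (0:ℝ) T, ‖G y s - G y₀ s‖ ≤ εp / (e + 1) := by
    intro s hs
    rw [Set.uIoc_of_le hT.1] at hs
    have hs' : s ∈ Icc (0:ℝ) e := ⟨le_of_lt hs.1, hs.2.trans hT.2⟩
    have := hδ' (y, s) ⟨hy, hs'⟩ (y₀, s) ⟨hy₀, hs'⟩ (by
      rw [Prod.dist_eq]; simp only [dist_self]
      exact max_lt hyd hδ)
    rw [dist_eq_norm] at this
    exact le_of_lt this
  calc ‖∫ s in (0:ℝ)..T, (G y s - G y₀ s)‖ ≤ εp / (e + 1) * |T - 0| :=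
        intervalIntegral.norm_integral_le_of_norm_le_const hbound
    _ < εp := by
        rw [sub_zero, abs_of_nonneg hT.1]
        have h1 : T < e + 1 := by linarith [hT.2]
        calc εp / (e + 1) * T < εp / (e + 1) * (e + 1) := by
              apply mul_lt_mul_of_pos_left h1 hεp'
          _ = εp := by
              have hne : e + 1 ≠ 0 := by
                have := hT.1.trans hT.2; intro hc; linarith
              rw [div_mul_cancel₀ _ hne]


lemma fubini_sq {e : ℝ} {G : ℝ → ℝ → ℂ}
    (hG : ContinuousOn (fun p : ℝ × ℝ => G p.1 p.2) (Icc (0:ℝ) e ×ˢ Icc (0:ℝ) e))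
    {X T : ℝ} (hX : X ∈ Icc (0:ℝ) e) (hT : T ∈ Icc (0:ℝ) e) :
    ∫ s in (0:ℝ)..T, (∫ y in (0:ℝ)..X, G y s) = ∫ y in (0:ℝ)..X, (∫ s in (0:ℝ)..T, G y s) := by
  have hInt : Integrable (Function.uncurry fun s y => G y s)
      ((volume.restrict (Ioc (0:ℝ) T)).prod (volume.restrict (Ioc (0:ℝ) X))) := by
    rw [Measure.prod_restrict, ← Measure.volume_eq_prod]
    have hK : IsCompact (Icc (0:ℝ) T ×ˢ Icc (0:ℝ) X) := isCompact_Icc.prod isCompact_Icc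
    have hc : ContinuousOn (Function.uncurry fun s y => G y s) (Icc (0:ℝ) T ×ˢ Icc (0:ℝ) X) := by
      refine hG.comp continuous_swap.continuousOn ?_
      intro p hp
      exact ⟨⟨hp.2.1, hp.2.2.trans hX.2⟩, ⟨hp.1.1, hp.1.2.trans hT.2⟩⟩
    exact (hc.integrableOn_compact hK).mono_set
      (prod_mono Ioc_subset_Icc_self Ioc_subset_Icc_self)
  have hsw := MeasureTheory.integral_integral_swap hInt
  simp only [intervalIntegral.integral_of_le hX.1, intervalIntegral.integral_of_le hT.1]
  exact hsw

/-- Equality of mixed partials (Schwarz), one-sided on the square `[0,e]²`. -/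
lemma schwarz {e : ℝ} (he : 0 < e) {F Ft G Gt : ℝ → ℝ → ℂ}
    (hFx : ∀ x ∈ Icc (0:ℝ) e, ∀ t ∈ Icc (0:ℝ) e,
      HasDerivWithinAt (fun y => F y t) (G x t) (Icc (0:ℝ) e) x)
    (hFt : ∀ x ∈ Icc (0:ℝ) e, ∀ t ∈ Icc (0:ℝ) e,
      HasDerivWithinAt (fun s => F x s) (Ft x t) (Icc (0:ℝ) e) t)
    (hFtx : ∀ x ∈ Icc (0:ℝ) e, ∀ t ∈ Icc (0:ℝ) e,
      HasDerivWithinAt (fun y => Ft y t) (Gt x t) (Icc (0:ℝ) e) x)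
    (hFtc : ContinuousOn (fun p : ℝ × ℝ => Ft p.1 p.2) (Icc (0:ℝ) e ×ˢ Icc (0:ℝ) e))
    (hGtc : ContinuousOn (fun p : ℝ × ℝ => Gt p.1 p.2) (Icc (0:ℝ) e ×ˢ Icc (0:ℝ) e)) :
    ∀ x ∈ Icc (0:ℝ) e, ∀ t ∈ Icc (0:ℝ) e,
      HasDerivWithinAt (fun s => G x s) (Gt x t) (Icc (0:ℝ) e) t := by
  have h0e : (0:ℝ) ∈ Icc (0:ℝ) e := ⟨le_rfl, le_of_lt he⟩
  have key : ∀ x ∈ Icc (0:ℝ) e, ∀ T ∈ Icc (0:ℝ) e,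
      G x T = G x 0 + ∫ s in (0:ℝ)..T, Gt x s := by
    intro x hx T hT
    set Φ : ℝ → ℂ := fun y => ∫ s in (0:ℝ)..T, Gt y s with hΦdef
    have hΦc : ContinuousOn Φ (Icc (0:ℝ) e) := cont_param_integral hGtc hT
    have hA3 : ∀ X ∈ Icc (0:ℝ) e,
        (∫ y in (0:ℝ)..X, Φ y) = (F X T - F X 0) - (F 0 T - F 0 0) := by
      intro X hX
      have hft : ∀ s ∈ Icc (0:ℝ) e, (∫ y in (0:ℝ)..X, Gt y s) = Ft X s - Ft 0 s := fun s hs =>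
        ftc2 (F := fun y => Ft y s) (G := fun y => Gt y s)
          (fun y hy => hFtx y hy s hs) (sliceX hGtc hs) hX
      have h1 : (∫ y in (0:ℝ)..X, Φ y) = ∫ s in (0:ℝ)..T, (∫ y in (0:ℝ)..X, Gt y s) :=
        (fubini_sq hGtc hX hT).symm
      have h2 : (∫ s in (0:ℝ)..T, (∫ y in (0:ℝ)..X, Gt y s))
          = ∫ s in (0:ℝ)..T, (Ft X s - Ft 0 s) :=
        intervalIntegral.integral_congr (fun s hs => hft s (by
          rw [Set.uIcc_of_le hT.1] at hs; exact ⟨hs.1, hs.2.trans hT.2⟩))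
      have hIX : IntervalIntegrable (fun s => Ft X s) volume 0 T :=
        ((sliceT hFtc hX).mono (Icc_subset_Icc le_rfl hT.2)).intervalIntegrable_of_Icc hT.1
      have hI0 : IntervalIntegrable (fun s => Ft 0 s) volume 0 T :=
        ((sliceT hFtc h0e).mono (Icc_subset_Icc le_rfl hT.2)).intervalIntegrable_of_Icc hT.1
      rw [h1, h2, intervalIntegral.integral_sub hIX hI0,
        ftc2 (F := fun s => F X s) (G := fun s => Ft X s) (fun t' ht' => hFt X hX t' ht')
          (sliceT hFtc hX) hT,
        ftc2 (F := fun s => F 0 s) (G := fun s => Ft 0 s) (fun t' ht' => hFt 0 h0e t' ht')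
          (sliceT hFtc h0e) hT]
    have hprim : HasDerivWithinAt (fun X => ∫ y in (0:ℝ)..X, Φ y) (Φ x) (Icc (0:ℝ) e) x :=
      primitive_hasDerivWithinAt he hΦc hx
    have hder2 : HasDerivWithinAt (fun X => (F X T - F X 0) - (F 0 T - F 0 0))
        (G x T - G x 0) (Icc (0:ℝ) e) x := by
      simpa using ((hFx x hx T hT).sub (hFx x hx 0 h0e)).sub_const (F 0 T - F 0 0)
    have hder2' : HasDerivWithinAt (fun X => ∫ y in (0:ℝ)..X, Φ y)
        (G x T - G x 0) (Icc (0:ℝ) e) x :=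
      hder2.congr (fun y hy => hA3 y hy) (hA3 x hx)
    have hu := (uniqueDiffOn_Icc he) x hx
    have heq : G x T - G x 0 = Φ x := by
      rw [← hder2'.derivWithin hu, hprim.derivWithin hu]
    have : G x T = G x 0 + Φ x := by rw [← heq]; ring
    exact this
  intro x hx t ht
  have hstep : HasDerivWithinAt (fun u => G x 0 + ∫ s in (0:ℝ)..u, Gt x s)
      (Gt x t) (Icc (0:ℝ) e) t :=
    (primitive_hasDerivWithinAt he (sliceT hGtc hx) ht).const_add _
  exact hstep.congr (fun s hs => key x hx s hs) (key x hx t ht)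


section ptalg
variable {p q' r : ℕ} {e : ℝ} {f ft : Fn p q'} {g gt : Fn q' r} {u ut : Fn p q'} {c : ℂ}

lemma PT_conj (h : PT e f ft) :
    PT e (fun x t => (f x t)ᴴ) (fun x t => (ft x t)ᴴ) := by
  intro x hx t ht i j
  simpa only [conjTranspose_apply] using (h x hx t ht j i).star

lemma PT_smul (h : PT e f ft) :
    PT e (fun x t => c • f x t) (fun x t => c • ft x t) := by
  intro x hx t ht i j
  simpa only [Matrix.smul_apply, smul_eq_mul] using (h x hx t ht i j).const_mul c

lemma PT_add (h : PT e f ft) (h' : PT e u ut) :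
    PT e (fun x t => f x t + u x t) (fun x t => ft x t + ut x t) := by
  intro x hx t ht i j
  exact (h x hx t ht i j).add (h' x hx t ht i j)

lemma PT_sub (h : PT e f ft) (h' : PT e u ut) :
    PT e (fun x t => f x t - u x t) (fun x t => ft x t - ut x t) := by
  intro x hx t ht i j
  exact (h x hx t ht i j).sub (h' x hx t ht i j)

lemma PT_mul (h : PT e f ft) (h' : PT e g gt) :
    PT e (fun x t => f x t * g x t) (fun x t => ft x t * g x t + f x t * gt x t) := by
  intro x hx t ht i j
  simp only [Matrix.add_apply, Matrix.mul_apply, ← Finset.sum_add_distrib]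
  exact HasDerivWithinAt.fun_sum fun k _ => ((h x hx t ht i k).mul (h' x hx t ht k j))

end ptalg

/-- matrix version of the Schwarz lemma. -/
lemma schwarzM {p r : ℕ} {e : ℝ} (he : 0 < e) {F Ft G Gt : Fn p r}
    (hFx : PX e F G) (hFt : PT e F Ft) (hFtx : PX e Ft Gt)
    (hFtc : ContSq e Ft) (hGtc : ContSq e Gt) : PT e G Gt := by
  intro x hx t ht i j
  exact schwarz he (F := fun x t => F x t i j) (Ft := fun x t => Ft x t i j)
    (G := fun x t => G x t i j) (Gt := fun x t => Gt x t i j)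
    (fun x hx t ht => hFx x hx t ht i j) (fun x hx t ht => hFt x hx t ht i j)
    (fun x hx t ht => hFtx x hx t ht i j) (hFtc i j) (hGtc i j) x hx t ht

section td
variable {ε : ℕ → ℝ}

/-- `f` is regular and `ft` is its continuous `t`-derivative, itself regular. -/
def TD (ε : ℕ → ℝ) {p r : ℕ} (q : ℕ) (f ft : Fn p r) : Prop :=
  Reg ε q f ∧ Reg ε (q+2) ft ∧ ∀ e', 0 < e' → e' ≤ ε (q+2) → PT e' f ft

open Classical in
/-- canonical choice of `x`-derivative. -/
noncomputable def DxF (ε : ℕ → ℝ) (hpos : ∀ k, 0 < ε k) (hanti : Antitone ε) {p r : ℕ}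
    (q : ℕ) (f : Fn p r) : Fn p r :=
  if h : Reg ε q f then Classical.choose (Reg_dx hpos hanti h) else f

lemma DxF_reg (hpos : ∀ k, 0 < ε k) (hanti : Antitone ε) {p r : ℕ} {q : ℕ} {f : Fn p r} (h : Reg ε q f) :
    Reg ε (q+1) (DxF ε hpos hanti q f) := by
  rw [DxF]; rw [dif_pos h]; exact (Classical.choose_spec (Reg_dx hpos hanti h)).1

lemma DxF_px (hpos : ∀ k, 0 < ε k) (hanti : Antitone ε) {p r : ℕ} {q : ℕ} {f : Fn p r} (h : Reg ε q f) {e' : ℝ} (he' : e' ≤ ε (q+1)) :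
    PX e' f (DxF ε hpos hanti q f) := by
  rw [DxF]; rw [dif_pos h]; exact (Classical.choose_spec (Reg_dx hpos hanti h)).2 e' he'

variable {p q' r : ℕ}

lemma TD_conj {q : ℕ} {f ft : Fn p r} (h : TD ε q f ft) :
    TD ε q (fun x t => (f x t)ᴴ) (fun x t => (ft x t)ᴴ) :=
  ⟨Reg_conjT h.1, Reg_conjT h.2.1, fun e' h1 h2 => PT_conj (h.2.2 e' h1 h2)⟩

lemma TD_smul {q : ℕ} {c : ℂ} {f ft : Fn p r} (h : TD ε q f ft) :
    TD ε q (fun x t => c • f x t) (fun x t => c • ft x t) :=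
  ⟨Reg_smul h.1, Reg_smul h.2.1, fun e' h1 h2 => PT_smul (h.2.2 e' h1 h2)⟩

lemma TD_add {q : ℕ} {f ft u ut : Fn p r} (h : TD ε q f ft) (h' : TD ε q u ut) :
    TD ε q (fun x t => f x t + u x t) (fun x t => ft x t + ut x t) :=
  ⟨Reg_add h.1 h'.1, Reg_add h.2.1 h'.2.1,
    fun e' h1 h2 => PT_add (h.2.2 e' h1 h2) (h'.2.2 e' h1 h2)⟩

lemma TD_sub {q : ℕ} {f ft u ut : Fn p r} (h : TD ε q f ft) (h' : TD ε q u ut) :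
    TD ε q (fun x t => f x t - u x t) (fun x t => ft x t - ut x t) :=
  ⟨Reg_sub h.1 h'.1, Reg_sub h.2.1 h'.2.1,
    fun e' h1 h2 => PT_sub (h.2.2 e' h1 h2) (h'.2.2 e' h1 h2)⟩

lemma TD_mul (hanti : Antitone ε) {q : ℕ} {f ft : Fn p q'} {g gt : Fn q' r} (h : TD ε q f ft) (h' : TD ε q g gt) :
    TD ε q (fun x t => f x t * g x t) (fun x t => ft x t * g x t + f x t * gt x t) :=
  ⟨Reg_mul h.1 h'.1,
    Reg_add (Reg_mul h.2.1 (Reg_mono_le hanti (by omega) h'.1))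
      (Reg_mul (Reg_mono_le hanti (by omega) h.1) h'.2.1),
    fun e' h1 h2 => PT_mul (h.2.2 e' h1 h2) (h'.2.2 e' h1 h2)⟩

lemma TD_mono (hanti : Antitone ε) {q : ℕ} {f ft : Fn p r} (h : TD ε q f ft) : TD ε (q+1) f ft :=
  ⟨Reg_mono hanti h.1, Reg_mono hanti h.2.1,
    fun e' h1 h2 => h.2.2 e' h1 (h2.trans (hanti (by omega)))⟩

lemma TD_congr (hanti : Antitone ε) {q : ℕ} {f ft g gt : Fn p r} (h : TD ε q f ft)
    (hf : ∀ x ∈ Icc (0:ℝ) (ε q), ∀ t ∈ Icc (0:ℝ) (ε q), f x t = g x t)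
    (hft : ∀ x ∈ Icc (0:ℝ) (ε (q+2)), ∀ t ∈ Icc (0:ℝ) (ε (q+2)), ft x t = gt x t) :
    TD ε q g gt := by
  refine ⟨Reg_congr hanti h.1 hf, ?_, ?_⟩
  · have : Reg ε (q+2) ft := h.2.1
    refine Reg_congr hanti this hft
  · intro e' h1 h2
    refine PT_congr (h.2.2 e' h1 h2)
      (fun x hx t ht => hf x ⟨hx.1, hx.2.trans (h2.trans (hanti (by omega)))⟩
        t ⟨ht.1, ht.2.trans (h2.trans (hanti (by omega)))⟩)
      (fun x hx t ht => hft x ⟨hx.1, hx.2.trans h2⟩ t ⟨ht.1, ht.2.trans h2⟩)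

lemma TD_dx (hpos : ∀ k, 0 < ε k) (hanti : Antitone ε) {q : ℕ} {f ft : Fn p r} (h : TD ε q f ft) :
    TD ε (q+1) (DxF ε hpos hanti q f) (DxF ε hpos hanti (q+2) ft) := by
  refine ⟨DxF_reg hpos hanti h.1, DxF_reg hpos hanti h.2.1, ?_⟩
  intro e' h1 h2
  have hle3 : e' ≤ ε (q+3) := h2
  refine schwarzM h1 (F := f) (Ft := ft)
    (DxF_px hpos hanti h.1 (hle3.trans (hanti (by omega))))
    (h.2.2 e' h1 (hle3.trans (hanti (by omega))))
    (DxF_px hpos hanti h.2.1 hle3)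
    (ContSq_mono (Reg_contSq h.2.1) (hle3.trans (hanti (by omega))))
    (ContSq_mono (Reg_contSq (DxF_reg hpos hanti h.2.1)) hle3)

end td

section nice
variable {m₁ m₂ : ℕ} (v vt : Fn m₁ m₂) (ε : ℕ → ℝ) (hpos : ∀ k, 0 < ε k) (hanti : Antitone ε)

/-- syntactic closure of the pair `(v, vt)` under the operations preserving
`t`-differentiability. -/
inductive Nice : ℕ → ∀ {p r : ℕ}, Fn p r → Fn p r → Prop
  | base : Nice 0 v vt
  | conjT {q p r : ℕ} {f ft : Fn p r} : Nice q f ft →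
      Nice q (fun x t => (f x t)ᴴ) (fun x t => (ft x t)ᴴ)
  | mul {q p u r : ℕ} {f ft : Fn p u} {g gt : Fn u r} : Nice q f ft → Nice q g gt →
      Nice q (fun x t => f x t * g x t) (fun x t => ft x t * g x t + f x t * gt x t)
  | smul {q p r : ℕ} (c : ℂ) {f ft : Fn p r} : Nice q f ft →
      Nice q (fun x t => c • f x t) (fun x t => c • ft x t)
  | add {q p r : ℕ} {f ft g gt : Fn p r} : Nice q f ft → Nice q g gt →
      Nice q (fun x t => f x t + g x t) (fun x t => ft x t + gt x t)
  | sub {q p r : ℕ} {f ft g gt : Fn p r} : Nice q f ft → Nice q g gt →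
      Nice q (fun x t => f x t - g x t) (fun x t => ft x t - gt x t)
  | dx {q p r : ℕ} {f ft : Fn p r} : Nice q f ft →
      Nice (q+1) (DxF ε hpos hanti q f) (DxF ε hpos hanti (q+2) ft)
  | mono {q p r : ℕ} {f ft : Fn p r} : Nice q f ft → Nice (q+1) f ft
  | congr {q p r : ℕ} {f ft g gt : Fn p r} : Nice q f ft →
      (∀ x ∈ Icc (0:ℝ) (ε q), ∀ t ∈ Icc (0:ℝ) (ε q), f x t = g x t) →
      (∀ x ∈ Icc (0:ℝ) (ε (q+2)), ∀ t ∈ Icc (0:ℝ) (ε (q+2)), ft x t = gt x t) →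
      Nice q g gt

variable {v vt ε}

lemma nice_sound (hbase : TD ε 0 v vt) {q p r : ℕ} {f ft : Fn p r}
    (h : Nice v vt ε hpos hanti q f ft) : TD ε q f ft := by
  induction h with
  | base => exact hbase
  | conjT _ ih => exact TD_conj ih
  | mul _ _ ih ih' => exact TD_mul hanti ih ih'
  | smul c _ ih => exact TD_smul ih
  | add _ _ ih ih' => exact TD_add ih ih'
  | sub _ _ ih ih' => exact TD_sub ih ih'
  | dx _ ih => exact TD_dx hpos hanti ih
  | mono _ ih => exact TD_mono hanti ih
  | congr _ hf hft ih => exact TD_congr hanti ih hf hft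

lemma nice_prop (hbase2 : ∃ f2, Nice v vt ε hpos hanti 2 vt f2)
    {q p r : ℕ} {f ft : Fn p r} (h : Nice v vt ε hpos hanti q f ft) :
    ∃ ftt : Fn p r, Nice v vt ε hpos hanti (q+2) ft ftt := by
  induction h with
  | base => exact hbase2
  | conjT _ ih => obtain ⟨u, hu⟩ := ih; exact ⟨_, Nice.conjT hu⟩
  | @mul q p u' r f ft g gt h1 h2 ih ih' =>
    obtain ⟨u1, hu1⟩ := ih
    obtain ⟨u2, hu2⟩ := ih'
    exact ⟨_, Nice.add (Nice.mul hu1 (Nice.mono (Nice.mono h2)))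
      (Nice.mul (Nice.mono (Nice.mono h1)) hu2)⟩
  | smul c _ ih => obtain ⟨u, hu⟩ := ih; exact ⟨_, Nice.smul c hu⟩
  | add _ _ ih ih' =>
    obtain ⟨u1, hu1⟩ := ih; obtain ⟨u2, hu2⟩ := ih'
    exact ⟨_, Nice.add hu1 hu2⟩
  | sub _ _ ih ih' =>
    obtain ⟨u1, hu1⟩ := ih; obtain ⟨u2, hu2⟩ := ih'
    exact ⟨_, Nice.sub hu1 hu2⟩
  | dx _ ih => obtain ⟨u, hu⟩ := ih; exact ⟨_, Nice.dx hu⟩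
  | mono _ ih => obtain ⟨u, hu⟩ := ih; exact ⟨_, Nice.mono hu⟩
  | congr _ hf hft ih =>
    obtain ⟨u, hu⟩ := ih
    exact ⟨u, Nice.congr hu hft (fun x _ t _ => rfl)⟩

end nice

end DNLSAux
end DNLSAuxSec

/-- Proposition 3.1, regularity part.  For `v ∈ C_ε(𝒟)` satisfying the
defocusing NLS on `𝒟`, for each `r` there is a chain `vT` of `t`-derivatives of `v` such
that for all `k ≤ r`: `∂_t^{k+1}v`, `(∂_t^{k+1}v)_x`, `(∂_t^{k+1}v)_{xx}` exist and are
continuous on `𝒟(ε_{4(r+1)})`; `(∂_t^k v)_{xt} = (∂_t^k v)_{tx}` and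
`(∂_t^k v)_{xxt} = (∂_t^k v)_{txx}` (both sides continuous) hold there; and for all
`s` and `ℓ ≤ s` the derivative `∂_x^ℓ ∂_t^{k+1} v` exists and is continuous on
`𝒟(ε_{s+4(r+1)})`. -/
theorem dnls_t_derivatives_regularity {m₁ m₂ : ℕ} (a : ℝ) (ha : 0 < a)
    (v vx vt vxx : ℝ → ℝ → Matrix (Fin m₁) (Fin m₂) ℂ) (ε : ℕ → ℝ)
    (hv : MemCEps a v vx vt vxx ε)
    (hNLS : SatisfiesDNLS a v vt vxx) :
    ∀ r : ℕ, ∃ vT : ℕ → ℝ → ℝ → Matrix (Fin m₁) (Fin m₂) ℂ, vT 0 = v ∧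
      ∀ k ≤ r,
        -- ∂_t^{k+1} v exists and is continuous on 𝒟(ε_{4(r+1)})
        (PT (ε (4*(r+1))) (vT k) (vT (k+1)) ∧ ContSq (ε (4*(r+1))) (vT (k+1))) ∧
        (∃ g₁ g₂ h₁ h₂ : ℝ → ℝ → Matrix (Fin m₁) (Fin m₂) ℂ,
          -- (∂_t^{k+1} v)_x and (∂_t^{k+1} v)_{xx} exist and are continuous there
          PX (ε (4*(r+1))) (vT (k+1)) g₁ ∧ PX (ε (4*(r+1))) g₁ g₂ ∧
          ContSq (ε (4*(r+1))) g₁ ∧ ContSq (ε (4*(r+1))) g₂ ∧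
          -- (∂_t^k v)_x =: h₁ and (∂_t^k v)_{xt} exists and equals (∂_t^k v)_{tx} = g₁
          PX (ε (4*(r+1))) (vT k) h₁ ∧ ContSq (ε (4*(r+1))) h₁ ∧
          PT (ε (4*(r+1))) h₁ g₁ ∧
          -- (∂_t^k v)_{xx} =: h₂ and (∂_t^k v)_{xxt} exists and equals (∂_t^k v)_{txx} = g₂
          PX (ε (4*(r+1))) h₁ h₂ ∧ ContSq (ε (4*(r+1))) h₂ ∧
          PT (ε (4*(r+1))) h₂ g₂) ∧
        -- ∂_x^ℓ ∂_t^{k+1} v exists and is continuous on 𝒟(ε_{s+4(r+1)}) for ℓ ≤ s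
        (∀ s : ℕ, ∃ W : ℕ → ℝ → ℝ → Matrix (Fin m₁) (Fin m₂) ℂ,
          W 0 = vT (k+1) ∧ (∀ l < s, PX (ε (s + 4*(r+1))) (W l) (W (l+1))) ∧
          (∀ l ≤ s, ContSq (ε (s + 4*(r+1))) (W l))) := by
  intro r
  classical
  obtain ⟨hdx, hdt, hcont, hcontx, hcontt, hdxx, hpos, hanti, hlt, hsm⟩ := hv
  -- basic regularity of v
  have Reg0 : DNLSAux.Reg ε 0 v := fun s => by
    obtain ⟨w, h0, h1, h2⟩ := hsm s
    exact ⟨w, h0, h1, h2⟩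
  have Reg2v : DNLSAux.Reg ε 2 v := DNLSAux.Reg_mono_le hanti (by omega) Reg0
  -- vx, vxx on squares
  have hPXv : ∀ e', e' < a → PX e' v vx := by
    intro e' hlt' x hx t ht i j
    exact (hdx x hx.1 t ⟨ht.1, lt_of_le_of_lt ht.2 hlt'⟩ i j).mono (fun u hu => hu.1)
  have hPXvx : ∀ e', e' < a → PX e' vx vxx := by
    intro e' hlt' x hx t ht i j
    exact (hdxx x hx.1 t ⟨ht.1, lt_of_le_of_lt ht.2 hlt'⟩ i j).mono (fun u hu => hu.1)
  set W1 : DNLSAux.Fn m₁ m₂ := DNLSAux.DxF ε hpos hanti 0 v with hW1def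
  have hW1 : DNLSAux.Reg ε 1 W1 := DNLSAux.DxF_reg hpos hanti Reg0
  set W2 : DNLSAux.Fn m₁ m₂ := DNLSAux.DxF ε hpos hanti 1 W1 with hW2def
  have hW2 : DNLSAux.Reg ε 2 W2 := DNLSAux.DxF_reg hpos hanti hW1
  have hvx_eq : ∀ x ∈ Icc (0:ℝ) (ε 1), ∀ t ∈ Icc (0:ℝ) (ε 1), vx x t = W1 x t :=
    DNLSAux.PX_unique (hpos 1) (hPXv (ε 1) (hlt 1))
      (DNLSAux.DxF_px hpos hanti Reg0 (le_refl (ε 1)))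
  have hvxx_eq : ∀ x ∈ Icc (0:ℝ) (ε 2), ∀ t ∈ Icc (0:ℝ) (ε 2), vxx x t = W2 x t := by
    have hPX2 : PX (ε 2) W1 W2 := DNLSAux.DxF_px hpos hanti hW1 (le_refl (ε 2))
    have hPX2' : PX (ε 2) vx W2 := DNLSAux.PX_congr hPX2 (fun x hx t ht =>
      (hvx_eq x ⟨hx.1, hx.2.trans (hanti (by omega))⟩ t
        ⟨ht.1, ht.2.trans (hanti (by omega))⟩).symm)
    exact DNLSAux.PX_unique (hpos 2) (hPXvx (ε 2) (hlt 2)) hPX2'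
  set c : ℂ := (2:ℂ)⁻¹ * Complex.I with hcdef
  set Nv : DNLSAux.Fn m₁ m₂ :=
    fun x t => c • (W2 x t - (2:ℂ) • (v x t * (v x t)ᴴ * v x t)) with hNvdef
  have hNveq : ∀ x ∈ Icc (0:ℝ) (ε 2), ∀ t ∈ Icc (0:ℝ) (ε 2), Nv x t = vt x t := by
    intro x hx t ht
    have heq := hNLS x hx.1 t ⟨ht.1, lt_of_le_of_lt ht.2 (hlt 2)⟩
    have hvt : vt x t = c • (vxx x t - (2:ℂ) • (v x t * (v x t)ᴴ * v x t)) := by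
      calc vt x t = (2:ℂ)⁻¹ • ((2:ℂ) • vt x t) := by rw [inv_smul_smul₀ two_ne_zero]
        _ = (2:ℂ)⁻¹ • (Complex.I • (vxx x t - (2:ℂ) • (v x t * (v x t)ᴴ * v x t))) := by
            rw [heq]
        _ = c • (vxx x t - (2:ℂ) • (v x t * (v x t)ᴴ * v x t)) := by
            rw [smul_smul, hcdef]
    rw [hvt, hNvdef, hvxx_eq x hx t ht]
  have RegNv : DNLSAux.Reg ε 2 Nv :=
    DNLSAux.Reg_smul (DNLSAux.Reg_sub hW2 (DNLSAux.Reg_smul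
      (DNLSAux.Reg_mul (DNLSAux.Reg_mul Reg2v (DNLSAux.Reg_conjT Reg2v)) Reg2v)))
  have RegVt : DNLSAux.Reg ε 2 vt := DNLSAux.Reg_congr hanti RegNv hNveq
  have hTD0 : DNLSAux.TD ε 0 v vt := by
    refine ⟨Reg0, RegVt, ?_⟩
    intro e' _he1 he2 x hx t ht i j
    have hea : e' < a := lt_of_le_of_lt he2 (hlt 2)
    exact (hdt x hx.1 t ⟨ht.1, lt_of_le_of_lt ht.2 hea⟩ i j).mono
      (fun u hu => ⟨hu.1, lt_of_le_of_lt hu.2 hea⟩)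
  have hbase2 : ∃ f2, DNLSAux.Nice v vt ε hpos hanti 2 vt f2 := by
    have n1 : DNLSAux.Nice v vt ε hpos hanti 0 v vt := DNLSAux.Nice.base
    have ncube := DNLSAux.Nice.mul (DNLSAux.Nice.mul n1 (DNLSAux.Nice.conjT n1)) n1
    have nW2 := DNLSAux.Nice.dx (DNLSAux.Nice.dx n1)
    have nNv := DNLSAux.Nice.smul c (DNLSAux.Nice.sub nW2
      (DNLSAux.Nice.smul (2:ℂ) (DNLSAux.Nice.mono (DNLSAux.Nice.mono ncube))))
    exact ⟨_, DNLSAux.Nice.congr nNv hNveq (fun _ _ _ _ => rfl)⟩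
  -- the chain of t-derivatives
  let T : (k : ℕ) → {p : DNLSAux.Fn m₁ m₂ × DNLSAux.Fn m₁ m₂ //
      DNLSAux.Nice v vt ε hpos hanti (2*k) p.1 p.2} := fun k =>
    Nat.rec (motive := fun k => {p : DNLSAux.Fn m₁ m₂ × DNLSAux.Fn m₁ m₂ //
        DNLSAux.Nice v vt ε hpos hanti (2*k) p.1 p.2})
      ⟨(v, vt), DNLSAux.Nice.base⟩
      (fun _n ih => ⟨(ih.1.2, Classical.choose (DNLSAux.nice_prop hpos hanti hbase2 ih.2)),
        Classical.choose_spec (DNLSAux.nice_prop hpos hanti hbase2 ih.2)⟩) k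
  have hTD : ∀ k, DNLSAux.TD ε (2*k) ((T k).1.1) ((T (k+1)).1.1) := fun k =>
    DNLSAux.nice_sound hpos hanti hTD0 ((T k).2)
  refine ⟨fun k => (T k).1.1, rfl, ?_⟩
  intro k hk
  have hTD1 := DNLSAux.TD_dx hpos hanti (hTD k)
  have hTD2 := DNLSAux.TD_dx hpos hanti hTD1
  have hle : ∀ {m n : ℕ}, m ≤ n → ε n ≤ ε m := fun h => hanti h
  refine ⟨⟨(hTD k).2.2 _ (hpos _) (hle (by omega)),
      DNLSAux.ContSq_mono (DNLSAux.Reg_contSq (hTD k).2.1) (hle (by omega))⟩,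
    ⟨DNLSAux.DxF ε hpos hanti (2*k+2) ((T (k+1)).1.1),
     DNLSAux.DxF ε hpos hanti (2*k+3) (DNLSAux.DxF ε hpos hanti (2*k+2) ((T (k+1)).1.1)),
     DNLSAux.DxF ε hpos hanti (2*k) ((T k).1.1),
     DNLSAux.DxF ε hpos hanti (2*k+1) (DNLSAux.DxF ε hpos hanti (2*k) ((T k).1.1)),
     DNLSAux.DxF_px hpos hanti (hTD k).2.1 (hle (by omega)),
     DNLSAux.DxF_px hpos hanti hTD1.2.1 (hle (by omega)),
     DNLSAux.ContSq_mono (DNLSAux.Reg_contSq hTD1.2.1) (hle (by omega)),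
     DNLSAux.ContSq_mono (DNLSAux.Reg_contSq hTD2.2.1) (hle (by omega)),
     DNLSAux.DxF_px hpos hanti (hTD k).1 (hle (by omega)),
     DNLSAux.ContSq_mono (DNLSAux.Reg_contSq hTD1.1) (hle (by omega)),
     hTD1.2.2 _ (hpos _) (hle (by omega)),
     DNLSAux.DxF_px hpos hanti hTD1.1 (hle (by omega)),
     DNLSAux.ContSq_mono (DNLSAux.Reg_contSq hTD2.1) (hle (by omega)),
     hTD2.2.2 _ (hpos _) (hle (by omega))⟩, ?_⟩
  intro s
  obtain ⟨w, h0, h1, h2⟩ := DNLSAux.Pn_mono ((hTD k).2.1 s)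
    (hle (show s + (2*k+2) ≤ s + 4*(r+1) by omega))
  exact ⟨w, h0, h1, h2⟩
end

section
/- Let v and ṽ be m₁×m₂ matrix functions in the class C_ε(𝒟) which both satisfy the defocusing NLS equation 2v_t = i(v_xx − 2 v v* v) on the semi-strip 𝒟 and have the same initial condition v(x,0) = ṽ(x,0) = 𝒱(x) for all x ≥ 0. Then for each integer r ≥ 0 and each k with 0 ≤ k ≤ r, the derivatives (∂^k v/∂t^k)(x,0) and (∂^k v_x/∂t^k)(x,0) coincide with (∂^k ṽ/∂t^k)(x,0) and (∂^k ṽ_x/∂t^k)(x,0), respectively, for all 0 ≤ x ≤ min(ε_{4r}(v), ε_{4r}(ṽ)); i.e., these derivatives are uniquely determined by the initial condition 𝒱. -/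
open Matrix Set

open Matrix Set

namespace DNLSProof
open MeasureTheory intervalIntegral Topology Filter
noncomputable section

lemma icc_deriv_unique {e : ℝ} (he : 0 < e) {f : ℝ → ℂ} {x : ℝ} {a b : ℂ}
    (hx : x ∈ Icc (0:ℝ) e)
    (ha : HasDerivWithinAt f a (Icc (0:ℝ) e) x)
    (hb : HasDerivWithinAt f b (Icc (0:ℝ) e) x) : a = b := by
  have h := uniqueDiffOn_Icc he x hx
  rw [← ha.derivWithin h, ← hb.derivWithin h]

lemma sliceT {e : ℝ} {f : ℝ → ℝ → ℂ}
    (hf : ContinuousOn (fun p : ℝ × ℝ => f p.1 p.2) (Icc (0:ℝ) e ×ˢ Icc (0:ℝ) e))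
    {x : ℝ} (hx : x ∈ Icc (0:ℝ) e) : ContinuousOn (fun u => f x u) (Icc (0:ℝ) e) :=
  hf.comp ((continuous_const.prodMk continuous_id).continuousOn) (fun u hu => ⟨hx, hu⟩)

lemma sliceX {e : ℝ} {f : ℝ → ℝ → ℂ}
    (hf : ContinuousOn (fun p : ℝ × ℝ => f p.1 p.2) (Icc (0:ℝ) e ×ˢ Icc (0:ℝ) e))
    {t : ℝ} (ht : t ∈ Icc (0:ℝ) e) : ContinuousOn (fun z => f z t) (Icc (0:ℝ) e) :=
  hf.comp ((continuous_id.prodMk continuous_const).continuousOn) (fun z hz => ⟨hz, ht⟩)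

lemma ftc2 {e : ℝ} {f f' : ℝ → ℂ} (hf : ContinuousOn f (Icc (0:ℝ) e))
    (hf' : ContinuousOn f' (Icc (0:ℝ) e))
    (hd : ∀ u ∈ Icc (0:ℝ) e, HasDerivWithinAt f (f' u) (Icc (0:ℝ) e) u)
    {s : ℝ} (hs : s ∈ Icc (0:ℝ) e) :
    ∫ u in (0:ℝ)..s, f' u = f s - f 0 := by
  refine intervalIntegral.integral_eq_sub_of_hasDeriv_right_of_le hs.1
    (hf.mono (Icc_subset_Icc le_rfl hs.2)) (fun u hu => ?_) ?_
  · 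
    have h1 : Icc (0:ℝ) e ∈ 𝓝[>] u :=
      Filter.mem_of_superset (Ioc_mem_nhdsGT (lt_of_lt_of_le hu.2 hs.2))
        (fun y hy => ⟨(hu.1.trans hy.1).le, hy.2⟩)
    exact (hd u ⟨hu.1.le, hu.2.le.trans hs.2⟩).mono_of_mem_nhdsWithin h1
  · apply ContinuousOn.intervalIntegrable
    rw [uIcc_of_le hs.1]
    exact hf'.mono (Icc_subset_Icc le_rfl hs.2)

lemma ftc1 {e : ℝ} {f : ℝ → ℂ} (hf : ContinuousOn f (Icc (0:ℝ) e))
    {t : ℝ} (ht : t ∈ Icc (0:ℝ) e) :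
    HasDerivWithinAt (fun s => ∫ u in (0:ℝ)..s, f u) (f t) (Icc (0:ℝ) e) t := by
  haveI : Fact (t ∈ Icc (0:ℝ) e) := ⟨ht⟩
  apply intervalIntegral.integral_hasDerivWithinAt_right
  · apply ContinuousOn.intervalIntegrable
    rw [uIcc_of_le ht.1]
    exact hf.mono (Icc_subset_Icc le_rfl ht.2)
  · exact hf.stronglyMeasurableAtFilter_nhdsWithin measurableSet_Icc t
  · exact hf.continuousWithinAt ht

lemma fubini {e : ℝ} {h : ℝ → ℝ → ℂ}
    (hc : ContinuousOn (fun p : ℝ × ℝ => h p.1 p.2) (Icc (0:ℝ) e ×ˢ Icc (0:ℝ) e))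
    {x s : ℝ} (hx : x ∈ Icc (0:ℝ) e) (hs : s ∈ Icc (0:ℝ) e) :
    ∫ z in (0:ℝ)..x, (∫ u in (0:ℝ)..s, h z u) = ∫ u in (0:ℝ)..s, (∫ z in (0:ℝ)..x, h z u) := by
  have hint : IntegrableOn (fun p : ℝ × ℝ => h p.1 p.2) (Ioc (0:ℝ) x ×ˢ Ioc (0:ℝ) s) := by
    apply (hc.integrableOn_compact (isCompact_Icc.prod isCompact_Icc)).mono_set
    exact Set.prod_mono ((Ioc_subset_Icc_self).trans (Icc_subset_Icc le_rfl hx.2))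
      ((Ioc_subset_Icc_self).trans (Icc_subset_Icc le_rfl hs.2))
  rw [intervalIntegral.integral_of_le hx.1, intervalIntegral.integral_of_le hs.1]
  simp_rw [intervalIntegral.integral_of_le hs.1, intervalIntegral.integral_of_le hx.1]
  apply MeasureTheory.integral_integral_swap
  rw [Measure.prod_restrict]
  exact hint




lemma param_cont {e : ℝ} (he : 0 < e) {h : ℝ → ℝ → ℂ}
    (hc : ContinuousOn (fun p : ℝ × ℝ => h p.1 p.2) (Icc (0:ℝ) e ×ˢ Icc (0:ℝ) e))
    {s : ℝ} (hs : s ∈ Icc (0:ℝ) e) :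
    ContinuousOn (fun z => ∫ u in (0:ℝ)..s, h z u) (Icc (0:ℝ) e) := by
  have slice : ∀ z ∈ Icc (0:ℝ) e, ContinuousOn (fun u => h z u) (Icc (0:ℝ) e) := fun z hz =>
    hc.comp ((continuous_const.prodMk continuous_id).continuousOn) (fun u hu => ⟨hz, hu⟩)
  have hInt : ∀ z ∈ Icc (0:ℝ) e, IntervalIntegrable (fun u => h z u) volume 0 s := by
    intro z hz
    apply ContinuousOn.intervalIntegrable
    rw [uIcc_of_le hs.1]
    exact (slice z hz).mono (Icc_subset_Icc le_rfl hs.2)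
  have huc := (isCompact_Icc.prod isCompact_Icc).uniformContinuousOn_of_continuous hc
  rw [Metric.uniformContinuousOn_iff] at huc
  rw [Metric.continuousOn_iff]
  intro z hz ε hε
  have hε' : 0 < ε / (e + 1) := by positivity
  obtain ⟨δ, hδ, hδ'⟩ := huc (ε / (e + 1)) hε'
  refine ⟨δ, hδ, fun z' hz' hd => ?_⟩
  rw [dist_eq_norm, ← intervalIntegral.integral_sub (hInt z' hz') (hInt z hz)]
  have hb : ∀ u ∈ Set.uIoc (0:ℝ) s, ‖h z' u - h z u‖ ≤ ε / (e + 1) := by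
    intro u hu
    rw [uIoc_of_le hs.1] at hu
    have hu' : u ∈ Icc (0:ℝ) e := ⟨hu.1.le, hu.2.trans hs.2⟩
    have := hδ' (z', u) ⟨hz', hu'⟩ (z, u) ⟨hz, hu'⟩ (by
      rw [Prod.dist_eq]; simp [hd, hδ.le, max_lt hd hδ])
    rw [dist_eq_norm] at this
    exact this.le
  calc ‖∫ u in (0:ℝ)..s, (h z' u - h z u)‖ ≤ ε / (e + 1) * |s - 0| :=
        intervalIntegral.norm_integral_le_of_norm_le_const hb
    _ < ε := by
        rw [sub_zero, abs_of_nonneg hs.1]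
        calc ε / (e + 1) * s ≤ ε / (e + 1) * e := by
              apply mul_le_mul_of_nonneg_left hs.2 hε'.le
          _ < ε := by
              rw [div_mul_eq_mul_div, div_lt_iff₀ (by linarith)]
              nlinarith

lemma intInt {f : ℝ → ℂ} (hf : ContinuousOn f (Icc (0:ℝ) e)) {s : ℝ} (hs : s ∈ Icc (0:ℝ) e) :
    IntervalIntegrable f volume 0 s := by
  apply ContinuousOn.intervalIntegrable
  rw [uIcc_of_le hs.1]
  exact hf.mono (Icc_subset_Icc le_rfl hs.2)

lemma swap_scalar (he : 0 < e) {φ φ₁ h h₁ : ℝ → ℝ → ℂ}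
    (hφc : ContinuousOn (fun p : ℝ × ℝ => φ p.1 p.2) (Icc (0:ℝ) e ×ˢ Icc (0:ℝ) e))
    (hφ₁c : ContinuousOn (fun p : ℝ × ℝ => φ₁ p.1 p.2) (Icc (0:ℝ) e ×ˢ Icc (0:ℝ) e))
    (hhc : ContinuousOn (fun p : ℝ × ℝ => h p.1 p.2) (Icc (0:ℝ) e ×ˢ Icc (0:ℝ) e))
    (hh₁c : ContinuousOn (fun p : ℝ × ℝ => h₁ p.1 p.2) (Icc (0:ℝ) e ×ˢ Icc (0:ℝ) e))
    (hφx : ∀ x ∈ Icc (0:ℝ) e, ∀ t ∈ Icc (0:ℝ) e,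
      HasDerivWithinAt (fun y => φ y t) (φ₁ x t) (Icc (0:ℝ) e) x)
    (hφt : ∀ x ∈ Icc (0:ℝ) e, ∀ t ∈ Icc (0:ℝ) e,
      HasDerivWithinAt (fun s => φ x s) (h x t) (Icc (0:ℝ) e) t)
    (hhx : ∀ x ∈ Icc (0:ℝ) e, ∀ t ∈ Icc (0:ℝ) e,
      HasDerivWithinAt (fun y => h y t) (h₁ x t) (Icc (0:ℝ) e) x)
    {x t : ℝ} (hx : x ∈ Icc (0:ℝ) e) (ht : t ∈ Icc (0:ℝ) e) :
    HasDerivWithinAt (fun s => φ₁ x s) (h₁ x t) (Icc (0:ℝ) e) t := by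
  have h0 : (0:ℝ) ∈ Icc (0:ℝ) e := ⟨le_rfl, he.le⟩
  have key : ∀ z ∈ Icc (0:ℝ) e, ∀ s ∈ Icc (0:ℝ) e,
      φ₁ z s = φ₁ z 0 + ∫ u in (0:ℝ)..s, h₁ z u := by
    intro z hz s hs
    have hGc : ContinuousOn (fun y => ∫ u in (0:ℝ)..s, h₁ y u) (Icc (0:ℝ) e) :=
      param_cont he hh₁c hs
    have hqc : ContinuousOn
        (fun y => φ₁ y s - φ₁ y 0 - ∫ u in (0:ℝ)..s, h₁ y u) (Icc (0:ℝ) e) :=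
      ((sliceX hφ₁c hs).sub (sliceX hφ₁c h0)).sub hGc
    have hint : ∀ X ∈ Icc (0:ℝ) e,
        (∫ y in (0:ℝ)..X, (φ₁ y s - φ₁ y 0 - ∫ u in (0:ℝ)..s, h₁ y u)) = 0 := by
      intro X hX
      have A1 : ∫ y in (0:ℝ)..X, φ₁ y s = φ X s - φ 0 s :=
        ftc2 (sliceX hφc hs) (sliceX hφ₁c hs) (fun u hu => hφx u hu s hs) hX
      have A2 : ∫ y in (0:ℝ)..X, φ₁ y 0 = φ X 0 - φ 0 0 :=
        ftc2 (sliceX hφc h0) (sliceX hφ₁c h0) (fun u hu => hφx u hu 0 h0) hX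
      have A3 : (∫ y in (0:ℝ)..X, ∫ u in (0:ℝ)..s, h₁ y u)
          = (φ X s - φ X 0) - (φ 0 s - φ 0 0) := by
        rw [fubini hh₁c hX hs]
        have inner : ∀ u ∈ Icc (0:ℝ) e,
            (∫ y in (0:ℝ)..X, h₁ y u) = h X u - h 0 u := fun u hu =>
          ftc2 (sliceX hhc hu) (sliceX hh₁c hu) (fun y hy => hhx y hy u hu) hX
        have : (∫ u in (0:ℝ)..s, ∫ y in (0:ℝ)..X, h₁ y u)
            = ∫ u in (0:ℝ)..s, (h X u - h 0 u) := by
          apply intervalIntegral.integral_congr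
          intro u hu
          rw [uIcc_of_le hs.1] at hu
          exact inner u ⟨hu.1, hu.2.trans hs.2⟩
        rw [this, intervalIntegral.integral_sub (intInt (sliceT hhc hX) hs)
          (intInt (sliceT hhc h0) hs),
          ftc2 (sliceT hφc hX) (sliceT hhc hX) (fun u hu => hφt X hX u hu) hs,
          ftc2 (sliceT hφc h0) (sliceT hhc h0) (fun u hu => hφt 0 h0 u hu) hs]
      rw [intervalIntegral.integral_sub (((intInt (sliceX hφ₁c hs) hX).sub
          (intInt (sliceX hφ₁c h0) hX))) (intInt hGc hX),
        intervalIntegral.integral_sub (intInt (sliceX hφ₁c hs) hX)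
          (intInt (sliceX hφ₁c h0) hX), A1, A2, A3]
      ring
    have hq0 : φ₁ z s - φ₁ z 0 - (∫ u in (0:ℝ)..s, h₁ z u) = 0 := by
      have d1 := ftc1 hqc hz
      have d2 : HasDerivWithinAt
          (fun X => ∫ y in (0:ℝ)..X, (φ₁ y s - φ₁ y 0 - ∫ u in (0:ℝ)..s, h₁ y u))
          0 (Icc (0:ℝ) e) z := by
        apply (hasDerivWithinAt_const z (Icc (0:ℝ) e) (0:ℂ)).congr
        · intro y hy; exact hint y hy
        · exact hint z hz
      exact icc_deriv_unique he hz d1 d2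
    linear_combination hq0
  have base : HasDerivWithinAt (fun s => φ₁ x 0 + ∫ u in (0:ℝ)..s, h₁ x u)
      (h₁ x t) (Icc (0:ℝ) e) t := (ftc1 (sliceT hh₁c hx) ht).const_add _
  exact base.congr (fun y hy => key x hx y hy) (key x hx t ht)

variable {m₁ m₂ m₃ : ℕ} {e : ℝ}

abbrev MF (m₁ m₂ : ℕ) := ℝ → ℝ → Matrix (Fin m₁) (Fin m₂) ℂ

def EqS (e : ℝ) (F G : MF m₁ m₂) : Prop :=
  ∀ x ∈ Icc (0:ℝ) e, ∀ t ∈ Icc (0:ℝ) e, F x t = G x t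

def Eq0 (e : ℝ) (F G : MF m₁ m₂) : Prop :=
  ∀ x ∈ Icc (0:ℝ) e, F x 0 = G x 0

lemma EqS.symm {F G : MF m₁ m₂} (h : EqS e F G) : EqS e G F :=
  fun x hx t ht => (h x hx t ht).symm

lemma EqS.eq0 {F G : MF m₁ m₂} (he : 0 < e) (h : EqS e F G) : Eq0 e F G :=
  fun x hx => h x hx 0 ⟨le_rfl, he.le⟩

def fAdd (F G : MF m₁ m₂) : MF m₁ m₂ := fun x t => F x t + G x t
def fSub (F G : MF m₁ m₂) : MF m₁ m₂ := fun x t => F x t - G x t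
def fMul (F : MF m₁ m₂) (G : MF m₂ m₃) : MF m₁ m₃ := fun x t => F x t * G x t
def fSMul (c : ℂ) (F : MF m₁ m₂) : MF m₁ m₂ := fun x t => c • F x t
def fH (F : MF m₁ m₂) : MF m₂ m₁ := fun x t => (F x t)ᴴ
def fFlip (F : MF m₁ m₂) : MF m₁ m₂ := fun x t => F t x

-- congruence / uniqueness
lemma PX_congr {F F' G : MF m₁ m₂} (hE : EqS e F F') (h : PX e F G) : PX e F' G :=
  fun x hx t ht i j => (h x hx t ht i j).congr
    (fun y hy => by rw [hE y hy t ht]) (by rw [hE x hx t ht])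

lemma PT_congr {F F' G : MF m₁ m₂} (hE : EqS e F F') (h : PT e F G) : PT e F' G :=
  fun x hx t ht i j => (h x hx t ht i j).congr
    (fun s hs => by rw [hE x hx s hs]) (by rw [hE x hx t ht])

lemma PX_unique (he : 0 < e) {F G₁ G₂ : MF m₁ m₂} (h₁ : PX e F G₁) (h₂ : PX e F G₂) :
    EqS e G₁ G₂ := fun x hx t ht => Matrix.ext fun i j =>
  icc_deriv_unique he hx (h₁ x hx t ht i j) (h₂ x hx t ht i j)

lemma PT_unique (he : 0 < e) {F G₁ G₂ : MF m₁ m₂} (h₁ : PT e F G₁) (h₂ : PT e F G₂) :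
    EqS e G₁ G₂ := fun x hx t ht => Matrix.ext fun i j =>
  icc_deriv_unique he ht (h₁ x hx t ht i j) (h₂ x hx t ht i j)

lemma Eq0_of_PX (he : 0 < e) {F F' G G' : MF m₁ m₂} (hF : PX e F F') (hG : PX e G G')
    (h0 : Eq0 e F G) : Eq0 e F' G' := by
  intro x hx
  have h00 : (0:ℝ) ∈ Icc (0:ℝ) e := ⟨le_rfl, he.le⟩
  ext i j
  refine icc_deriv_unique he hx (hF x hx 0 h00 i j) ?_
  exact (hG x hx 0 h00 i j).congr (fun y hy => by rw [h0 y hy]) (by rw [h0 x hx])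

-- flip
lemma PT_flip {F G : MF m₁ m₂} : PT e F G ↔ PX e (fFlip F) (fFlip G) :=
  ⟨fun h x hx t ht i j => h t ht x hx i j, fun h x hx t ht i j => h t ht x hx i j⟩

-- operations: PX
lemma PX_add {F F' G G' : MF m₁ m₂} (hF : PX e F F') (hG : PX e G G') :
    PX e (fAdd F G) (fAdd F' G') := by
  intro x hx t ht i j
  simpa [fAdd, Matrix.add_apply] using (hF x hx t ht i j).fun_add (hG x hx t ht i j)

lemma PX_sub {F F' G G' : MF m₁ m₂} (hF : PX e F F') (hG : PX e G G') :
    PX e (fSub F G) (fSub F' G') := by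
  intro x hx t ht i j
  simpa [fSub, Matrix.sub_apply] using (hF x hx t ht i j).fun_sub (hG x hx t ht i j)

lemma PX_smul {F F' : MF m₁ m₂} (c : ℂ) (hF : PX e F F') :
    PX e (fSMul c F) (fSMul c F') := by
  intro x hx t ht i j
  simpa [fSMul, Matrix.smul_apply, smul_eq_mul] using (hF x hx t ht i j).const_mul c

lemma PX_H {F F' : MF m₁ m₂} (hF : PX e F F') : PX e (fH F) (fH F') := by
  intro x hx t ht i j
  simpa [fH, Matrix.conjTranspose_apply] using (hF x hx t ht j i).star

lemma PX_mul {F F' : MF m₁ m₂} {G G' : MF m₂ m₃} (hF : PX e F F') (hG : PX e G G') :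
    PX e (fMul F G) (fAdd (fMul F' G) (fMul F G')) := by
  intro x hx t ht i j
  simp only [fMul, fAdd, Matrix.mul_apply, Matrix.add_apply]
  rw [← Finset.sum_add_distrib]
  exact HasDerivWithinAt.fun_sum fun k _ =>
    ((hF x hx t ht i k).mul (hG x hx t ht k j))

-- operations: PT  (via flip)
lemma PT_add {F F' G G' : MF m₁ m₂} (hF : PT e F F') (hG : PT e G G') :
    PT e (fAdd F G) (fAdd F' G') :=
  PT_flip.2 (PX_add (PT_flip.1 hF) (PT_flip.1 hG))

lemma PT_sub {F F' G G' : MF m₁ m₂} (hF : PT e F F') (hG : PT e G G') :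
    PT e (fSub F G) (fSub F' G') :=
  PT_flip.2 (PX_sub (PT_flip.1 hF) (PT_flip.1 hG))

lemma PT_smul {F F' : MF m₁ m₂} (c : ℂ) (hF : PT e F F') :
    PT e (fSMul c F) (fSMul c F') :=
  PT_flip.2 (PX_smul c (PT_flip.1 hF))

lemma PT_H {F F' : MF m₁ m₂} (hF : PT e F F') : PT e (fH F) (fH F') :=
  PT_flip.2 (PX_H (PT_flip.1 hF))

lemma PT_mul {F F' : MF m₁ m₂} {G G' : MF m₂ m₃} (hF : PT e F F') (hG : PT e G G') :
    PT e (fMul F G) (fAdd (fMul F' G) (fMul F G')) :=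
  PT_flip.2 (PX_mul (PT_flip.1 hF) (PT_flip.1 hG))

-- ContSq closure
lemma ContSq_congr {F G : MF m₁ m₂} (hE : EqS e F G) (h : ContSq e F) : ContSq e G :=
  fun i j => (h i j).congr (fun p hp => (congrArg (fun M => M i j) (hE p.1 hp.1 p.2 hp.2)).symm)

lemma ContSq_add {F G : MF m₁ m₂} (hF : ContSq e F) (hG : ContSq e G) :
    ContSq e (fAdd F G) := by
  intro i j
  simpa [fAdd, Matrix.add_apply] using (hF i j).fun_add (hG i j)

lemma ContSq_sub {F G : MF m₁ m₂} (hF : ContSq e F) (hG : ContSq e G) :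
    ContSq e (fSub F G) := by
  intro i j
  simpa [fSub, Matrix.sub_apply] using (hF i j).fun_sub (hG i j)

lemma ContSq_smul {F : MF m₁ m₂} (c : ℂ) (hF : ContSq e F) : ContSq e (fSMul c F) := by
  intro i j
  simpa [fSMul, Matrix.smul_apply, smul_eq_mul] using (hF i j).fun_const_smul c

lemma ContSq_H {F : MF m₁ m₂} (hF : ContSq e F) : ContSq e (fH F) := by
  intro i j
  simpa [fH, Matrix.conjTranspose_apply] using (hF j i).star

lemma ContSq_mul {F : MF m₁ m₂} {G : MF m₂ m₃} (hF : ContSq e F) (hG : ContSq e G) :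
    ContSq e (fMul F G) := by
  intro i j
  simp only [fMul, Matrix.mul_apply]
  exact continuousOn_finset_sum _ fun k _ => (hF i k).mul (hG k j)

lemma ContSq_flip {F : MF m₁ m₂} (hF : ContSq e F) : ContSq e (fFlip F) := by
  intro i j
  have : ContinuousOn ((fun p : ℝ × ℝ => F p.1 p.2 i j) ∘ Prod.swap)
      (Icc (0:ℝ) e ×ˢ Icc (0:ℝ) e) :=
    (hF i j).comp continuous_swap.continuousOn (fun p hp => ⟨hp.2, hp.1⟩)
  exact this


-- ===== HXC : existence of an x-derivative chain of length n, all continuous =====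

def HXC (e : ℝ) : ℕ → MF m₁ m₂ → Prop
  | 0, F => ContSq e F
  | (n+1), F => ContSq e F ∧ ∃ F', PX e F F' ∧ HXC e n F'

lemma HXC.contSq {n : ℕ} {F : MF m₁ m₂} (h : HXC e n F) : ContSq e F := by
  cases n with
  | zero => exact h
  | succ n => exact h.1

lemma HXC_congr : ∀ {n : ℕ} {F G : MF m₁ m₂}, EqS e F G → HXC e n F → HXC e n G
  | 0, F, G, hE, h => ContSq_congr hE h
  | (n+1), F, G, hE, h => ⟨ContSq_congr hE h.1,
      h.2.choose, PX_congr hE h.2.choose_spec.1, h.2.choose_spec.2⟩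

lemma HXC_mono : ∀ {n : ℕ} {F : MF m₁ m₂}, HXC e (n + 1) F → HXC e n F
  | 0, F, h => h.1
  | (n+1), F, h => ⟨h.1, h.2.choose, h.2.choose_spec.1, HXC_mono h.2.choose_spec.2⟩

lemma HXC_add : ∀ {n : ℕ} {F G : MF m₁ m₂}, HXC e n F → HXC e n G → HXC e n (fAdd F G)
  | 0, F, G, hF, hG => ContSq_add hF hG
  | (n+1), F, G, hF, hG => by
    obtain ⟨hFc, F', hFx, hF'⟩ := hF
    obtain ⟨hGc, G', hGx, hG'⟩ := hG
    exact ⟨ContSq_add hFc hGc, fAdd F' G', PX_add hFx hGx, HXC_add hF' hG'⟩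

lemma HXC_smul (c : ℂ) : ∀ {n : ℕ} {F : MF m₁ m₂}, HXC e n F → HXC e n (fSMul c F)
  | 0, F, hF => ContSq_smul c hF
  | (n+1), F, hF => by
    obtain ⟨hFc, F', hFx, hF'⟩ := hF
    exact ⟨ContSq_smul c hFc, fSMul c F', PX_smul c hFx, HXC_smul c hF'⟩

lemma HXC_sub {n : ℕ} {F G : MF m₁ m₂} (hF : HXC e n F) (hG : HXC e n G) :
    HXC e n (fSub F G) := by
  have h := HXC_add hF (HXC_smul (-1) hG)
  apply HXC_congr _ h
  intro x hx t ht
  simp [fAdd, fSMul, fSub, sub_eq_add_neg]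

lemma HXC_H : ∀ {n : ℕ} {F : MF m₁ m₂}, HXC e n F → HXC e n (fH F)
  | 0, F, hF => ContSq_H hF
  | (n+1), F, hF => by
    obtain ⟨hFc, F', hFx, hF'⟩ := hF
    exact ⟨ContSq_H hFc, fH F', PX_H hFx, HXC_H hF'⟩

lemma HXC_mul : ∀ {n : ℕ} {F : MF m₁ m₂} {G : MF m₂ m₃},
    HXC e n F → HXC e n G → HXC e n (fMul F G)
  | 0, F, G, hF, hG => ContSq_mul hF hG
  | (n+1), F, G, hF, hG => by
    obtain ⟨hFc, F', hFx, hF'⟩ := hF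
    obtain ⟨hGc, G', hGx, hG'⟩ := hG
    refine ⟨ContSq_mul hFc hGc, fAdd (fMul F' G) (fMul F G'), PX_mul hFx hGx, ?_⟩
    exact HXC_add (HXC_mul hF' (HXC_mono ⟨hGc, G', hGx, hG'⟩))
      (HXC_mul (HXC_mono ⟨hFc, F', hFx, hF'⟩) hG')

lemma HXC_of_chain : ∀ (n : ℕ) (c : ℕ → MF m₁ m₂),
    (∀ j < n, PX e (c j) (c (j+1))) → (∀ j ≤ n, ContSq e (c j)) → HXC e n (c 0)
  | 0, c, _, hc => hc 0 le_rfl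
  | (n+1), c, hx, hc => by
    refine ⟨hc 0 (Nat.zero_le _), c 1, hx 0 (Nat.succ_pos _), ?_⟩
    exact HXC_of_chain n (fun j => c (j+1)) (fun j hj => hx (j+1) (by omega))
      (fun j hj => hc (j+1) (by omega))

-- ===== TAdm : paired admissible structures =====

def TAdm (e : ℝ) : ℕ → ℕ → MF m₁ m₂ → MF m₁ m₂ → Prop
  | 0, n, F, G => HXC e n F ∧ HXC e n G ∧ Eq0 e F G
  | (k+1), n, F, G => HXC e n F ∧ HXC e n G ∧ Eq0 e F G ∧
      ∃ F' G', PT e F F' ∧ PT e G G' ∧ TAdm e k (n-2) F' G'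

lemma TAdm.eq0 {k n : ℕ} {F G : MF m₁ m₂} (h : TAdm e k n F G) : Eq0 e F G := by
  cases k with
  | zero => exact h.2.2
  | succ k => exact h.2.2.1

lemma TAdm.hxcF {k n : ℕ} {F G : MF m₁ m₂} (h : TAdm e k n F G) : HXC e n F := by
  cases k with
  | zero => exact h.1
  | succ k => exact h.1

lemma TAdm.hxcG {k n : ℕ} {F G : MF m₁ m₂} (h : TAdm e k n F G) : HXC e n G := by
  cases k with
  | zero => exact h.2.1
  | succ k => exact h.2.1

lemma Eq0_congr (he : 0 < e) {F F₂ G G₂ : MF m₁ m₂} (hF : EqS e F F₂) (hG : EqS e G G₂)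
    (h : Eq0 e F G) : Eq0 e F₂ G₂ := by
  intro x hx
  have h0 : (0:ℝ) ∈ Icc (0:ℝ) e := ⟨le_rfl, he.le⟩
  rw [← hF x hx 0 h0, ← hG x hx 0 h0]
  exact h x hx

lemma TAdm_congr (he : 0 < e) : ∀ {k n : ℕ} {F F₂ G G₂ : MF m₁ m₂},
    EqS e F F₂ → EqS e G G₂ → TAdm e k n F G → TAdm e k n F₂ G₂
  | 0, n, F, F₂, G, G₂, hF, hG, h =>
    ⟨HXC_congr hF h.1, HXC_congr hG h.2.1, Eq0_congr he hF hG h.2.2⟩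
  | (k+1), n, F, F₂, G, G₂, hF, hG, h => by
    obtain ⟨h1, h2, h3, F', G', hFt, hGt, h4⟩ := h
    exact ⟨HXC_congr hF h1, HXC_congr hG h2, Eq0_congr he hF hG h3,
      F', G', PT_congr hF hFt, PT_congr hG hGt, h4⟩

lemma TAdm_drop : ∀ {k n : ℕ} {F G : MF m₁ m₂}, TAdm e (k+1) n F G → TAdm e k n F G
  | 0, n, F, G, h => ⟨h.1, h.2.1, h.2.2.1⟩
  | (k+1), n, F, G, h => by
    obtain ⟨h1, h2, h3, F', G', hFt, hGt, h4⟩ := h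
    exact ⟨h1, h2, h3, F', G', hFt, hGt, TAdm_drop h4⟩

lemma TAdm_monoN : ∀ {k n : ℕ} {F G : MF m₁ m₂}, TAdm e k (n+1) F G → TAdm e k n F G
  | 0, n, F, G, h => ⟨HXC_mono h.1, HXC_mono h.2.1, h.2.2⟩
  | (k+1), n, F, G, h => by
    obtain ⟨h1, h2, h3, F', G', hFt, hGt, h4⟩ := h
    refine ⟨HXC_mono h1, HXC_mono h2, h3, F', G', hFt, hGt, ?_⟩
    rcases Nat.lt_or_ge n 2 with hn | hn
    · interval_cases n <;> simpa using h4
    · have : n + 1 - 2 = (n - 2) + 1 := by omega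
      rw [this] at h4
      exact TAdm_monoN h4

lemma TAdm_monoN' {k : ℕ} {F G : MF m₁ m₂} {n n' : ℕ} (hnn : n ≤ n')
    (h : TAdm e k n' F G) : TAdm e k n F G := by
  induction n' with
  | zero => simpa [Nat.le_zero.mp hnn] using h
  | succ m ih =>
    rcases Nat.lt_or_ge n (m+1) with hlt | hge
    · exact ih (by omega) (TAdm_monoN h)
    · have : n = m + 1 := by omega
      simpa [this] using h

lemma TAdm_add (he : 0 < e) : ∀ {k n : ℕ} {F F₂ G G₂ : MF m₁ m₂},
    TAdm e k n F G → TAdm e k n F₂ G₂ → TAdm e k n (fAdd F F₂) (fAdd G G₂)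
  | 0, n, F, F₂, G, G₂, h, h' =>
    ⟨HXC_add h.1 h'.1, HXC_add h.2.1 h'.2.1, fun x hx => by
      simp only [fAdd]; rw [h.2.2 x hx, h'.2.2 x hx]⟩
  | (k+1), n, F, F₂, G, G₂, h, h' => by
    obtain ⟨h1, h2, h3, F', G', hFt, hGt, h4⟩ := h
    obtain ⟨h1', h2', h3', F₂', G₂', hFt', hGt', h4'⟩ := h'
    refine ⟨HXC_add h1 h1', HXC_add h2 h2', ?_, fAdd F' F₂', fAdd G' G₂',
      PT_add hFt hFt', PT_add hGt hGt', TAdm_add he h4 h4'⟩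
    intro x hx
    simp only [fAdd]; rw [h3 x hx, h3' x hx]

lemma TAdm_smul (he : 0 < e) (c : ℂ) : ∀ {k n : ℕ} {F G : MF m₁ m₂},
    TAdm e k n F G → TAdm e k n (fSMul c F) (fSMul c G)
  | 0, n, F, G, h =>
    ⟨HXC_smul c h.1, HXC_smul c h.2.1, fun x hx => by
      simp only [fSMul]; rw [h.2.2 x hx]⟩
  | (k+1), n, F, G, h => by
    obtain ⟨h1, h2, h3, F', G', hFt, hGt, h4⟩ := h
    refine ⟨HXC_smul c h1, HXC_smul c h2, ?_, fSMul c F', fSMul c G',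
      PT_smul c hFt, PT_smul c hGt, TAdm_smul he c h4⟩
    intro x hx
    simp only [fSMul]; rw [h3 x hx]

lemma TAdm_sub (he : 0 < e) {k n : ℕ} {F F₂ G G₂ : MF m₁ m₂}
    (h : TAdm e k n F G) (h' : TAdm e k n F₂ G₂) :
    TAdm e k n (fSub F F₂) (fSub G G₂) := by
  have := TAdm_add he h (TAdm_smul he (-1) h')
  refine TAdm_congr he ?_ ?_ this <;>
    · intro x hx t ht
      simp [fAdd, fSMul, fSub, sub_eq_add_neg]

lemma TAdm_H (he : 0 < e) : ∀ {k n : ℕ} {F G : MF m₁ m₂},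
    TAdm e k n F G → TAdm e k n (fH F) (fH G)
  | 0, n, F, G, h =>
    ⟨HXC_H h.1, HXC_H h.2.1, fun x hx => by
      simp only [fH]; rw [h.2.2 x hx]⟩
  | (k+1), n, F, G, h => by
    obtain ⟨h1, h2, h3, F', G', hFt, hGt, h4⟩ := h
    refine ⟨HXC_H h1, HXC_H h2, ?_, fH F', fH G',
      PT_H hFt, PT_H hGt, TAdm_H he h4⟩
    intro x hx
    simp only [fH]; rw [h3 x hx]

lemma TAdm_mul (he : 0 < e) : ∀ {k n : ℕ} {F G : MF m₁ m₂} {F₂ G₂ : MF m₂ m₃},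
    TAdm e k n F G → TAdm e k n F₂ G₂ → TAdm e k n (fMul F F₂) (fMul G G₂)
  | 0, n, F, G, F₂, G₂, h, h' =>
    ⟨HXC_mul h.1 h'.1, HXC_mul h.2.1 h'.2.1, fun x hx => by
      simp only [fMul]; rw [h.2.2 x hx, h'.2.2 x hx]⟩
  | (k+1), n, F, G, F₂, G₂, h, h' => by
    obtain ⟨h1, h2, h3, F', G', hFt, hGt, h4⟩ := h
    obtain ⟨h1', h2', h3', F₂', G₂', hFt₂, hGt₂, h4'⟩ := h'
    have hd1 : TAdm e k (n-2) F G :=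
      TAdm_monoN' (by omega) (TAdm_drop ⟨h1, h2, h3, F', G', hFt, hGt, h4⟩)
    have hd2 : TAdm e k (n-2) F₂ G₂ :=
      TAdm_monoN' (by omega) (TAdm_drop ⟨h1', h2', h3', F₂', G₂', hFt₂, hGt₂, h4'⟩)
    refine ⟨HXC_mul h1 h1', HXC_mul h2 h2', ?_, fAdd (fMul F' F₂) (fMul F F₂'),
      fAdd (fMul G' G₂) (fMul G G₂'),
      PT_mul hFt hFt₂, PT_mul hGt hGt₂,
      TAdm_add he (TAdm_mul he h4 hd2) (TAdm_mul he hd1 h4')⟩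
    intro x hx
    simp only [fMul]; rw [h3 x hx, h3' x hx]

lemma swap_mx (he : 0 < e) {F F₁ H H₁ : MF m₁ m₂} (hFc : ContSq e F) (hF₁c : ContSq e F₁)
    (hHc : ContSq e H) (hH₁c : ContSq e H₁)
    (hFx : PX e F F₁) (hFt : PT e F H) (hHx : PX e H H₁) : PT e F₁ H₁ := by
  intro x hx t ht i j
  exact swap_scalar he (hFc i j) (hF₁c i j) (hHc i j) (hH₁c i j)
    (fun x hx t ht => hFx x hx t ht i j) (fun x hx t ht => hFt x hx t ht i j)
    (fun x hx t ht => hHx x hx t ht i j) hx ht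

lemma TAdm_shift (he : 0 < e) : ∀ {k n : ℕ} {F G : MF m₁ m₂}, 2*k ≤ n →
    TAdm e k (n+1) F G → ∃ F₁ G₁, PX e F F₁ ∧ PX e G G₁ ∧ TAdm e k n F₁ G₁
  | 0, n, F, G, hkn, h => by
    obtain ⟨hFc, F₁, hFx, hF₁⟩ := h.1
    obtain ⟨hGc, G₁, hGx, hG₁⟩ := h.2.1
    exact ⟨F₁, G₁, hFx, hGx, hF₁, hG₁, Eq0_of_PX he hFx hGx h.2.2⟩
  | (k+1), n, F, G, hkn, h => by
    obtain ⟨hF, hG, h0, F', G', hFt, hGt, h4⟩ := h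
    obtain ⟨hFc, F₁, hFx, hF₁⟩ := hF
    obtain ⟨hGc, G₁, hGx, hG₁⟩ := hG
    have hn2 : n + 1 - 2 = (n - 2) + 1 := by omega
    rw [hn2] at h4
    obtain ⟨F₁', G₁', hF'x, hG'x, h4'⟩ := TAdm_shift he (by omega) h4
    have hPTF : PT e F₁ F₁' :=
      swap_mx he hFc hF₁.contSq h4.hxcF.contSq h4'.hxcF.contSq hFx hFt hF'x
    have hPTG : PT e G₁ G₁' :=
      swap_mx he hGc hG₁.contSq h4.hxcG.contSq h4'.hxcG.contSq hGx hGt hG'x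
    exact ⟨F₁, G₁, hFx, hGx, hF₁, hG₁, Eq0_of_PX he hFx hGx h0,
      F₁', G₁', hPTF, hPTG, h4'⟩

lemma TAdm_extract (he : 0 < e) : ∀ {k n : ℕ} {F G : MF m₁ m₂}, TAdm e k n F G →
    ∀ f g : ℕ → MF m₁ m₂, EqS e (f 0) F → EqS e (g 0) G →
    (∀ k' < k, PT e (f k') (f (k'+1))) → (∀ k' < k, PT e (g k') (g (k'+1))) →
    ∀ k' ≤ k, Eq0 e (f k') (g k')
  | 0, n, F, G, h, f, g, hf0, hg0, hf, hg, k', hk' => by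
    have : k' = 0 := Nat.le_zero.mp hk'
    subst this
    exact Eq0_congr he hf0.symm hg0.symm h.2.2
  | (k+1), n, F, G, h, f, g, hf0, hg0, hf, hg, k', hk' => by
    obtain ⟨h1, h2, h3, F', G', hFt, hGt, h4⟩ := h
    rcases Nat.eq_zero_or_pos k' with rfl | hpos
    · exact Eq0_congr he hf0.symm hg0.symm h3
    · obtain ⟨k'', rfl⟩ : ∃ k'', k' = k'' + 1 := ⟨k'-1, by omega⟩
      have hf1 : EqS e (f 1) F' :=
        PT_unique he (hf 0 (by omega)) (PT_congr hf0.symm hFt)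
      have hg1 : EqS e (g 1) G' :=
        PT_unique he (hg 0 (by omega)) (PT_congr hg0.symm hGt)
      exact TAdm_extract he h4 (fun j => f (j+1)) (fun j => g (j+1)) hf1 hg1
        (fun j hj => hf (j+1) (by omega)) (fun j hj => hg (j+1) (by omega)) k'' (by omega)



lemma PX_restrict {e ee : ℝ} (hee : e ≤ ee) {F G : MF m₁ m₂} (h : PX ee F G) : PX e F G :=
  fun x hx t ht i j =>
    ((h x (Icc_subset_Icc le_rfl hee hx) t (Icc_subset_Icc le_rfl hee ht) i j).mono
      (Icc_subset_Icc le_rfl hee))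

lemma ContSq_restrict {e ee : ℝ} (hee : e ≤ ee) {F : MF m₁ m₂} (h : ContSq ee F) :
    ContSq e F :=
  fun i j => (h i j).mono
    (Set.prod_mono (Icc_subset_Icc le_rfl hee) (Icc_subset_Icc le_rfl hee))

end
end DNLSProof

open DNLSProof

/-- Proposition 3.1, recovery part.  If `v` and `ṽ` both belong to
`C_ε(𝒟)`, both satisfy the defocusing NLS on `𝒟` and have the same initial condition
`v(x,0) = ṽ(x,0) = 𝒱(x)`, then for every `r` and `k ≤ r` the derivatives
`(∂_t^k v)(x,0)` and `(∂_t^k v_x)(x,0)` coincide with those of `ṽ` on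
`[0, min(ε_{4r}(v), ε_{4r}(ṽ))]`, i.e., they are uniquely determined by `𝒱`. -/
theorem dnls_derivatives_determined_by_initial_condition {m₁ m₂ : ℕ} (a : ℝ) (ha : 0 < a)
    (v vx vt vxx : ℝ → ℝ → Matrix (Fin m₁) (Fin m₂) ℂ) (ε : ℕ → ℝ)
    (w wx wt wxx : ℝ → ℝ → Matrix (Fin m₁) (Fin m₂) ℂ) (ε' : ℕ → ℝ)
    (hv : MemCEps a v vx vt vxx ε) (hw : MemCEps a w wx wt wxx ε')
    (hNLSv : SatisfiesDNLS a v vt vxx) (hNLSw : SatisfiesDNLS a w wt wxx)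
    -- the same initial condition
    (hIC : ∀ x ∈ Ici (0:ℝ), v x 0 = w x 0) :
    ∀ r : ℕ, ∀ e : ℝ, 0 < e → e ≤ min (ε (4*r)) (ε' (4*r)) →
      -- the t-derivatives (∂_t^k v)(x,0), k ≤ r, are determined by the initial condition
      (∀ f g : ℕ → ℝ → ℝ → Matrix (Fin m₁) (Fin m₂) ℂ,
        f 0 = v → g 0 = w →
        (∀ k < r, PT e (f k) (f (k+1))) → (∀ k < r, PT e (g k) (g (k+1))) →
        ∀ k ≤ r, ∀ x ∈ Icc (0:ℝ) e, f k x 0 = g k x 0) ∧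
      -- and so are the derivatives (∂_t^k v_x)(x,0), k ≤ r
      (∀ f g : ℕ → ℝ → ℝ → Matrix (Fin m₁) (Fin m₂) ℂ,
        f 0 = vx → g 0 = wx →
        (∀ k < r, PT e (f k) (f (k+1))) → (∀ k < r, PT e (g k) (g (k+1))) →
        ∀ k ≤ r, ∀ x ∈ Icc (0:ℝ) e, f k x 0 = g k x 0) := by
  
  classical
  intro r e he hee
  have h0e : (0:ℝ) ∈ Icc (0:ℝ) e := ⟨le_rfl, he.le⟩
  have hea : e < a := lt_of_le_of_lt (hee.trans (min_le_left _ _)) (hv.eps_lt (4*r))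
  have hsub1 : Icc (0:ℝ) e ⊆ Ici (0:ℝ) := fun y hy => hy.1
  have hsub2 : Icc (0:ℝ) e ⊆ Ico (0:ℝ) a := fun y hy => ⟨hy.1, lt_of_le_of_lt hy.2 hea⟩
  have hPXv : PX e v vx := fun x hx t ht i j =>
    (hv.deriv_x x (hsub1 hx) t (hsub2 ht) i j).mono hsub1
  have hPXvx : PX e vx vxx := fun x hx t ht i j =>
    (hv.deriv_xx x (hsub1 hx) t (hsub2 ht) i j).mono hsub1
  have hPTv : PT e v vt := fun x hx t ht i j =>
    (hv.deriv_t x (hsub1 hx) t (hsub2 ht) i j).mono hsub2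
  have hPXw : PX e w wx := fun x hx t ht i j =>
    (hw.deriv_x x (hsub1 hx) t (hsub2 ht) i j).mono hsub1
  have hPXwx : PX e wx wxx := fun x hx t ht i j =>
    (hw.deriv_xx x (hsub1 hx) t (hsub2 ht) i j).mono hsub1
  have hPTw : PT e w wt := fun x hx t ht i j =>
    (hw.deriv_t x (hsub1 hx) t (hsub2 ht) i j).mono hsub2
  have hCv : ContSq e v := fun i j =>
    (hv.cont i j).mono (Set.prod_mono hsub1 hsub2)
  have hCvx : ContSq e vx := fun i j =>
    (hv.cont_x i j).mono (Set.prod_mono hsub1 hsub2)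
  have hCw : ContSq e w := fun i j =>
    (hw.cont i j).mono (Set.prod_mono hsub1 hsub2)
  have hCwx : ContSq e wx := fun i j =>
    (hw.cont_x i j).mono (Set.prod_mono hsub1 hsub2)
  have hEq0vw : DNLSProof.Eq0 e v w := fun x hx => hIC x hx.1
  have hbase : ∀ m : ℕ, m ≤ max (4*r) 1 → HXC e m v ∧ HXC e m w := by
    intro m hm
    rcases le_or_gt m (4*r) with h4 | h4
    · obtain ⟨c, hc0, hcx, hcc⟩ := hv.smooth_x (4*r)
      obtain ⟨d, hd0, hdx, hdc⟩ := hw.smooth_x (4*r)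
      have hev : e ≤ ε (4*r) := hee.trans (min_le_left _ _)
      have hew : e ≤ ε' (4*r) := hee.trans (min_le_right _ _)
      constructor
      · have := HXC_of_chain (e := e) m c
          (fun j hj => PX_restrict hev (hcx j (by omega)))
          (fun j hj => ContSq_restrict hev (hcc j (by omega)))
        rwa [hc0] at this
      · have := HXC_of_chain (e := e) m d
          (fun j hj => PX_restrict hew (hdx j (by omega)))
          (fun j hj => ContSq_restrict hew (hdc j (by omega)))
        rwa [hd0] at this
    · have hm1 : m = 1 := by omega
      subst hm1
      exact ⟨⟨hCv, vx, hPXv, hCvx⟩, ⟨hCw, wx, hPXw, hCwx⟩⟩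
  have claim : ∀ k m : ℕ, 2*k ≤ m → m ≤ max (4*r) 1 → TAdm e k m v w := by
    intro k
    induction k with
    | zero =>
      intro m _ hm
      exact ⟨(hbase m hm).1, (hbase m hm).2, hEq0vw⟩
    | succ k ih =>
      intro m h2k hm
      obtain ⟨m', rfl⟩ : ∃ m', m = m' + 2 := ⟨m - 2, by omega⟩
      have hA : TAdm e k (m'+2) v w := ih (m'+2) (by omega) hm
      obtain ⟨F₁, G₁, hvF₁, hwG₁, hA1⟩ := TAdm_shift he (n := m'+1) (by omega) hA
      obtain ⟨F₂, G₂, hF₁F₂, hG₁G₂, hA2⟩ := TAdm_shift he (n := m') (by omega) hA1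
      have hF₁vx : EqS e F₁ vx := PX_unique he hvF₁ hPXv
      have hF₂vxx : EqS e F₂ vxx := PX_unique he hF₁F₂ (PX_congr hF₁vx.symm hPXvx)
      have hG₁wx : EqS e G₁ wx := PX_unique he hwG₁ hPXw
      have hG₂wxx : EqS e G₂ wxx := PX_unique he hG₁G₂ (PX_congr hG₁wx.symm hPXwx)
      have hAm' : TAdm e k m' v w := ih m' (by omega) (by omega)
      have hcube : TAdm e k m' (fMul (fMul v (fH v)) v) (fMul (fMul w (fH w)) w) :=
        TAdm_mul he (TAdm_mul he hAm' (TAdm_H he hAm')) hAm'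
      have hform : TAdm e k m'
          (fSMul ((2:ℂ)⁻¹ * Complex.I)
            (fSub F₂ (fSMul 2 (fMul (fMul v (fH v)) v))))
          (fSMul ((2:ℂ)⁻¹ * Complex.I)
            (fSub G₂ (fSMul 2 (fMul (fMul w (fH w)) w)))) :=
        TAdm_smul he _ (TAdm_sub he hA2 (TAdm_smul he 2 hcube))
      have hEqF : EqS e
          (fSMul ((2:ℂ)⁻¹ * Complex.I)
            (fSub F₂ (fSMul 2 (fMul (fMul v (fH v)) v)))) vt := by
        intro x hx t ht
        have hnls := hNLSv x (hsub1 hx) t (hsub2 ht)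
        simp only [fSMul, fSub, fMul, fH]
        rw [hF₂vxx x hx t ht, mul_smul, ← hnls, smul_smul,
          inv_mul_cancel₀ two_ne_zero, one_smul]
      have hEqG : EqS e
          (fSMul ((2:ℂ)⁻¹ * Complex.I)
            (fSub G₂ (fSMul 2 (fMul (fMul w (fH w)) w)))) wt := by
        intro x hx t ht
        have hnls := hNLSw x (hsub1 hx) t (hsub2 ht)
        simp only [fSMul, fSub, fMul, fH]
        rw [hG₂wxx x hx t ht, mul_smul, ← hnls, smul_smul,
          inv_mul_cancel₀ two_ne_zero, one_smul]
      exact ⟨(hbase _ hm).1, (hbase _ hm).2, hEq0vw, vt, wt, hPTv, hPTw,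
        TAdm_congr he hEqF hEqG hform⟩
  have hb1 : 2*r ≤ max (4*r) 1 := le_trans (by omega) (Nat.le_max_left _ _)
  have hb2 : 2*r + 1 ≤ max (4*r) 1 := by
    rcases Nat.eq_zero_or_pos r with rfl | hr
    · simp
    · exact le_trans (by omega) (Nat.le_max_left _ _)
  constructor
  · intro f g hf0 hg0 hf hg k hk x hx
    have main : TAdm e r (2*r) v w := claim r (2*r) le_rfl hb1
    exact TAdm_extract he main f g
      (fun x hx t ht => by rw [hf0]) (fun x hx t ht => by rw [hg0])
      hf hg k hk x hx
  · intro f g hf0 hg0 hf hg k hk x hx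
    have main2 : TAdm e r (2*r+1) v w := claim r (2*r+1) (by omega) hb2
    obtain ⟨F₁, G₁, hvF₁, hwG₁, hm2⟩ := TAdm_shift he (n := 2*r) (by omega) main2
    have hEF : EqS e F₁ vx := PX_unique he hvF₁ hPXv
    have hEG : EqS e G₁ wx := PX_unique he hwG₁ hPXw
    exact TAdm_extract he hm2 f g
      (fun x hx t ht => by rw [hf0, ← hEF x hx t ht])
      (fun x hx t ht => by rw [hg0, ← hEG x hx t ht])
      hf hg k hk x hx
end

section
/- Let D̂ = diag(d̂₁,…,d̂_m) with d̂₁ > d̂₂ > … > d̂_m > 0, let ζ̂(t) be a continuous m×m skew-Hermitian matrix function on [0,a) with ‖ζ̂(t)‖ ≤ M̂ for all t, and fix 1 ≤ k < m, J_k = diag(I_k, −I_{m−k}). Fix z with Im z < 0 and let R(t) solve R_t = (izD̂ − ζ̂(t)) R, R(0) = I_m. Let ψ be a k×(m−k) matrix with ψ*ψ ≤ I_{m−k}, and assume that [ψ* I_{m−k}] R(t)* J_k R(t) [ψ; I_{m−k}] ≤ 0 for all t ∈ [0,a). Then for all t ∈ [0,a): exp{i(z̄ − z) d̂_{k+1}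 t − 4M̂ t} · [ψ* I_{m−k}] R(t)* R(t) [ψ; I_{m−k}] ≤ 2 I_{m−k}. -/
open Matrix Set
open scoped Matrix.Norms.L2Operator ComplexOrder

/-- `J_k = diag(I_k, −I_{m−k})`. -/
noncomputable def Jk (m k : ℕ) : Matrix (Fin m) (Fin m) ℂ :=
  Matrix.diagonal fun i => if (i : ℕ) < k then 1 else -1

/-- The block column `[ψ; I_{m−k}]`. -/
noncomputable def colExt {m k : ℕ} (ψ : Matrix (Fin k) (Fin (m - k)) ℂ) :
    Matrix (Fin m) (Fin (m - k)) ℂ :=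
  Matrix.of fun i j =>
    if h : (i : ℕ) < k then ψ ⟨i, h⟩ j else if (i : ℕ) = k + (j : ℕ) then 1 else 0

lemma hasDerivWithinAt_normSq' {f : ℝ → ℂ} {f' : ℂ} {s : Set ℝ} {x : ℝ}
    (hf : HasDerivWithinAt f f' s x) :
    HasDerivWithinAt (fun t => Complex.normSq (f t))
      (2 * ((starRingEnd ℂ) (f x) * f').re) s x := by
  have h1 : HasDerivWithinAt (fun t => (starRingEnd ℂ) (f t) * f t)
      ((starRingEnd ℂ) f' * f x + (starRingEnd ℂ) (f x) * f') s x := hf.star.mul hf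
  have h2 := (Complex.reCLM.hasFDerivAt).comp_hasDerivWithinAt x h1
  have e1 : (fun t => Complex.normSq (f t))
      = fun t => Complex.reCLM ((starRingEnd ℂ) (f t) * f t) := by
    funext t
    simp [← Complex.normSq_eq_conj_mul_self]
  rw [e1]
  refine h2.congr_deriv ?_
  simp [Complex.add_re, Complex.mul_re, Complex.conj_re, Complex.conj_im]
  ring

set_option maxHeartbeats 1600000

lemma quad_diag {m' n' : ℕ} (g : Fin m' → ℝ) (B : Matrix (Fin m') (Fin n') ℂ)
    (v : Fin n' → ℂ) :
    dotProduct (star v) ((Bᴴ * Matrix.diagonal (fun p => (g p : ℂ)) * B) *ᵥ v)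
      = ((∑ p, g p * Complex.normSq ((B *ᵥ v) p) : ℝ) : ℂ) := by
  rw [show Bᴴ * Matrix.diagonal (fun p => (g p : ℂ)) * B
      = Bᴴ * (Matrix.diagonal (fun p => (g p : ℂ)) * B) from by rw [Matrix.mul_assoc]]
  rw [← Matrix.mulVec_mulVec, Matrix.dotProduct_mulVec, ← Matrix.star_mulVec,
    ← Matrix.mulVec_mulVec]
  simp only [Matrix.mulVec_diagonal, dotProduct, Pi.star_apply]
  push_cast
  congr 1
  funext p
  rw [show star ((B *ᵥ v) p) * ((g p : ℂ) * (B *ᵥ v) p)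
      = (g p : ℂ) * ((starRingEnd ℂ) ((B *ᵥ v) p) * (B *ᵥ v) p) from by
        rw [show star ((B *ᵥ v) p) = (starRingEnd ℂ) ((B *ᵥ v) p) from rfl]; ring]
  rw [← Complex.normSq_eq_conj_mul_self]

/-- the estimate (NW42).  If `R_t = (izD̂ − ζ̂(t))R`, `R(0) = I`, with
`D̂` diagonal, strictly decreasing and positive, `ζ̂` continuous skew-Hermitian with
`‖ζ̂(t)‖ ≤ M̂`, `Im z < 0`, and if `ψ` is contractive with
`[ψ* I] R(t)* J_k R(t) [ψ; I] ≤ 0` on `[0,a)`, then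
`exp{i(z̄−z)d̂_{k+1}t − 4M̂t}·[ψ* I] R(t)* R(t) [ψ; I] ≤ 2I_{m−k}` on `[0,a)`. -/
theorem exponential_block_estimate {m : ℕ} (a : ℝ) (ha : 0 < a)
    (dh : Fin m → ℝ) (hdh : StrictAnti dh) (hdhpos : ∀ i, 0 < dh i)
    (Mh : ℝ)
    (ζ : ℝ → Matrix (Fin m) (Fin m) ℂ)
    (hζcont : ∀ i j, ContinuousOn (fun t => ζ t i j) (Ico 0 a))
    (hζsk : ∀ t ∈ Ico (0:ℝ) a, (ζ t)ᴴ = -ζ t)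
    (hζbdd : ∀ t ∈ Ico (0:ℝ) a, ‖ζ t‖ ≤ Mh)
    (k : ℕ) (hk1 : 1 ≤ k) (hk : k < m)
    (z : ℂ) (hz : z.im < 0)
    (R : ℝ → Matrix (Fin m) (Fin m) ℂ)
    (hR0 : R 0 = 1)
    (hRt : ∀ t ∈ Ico (0:ℝ) a, ∀ i j,
      HasDerivWithinAt (fun s => R s i j)
        ((((Complex.I * z) • Matrix.diagonal (fun p => (dh p : ℂ)) - ζ t) * R t) i j)
        (Ico (0:ℝ) a) t)
    (ψ : Matrix (Fin k) (Fin (m - k)) ℂ)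
    (hψ : ((1 : Matrix (Fin (m - k)) (Fin (m - k)) ℂ) - ψᴴ * ψ).PosSemidef)
    (hJ : ∀ t ∈ Ico (0:ℝ) a,
      (-((colExt ψ)ᴴ * (R t)ᴴ * Jk m k * R t * colExt ψ)).PosSemidef) :
    ∀ t ∈ Ico (0:ℝ) a,
      ((2 : ℂ) • (1 : Matrix (Fin (m - k)) (Fin (m - k)) ℂ) -
        Complex.exp (Complex.I * ((starRingEnd ℂ) z - z) * (dh ⟨k, hk⟩ : ℂ) * (t : ℂ) -
            4 * (Mh : ℂ) * (t : ℂ)) •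
          ((colExt ψ)ᴴ * (R t)ᴴ * R t * colExt ψ)).PosSemidef := by

  intro t ht
  have hMh : 0 ≤ Mh := le_trans (norm_nonneg _) (hζbdd 0 ⟨le_refl 0, ha⟩)
  set c₀ : ℝ := 2 * z.im * dh ⟨k, hk⟩ - 4 * Mh with hc₀
  -- the exponent is real
  have hexp : Complex.exp (Complex.I * ((starRingEnd ℂ) z - z) * (dh ⟨k, hk⟩ : ℂ) * (t : ℂ) -
      4 * (Mh : ℂ) * (t : ℂ)) = ((Real.exp (c₀ * t) : ℝ) : ℂ) := by
    rw [Complex.ofReal_exp]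
    congr 1
    have h1 : Complex.I * ((starRingEnd ℂ) z - z) = ((2 * z.im : ℝ) : ℂ) := by
      apply Complex.ext <;>
        simp [Complex.mul_re, Complex.mul_im, Complex.sub_re, Complex.sub_im] <;> ring
    rw [h1, hc₀]
    push_cast
    ring
  -- the diagonal "J" as a real diagonal
  set jr : Fin m → ℝ := fun p => if (p : ℕ) < k then 1 else -1 with hjr
  have hJk : Jk m k = Matrix.diagonal (fun p => (jr p : ℂ)) := by
    unfold Jk
    have : (fun i : Fin m => if (i : ℕ) < k then (1:ℂ) else -1) = fun p => ((jr p : ℝ) : ℂ) := by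
      funext p
      by_cases hp : (p : ℕ) < k <;> simp [hjr, hp]
    rw [this]
  -- key scalar estimate
  have key : ∀ v : Fin (m - k) → ℂ,
      Real.exp (c₀ * t) * (∑ p, Complex.normSq (((R t * colExt ψ) *ᵥ v) p))
        ≤ 2 * ∑ j, Complex.normSq (v j) := by
    intro v
    set u : Fin m → ℂ := (colExt ψ) *ᵥ v with hu
    set w : ℝ → Fin m → ℂ := fun τ => R τ *ᵥ u with hw
    set cc : Fin m → ℝ := fun p => if (p : ℕ) < k then 0 else 2 with hcc
    set h : ℝ → ℝ := fun τ => ∑ p, cc p * Complex.normSq (w τ p) with hh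
    set Fm : ℝ → Matrix (Fin m) (Fin m) ℂ := fun τ =>
      (Complex.I * z) • Matrix.diagonal (fun p => (dh p : ℂ)) - ζ τ with hFm
    set h' : ℝ → ℝ := fun τ =>
      ∑ p, cc p * (2 * ((starRingEnd ℂ) (w τ p) * ((Fm τ) *ᵥ (w τ)) p).re) with hh'
    have hccnn : ∀ p, 0 ≤ cc p := by
      intro p; by_cases hp : (p : ℕ) < k <;> simp [hcc, hp]
    have hhnn : ∀ τ, 0 ≤ h τ := by
      intro τ
      apply Finset.sum_nonneg
      intro p _
      exact mul_nonneg (hccnn p) (Complex.normSq_nonneg _)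
    -- derivative of w
    have hwderiv : ∀ τ ∈ Ico (0:ℝ) a, ∀ p,
        HasDerivWithinAt (fun σ => w σ p) (((Fm τ) *ᵥ (w τ)) p) (Ico (0:ℝ) a) τ := by
      intro τ hτ p
      have e1 : (fun σ => w σ p) = fun σ => ∑ j, R σ p j * u j := rfl
      have e2 : ((Fm τ) *ᵥ (w τ)) p = ∑ j, (Fm τ * R τ) p j * u j := by
        rw [hw]
        rw [Matrix.mulVec_mulVec]
        rfl
      rw [e1, e2]
      exact HasDerivWithinAt.fun_sum (fun j _ => (hRt τ hτ p j).mul_const (u j))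
    -- derivative of h
    have hhderiv : ∀ τ ∈ Ico (0:ℝ) a, HasDerivWithinAt h (h' τ) (Ico (0:ℝ) a) τ := by
      intro τ hτ
      exact HasDerivWithinAt.fun_sum
        (fun p _ => (hasDerivWithinAt_normSq' (hwderiv τ hτ p)).const_mul (cc p))
    -- f ≤ h from the J-condition
    have hfh : ∀ τ ∈ Ico (0:ℝ) a, (∑ p, Complex.normSq (w τ p)) ≤ h τ := by
      intro τ hτ
      have hmat : (colExt ψ)ᴴ * (R τ)ᴴ * Jk m k * R τ * colExt ψ
          = (R τ * colExt ψ)ᴴ * Matrix.diagonal (fun p => (jr p : ℂ)) * (R τ * colExt ψ) := by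
        rw [hJk]
        simp [Matrix.conjTranspose_mul, Matrix.mul_assoc]
      have hq := (hJ τ hτ).dotProduct_mulVec_nonneg v
      rw [Matrix.neg_mulVec, dotProduct_neg, hmat, quad_diag] at hq
      rw [show -(((∑ p, jr p * Complex.normSq (((R τ * colExt ψ) *ᵥ v) p) : ℝ) : ℂ))
          = (((-(∑ p, jr p * Complex.normSq (((R τ * colExt ψ) *ᵥ v) p)) : ℝ)) : ℂ) from by
          push_cast; ring] at hq
      rw [Complex.zero_le_real] at hq
      have hwv : (R τ * colExt ψ) *ᵥ v = w τ :=
        (Matrix.mulVec_mulVec v (R τ) (colExt ψ)).symm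
      rw [hwv] at hq
      have e3 : h τ - (∑ p, Complex.normSq (w τ p))
          = -(∑ p, jr p * Complex.normSq (w τ p)) := by
        rw [hh, ← Finset.sum_sub_distrib, ← Finset.sum_neg_distrib]
        apply Finset.sum_congr rfl
        intro p _
        by_cases hp : (p : ℕ) < k
        · simp [hcc, hjr, hp]
        · simp [hcc, hjr, hp]
          ring
      linarith
    -- bound on h'
    have hbound : ∀ τ ∈ Ico (0:ℝ) a, h' τ ≤ -c₀ * h τ := by
      intro τ hτ
      set y : Fin m → ℂ := (ζ τ) *ᵥ (w τ) with hy
      have hterm : ∀ p, ((starRingEnd ℂ) (w τ p) * ((Fm τ) *ᵥ (w τ)) p).re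
          = (-z.im) * dh p * Complex.normSq (w τ p)
            - ((starRingEnd ℂ) (w τ p) * y p).re := by
        intro p
        have e4 : ((Fm τ) *ᵥ (w τ)) p
            = Complex.I * z * ((dh p : ℂ) * w τ p) - y p := by
          rw [hFm, hy]
          rw [Matrix.sub_mulVec]
          simp [Matrix.smul_mulVec, Matrix.mulVec_diagonal]
        rw [e4, mul_sub]
        rw [show (starRingEnd ℂ) (w τ p) * (Complex.I * z * ((dh p : ℂ) * w τ p))
            = Complex.I * z * (dh p : ℂ) * ((starRingEnd ℂ) (w τ p) * w τ p) from by ring]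
        rw [← Complex.normSq_eq_conj_mul_self]
        rw [Complex.sub_re]
        congr 1
        simp [Complex.mul_re, Complex.mul_im]
      have hsplit : h' τ = (∑ p, cc p * (2 * ((-z.im) * dh p * Complex.normSq (w τ p))))
          - ∑ p, cc p * (2 * ((starRingEnd ℂ) (w τ p) * y p).re) := by
        rw [hh', ← Finset.sum_sub_distrib]
        apply Finset.sum_congr rfl
        intro p _
        rw [hterm p]
        ring
      -- diagonal part
      have hA1 : (∑ p, cc p * (2 * ((-z.im) * dh p * Complex.normSq (w τ p))))
          ≤ (-(2 * z.im * dh ⟨k, hk⟩)) * h τ := by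
        rw [hh, Finset.mul_sum]
        apply Finset.sum_le_sum
        intro p _
        by_cases hp : (p : ℕ) < k
        · simp [hcc, hp]
        · have hdp : dh p ≤ dh ⟨k, hk⟩ := by
            apply hdh.antitone
            rw [Fin.le_def]
            simpa using Nat.le_of_not_lt hp
          have hn : 0 ≤ Complex.normSq (w τ p) := Complex.normSq_nonneg _
          have hzim : 0 < -z.im := by linarith
          simp only [hcc, hp, if_false]
          nlinarith [mul_le_mul_of_nonneg_right hdp (mul_nonneg (le_of_lt hzim) hn)]
      -- ζ part via Cauchy–Schwarz
      have hA2 : -(∑ p, cc p * (2 * ((starRingEnd ℂ) (w τ p) * y p).re))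
          ≤ 4 * Mh * h τ := by
        set aE : EuclideanSpace ℂ (Fin m) := WithLp.toLp 2 (fun p => (cc p : ℂ) * w τ p) with haE
        set wE : EuclideanSpace ℂ (Fin m) := WithLp.toLp 2 (fun p => w τ p) with hwE
        set yE : EuclideanSpace ℂ (Fin m) :=
          (EuclideanSpace.equiv (Fin m) ℂ).symm ((ζ τ) *ᵥ wE) with hyE
        have hyy : ∀ p, yE p = y p := fun p => rfl
        have hinner : (inner ℂ aE yE : ℂ) = ∑ p, (cc p : ℂ) * ((starRingEnd ℂ) (w τ p) * y p) := by
          rw [PiLp.inner_apply]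
          apply Finset.sum_congr rfl
          intro p _
          rw [hyy p]
          simp [haE, RCLike.inner_apply, mul_assoc]
          ring
        have hre : (∑ p, cc p * (2 * ((starRingEnd ℂ) (w τ p) * y p).re))
            = 2 * (inner ℂ aE yE : ℂ).re := by
          rw [hinner]
          rw [Complex.re_sum]
          rw [Finset.mul_sum]
          apply Finset.sum_congr rfl
          intro p _
          simp [Complex.ofReal_mul]
          ring
        have hCS : ‖(inner ℂ aE yE : ℂ)‖ ≤ ‖aE‖ * ‖yE‖ := norm_inner_le_norm _ _
        have haE2 : ‖aE‖ ^ 2 = 2 * h τ := by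
          rw [EuclideanSpace.norm_eq, Real.sq_sqrt (by positivity)]
          rw [hh, Finset.mul_sum]
          apply Finset.sum_congr rfl
          intro p _
          rw [show ‖aE p‖ = ‖(cc p : ℂ)‖ * ‖w τ p‖ from by rw [haE]; exact norm_mul _ _]
          rw [Complex.norm_real]
          rw [mul_pow]
          rw [show ‖w τ p‖ ^ 2 = Complex.normSq (w τ p) from by
            rw [← Complex.sq_norm]]
          by_cases hp : (p : ℕ) < k <;> simp [hcc, hp] <;> ring
        have hwE2 : ‖wE‖ ^ 2 ≤ h τ := by
          rw [EuclideanSpace.norm_eq, Real.sq_sqrt (by positivity)]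
          refine le_trans (le_of_eq ?_) (hfh τ hτ)
          apply Finset.sum_congr rfl
          intro p _
          rw [show ‖wE p‖ ^ 2 = Complex.normSq (w τ p) from by
            rw [← Complex.sq_norm]]
        have hyE2 : ‖yE‖ ≤ Mh * ‖wE‖ := by
          refine le_trans (Matrix.l2_opNorm_mulVec (ζ τ) wE) ?_
          exact mul_le_mul_of_nonneg_right (hζbdd τ hτ) (norm_nonneg _)
        have hprod : ‖aE‖ * ‖yE‖ ≤ 2 * Mh * h τ := by
          have h1 : ‖aE‖ * ‖yE‖ ≤ ‖aE‖ * (Mh * ‖wE‖) :=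
            mul_le_mul_of_nonneg_left hyE2 (norm_nonneg _)
          have h2 : (‖aE‖ * (Mh * ‖wE‖)) ^ 2 ≤ 2 * Mh ^ 2 * h τ ^ 2 := by
            rw [show (‖aE‖ * (Mh * ‖wE‖)) ^ 2 = ‖aE‖ ^ 2 * Mh ^ 2 * ‖wE‖ ^ 2 from by ring]
            rw [haE2]
            have h5 := mul_le_mul_of_nonneg_left hwE2
              (mul_nonneg (mul_nonneg (by norm_num : (0:ℝ) ≤ 2) (hhnn τ)) (sq_nonneg Mh))
            nlinarith [h5]
          have h3 : 0 ≤ ‖aE‖ * (Mh * ‖wE‖) := by positivity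
          have hB : ‖aE‖ * (Mh * ‖wE‖) ≤ 2 * Mh * h τ := by
            nlinarith [h2, h3, mul_nonneg hMh (hhnn τ), sq_nonneg (Mh * h τ)]
          exact h1.trans hB
        rw [hre]
        have h4 : -(inner ℂ aE yE : ℂ).re ≤ ‖(inner ℂ aE yE : ℂ)‖ := by
          refine le_trans (neg_le_abs _) (Complex.abs_re_le_norm _)
        nlinarith [hCS, hprod, h4]
      rw [hsplit, hc₀]
      have := hA1
      linarith
    -- φ is antitone
    set φ : ℝ → ℝ := fun τ => Real.exp (c₀ * τ) * h τ with hφ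
    set φ' : ℝ → ℝ := fun τ => Real.exp (c₀ * τ) * c₀ * h τ + Real.exp (c₀ * τ) * h' τ
      with hφ'
    have hφderiv : ∀ τ ∈ Ico (0:ℝ) a, HasDerivWithinAt φ (φ' τ) (Ico (0:ℝ) a) τ := by
      intro τ hτ
      have hc : HasDerivAt (fun σ => Real.exp (c₀ * σ)) (Real.exp (c₀ * τ) * c₀) τ := by
        have := ((hasDerivAt_id τ).const_mul c₀).exp
        simpa using this
      exact (hc.hasDerivWithinAt).mul (hhderiv τ hτ)
    have hmono : AntitoneOn φ (Ico 0 a) := by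
      apply antitoneOn_of_hasDerivWithinAt_nonpos (convex_Ico 0 a) (f' := φ')
      · intro τ hτ
        exact (hφderiv τ hτ).continuousWithinAt
      · intro τ hτ
        rw [interior_Ico] at hτ ⊢
        exact (hφderiv τ (Ioo_subset_Ico_self hτ)).mono Ioo_subset_Ico_self
      · intro τ hτ
        rw [interior_Ico] at hτ
        have hτ' : τ ∈ Ico (0:ℝ) a := Ioo_subset_Ico_self hτ
        have hb := hbound τ hτ'
        have hepos : 0 < Real.exp (c₀ * τ) := Real.exp_pos _
        simp only [hφ']
        have heq : Real.exp (c₀ * τ) * c₀ * h τ + Real.exp (c₀ * τ) * h' τ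
            = Real.exp (c₀ * τ) * (c₀ * h τ + h' τ) := by ring
        rw [heq]
        apply mul_nonpos_of_nonneg_of_nonpos (le_of_lt hepos)
        linarith
    -- value at 0
    have hw0 : w 0 = u := by
      show R 0 *ᵥ u = u
      rw [hR0, Matrix.one_mulVec]
    have hup : ∀ p : Fin m, ¬ ((p : ℕ) < k) → u p = v ⟨(p : ℕ) - k, by
        have := p.isLt; omega⟩ := by
      intro p hp
      show (∑ j, colExt ψ p j * v j) = _
      rw [Finset.sum_eq_single (⟨(p : ℕ) - k, by have := p.isLt; omega⟩ : Fin (m - k))]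
      · rw [show colExt ψ p ⟨(p : ℕ) - k, by have := p.isLt; omega⟩ = 1 from by
          simp only [colExt, Matrix.of_apply, dif_neg hp]
          rw [if_pos (by omega)]]
        rw [one_mul]
      · intro j _ hj
        rw [show colExt ψ p j = 0 from by
          simp only [colExt, Matrix.of_apply, dif_neg hp]
          rw [if_neg (by
            intro hcon
            apply hj
            apply Fin.ext
            simp
            omega)]]
        rw [zero_mul]
      · intro hcon
        exact absurd (Finset.mem_univ _) hcon
    have h0v : h 0 = 2 * ∑ j, Complex.normSq (v j) := by
      rw [hh]
      simp only [hw0]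
      rw [show (∑ p, cc p * Complex.normSq (u p))
          = ∑ p ∈ Finset.univ.filter (fun p : Fin m => ¬ ((p : ℕ) < k)),
              2 * Complex.normSq (u p) from by
        rw [Finset.sum_filter]
        apply Finset.sum_congr rfl
        intro p _
        by_cases hp : (p : ℕ) < k <;> simp [hcc, hp]]
      rw [Finset.mul_sum]
      apply Finset.sum_nbij' (i := fun p : Fin m => (⟨(p : ℕ) - k, by
          have := p.isLt; omega⟩ : Fin (m - k)))
        (j := fun q : Fin (m - k) => (⟨k + (q : ℕ), by have := q.isLt; omega⟩ : Fin m))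
      · intro p _
        exact Finset.mem_univ _
      · intro q _
        simp
      · intro p hp
        simp only [Finset.mem_filter] at hp
        apply Fin.ext
        simp
        omega
      · intro q _
        apply Fin.ext
        simp
      · intro p hp
        simp only [Finset.mem_filter] at hp
        rw [hup p hp.2]
    -- conclude
    have hwv : (R t * colExt ψ) *ᵥ v = w t :=
      (Matrix.mulVec_mulVec v (R t) (colExt ψ)).symm
    rw [hwv]
    have h0mem : (0:ℝ) ∈ Ico (0:ℝ) a := ⟨le_refl 0, ha⟩
    have hφt := hmono h0mem ht ht.1
    rw [hφ] at hφt
    simp only [mul_zero, Real.exp_zero, one_mul] at hφt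
    have hft : Real.exp (c₀ * t) * (∑ p, Complex.normSq (w t p))
        ≤ Real.exp (c₀ * t) * h t :=
      mul_le_mul_of_nonneg_left (hfh t ht) (le_of_lt (Real.exp_pos _))
    rw [h0v] at hφt
    linarith
  -- assemble the PosSemidef statement
  refine Matrix.PosSemidef.of_dotProduct_mulVec_nonneg ?_ ?_
  · -- Hermitian
    rw [hexp]
    show _ = _
    simp only [Matrix.conjTranspose_sub, Matrix.conjTranspose_smul, Matrix.conjTranspose_one,
      Matrix.conjTranspose_mul, Matrix.conjTranspose_conjTranspose, Matrix.mul_assoc,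
      Complex.star_def, Complex.conj_ofReal, map_ofNat]
  · intro x
    rw [hexp]
    have hmat1 : (colExt ψ)ᴴ * (R t)ᴴ * R t * colExt ψ
        = (R t * colExt ψ)ᴴ * Matrix.diagonal (fun _ : Fin m => ((1:ℝ) : ℂ))
            * (R t * colExt ψ) := by
      simp [Matrix.conjTranspose_mul, Matrix.mul_assoc]
    rw [Matrix.sub_mulVec, dotProduct_sub, Matrix.smul_mulVec, Matrix.smul_mulVec,
      Matrix.one_mulVec, dotProduct_smul, dotProduct_smul, hmat1, quad_diag]
    have hsx : dotProduct (star x) x = ((∑ j, Complex.normSq (x j) : ℝ) : ℂ) := by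
      simp only [dotProduct, Pi.star_apply]
      push_cast
      apply Finset.sum_congr rfl
      intro j _
      rw [show star (x j) = (starRingEnd ℂ) (x j) from rfl, ← Complex.normSq_eq_conj_mul_self]
    rw [hsx]
    rw [show (2 : ℂ) • (((∑ j, Complex.normSq (x j) : ℝ) : ℂ))
        - ((Real.exp (c₀ * t) : ℝ) : ℂ) •
          (((∑ p, 1 * Complex.normSq (((R t * colExt ψ) *ᵥ x) p) : ℝ) : ℂ))
        = (((2 * ∑ j, Complex.normSq (x j)
            - Real.exp (c₀ * t) * ∑ p, 1 * Complex.normSq (((R t * colExt ψ) *ᵥ x) p) : ℝ)) : ℂ)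
      from by simp only [smul_eq_mul]; push_cast; ring]
    rw [Complex.zero_le_real]
    have := key x
    simp only [one_mul]
    linarith [key x]
end
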